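/- arXiv:1206.5350 — 6 statements merged into one kernel-verified Lean document; each statement's English description precedes it below -/
import Mathlib

section
/- For every positive integer k, every good placement of queens on the n × n board B_n with n = 4k + 1 has size at least n. -/
/-- The n × n board: squares {1,…,n} × {1,…,n} ⊆ ℤ². -/
noncomputable def board (n : ℕ) : Finset (ℤ × ℤ) :=
  Finset.Icc (1 : ℤ) n ×ˢ Finset.Icc (1 : ℤ) n

/-- Two squares share a column, row, diagonal, or antidiagonal. -/
def SameLine (a b : ℤ × ℤ) : Prop :=
  a.1 = b.1 ∨ a.2 = b.2 ∨ a.1 - a.2 = b.1 - b.2 ∨ a.1 + a.2 = b.1 + b.2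

/-- A set of squares contains three (pairwise distinct) squares in a line. -/
def ThreeInLine (S : Finset (ℤ × ℤ)) : Prop :=
  ∃ a ∈ S, ∃ b ∈ S, ∃ c ∈ S, a ≠ b ∧ a ≠ c ∧ b ≠ c ∧
    ((a.1 = b.1 ∧ b.1 = c.1) ∨ (a.2 = b.2 ∧ b.2 = c.2) ∨
     (a.1 - a.2 = b.1 - b.2 ∧ b.1 - b.2 = c.1 - c.2) ∨
     (a.1 + a.2 = b.1 + b.2 ∧ b.1 + b.2 = c.1 + c.2))

/-- A good placement on B_n: a subset of the board with no three in a line,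
    such that adding any unoccupied square of the board creates three in a line. -/
def IsGoodPlacement (n : ℕ) (Q : Finset (ℤ × ℤ)) : Prop :=
  Q ⊆ board n ∧ ¬ ThreeInLine Q ∧
    ∀ s ∈ board n, s ∉ Q → ThreeInLine (insert s Q)


open Polynomial

namespace AuxCN

noncomputable section

/-- Lagrange weight. -/
def wgt (s : Finset ℚ) (x : ℚ) : ℚ := ∏ j ∈ s.erase x, (x - j)⁻¹

lemma basis_coeff {s : Finset ℚ} {i : ℚ} (hi : i ∈ s) :
    (Lagrange.basis s id i).coeff (s.card - 1) = wgt s i := by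
  classical
  have hbd : Lagrange.basis s id i
      = C (∏ j ∈ s.erase i, ((i : ℚ) - j)⁻¹) * ∏ j ∈ s.erase i, (X - C j) := by
    unfold Lagrange.basis Lagrange.basisDivisor
    rw [map_prod, ← Finset.prod_mul_distrib]
    rfl
  have hmon : (∏ j ∈ s.erase i, (X - C j) : ℚ[X]).Monic :=
    monic_prod_of_monic _ _ (fun j _ => monic_X_sub_C j)
  have hdeg : (∏ j ∈ s.erase i, (X - C j) : ℚ[X]).natDegree = s.card - 1 := by
    rw [natDegree_prod_of_monic _ _ (fun j _ => monic_X_sub_C j)]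
    simp [Finset.card_erase_of_mem hi]
  rw [hbd, coeff_C_mul, ← hdeg, hmon.coeff_natDegree, mul_one, wgt]

lemma L1 {s : Finset ℚ} (hs : s.Nonempty) {g : ℚ[X]} (hg : g.natDegree < s.card) :
    ∑ x ∈ s, wgt s x * g.eval x = g.coeff (s.card - 1) := by
  classical
  by_cases h0 : g = 0
  · simp [h0]
  have hdeg : g.degree < s.card := by
    rwa [← natDegree_lt_iff_degree_lt h0]
  have hinj : Set.InjOn id (s : Set ℚ) := Function.injective_id.injOn
  have hrep := Lagrange.eq_interpolate (v := id) hinj hdeg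
  conv_rhs => rw [hrep]
  rw [Lagrange.interpolate_apply, finset_sum_coeff]
  refine (Finset.sum_congr rfl fun x hx => ?_).symm
  rw [coeff_C_mul, basis_coeff hx]
  simp [mul_comm]



def fac (f : ℚ × ℚ) : Polynomial (Polynomial ℚ) :=
  C (X - C f.2) + C (C f.1) * X

def sym (e : ℚ) : ℚ[X] := X + C e

def PP (l : List (ℚ × ℚ)) : Polynomial (Polynomial ℚ) := (l.map fac).prod

def ZZ (l : List (ℚ × ℚ)) : ℚ[X] := (l.map (fun f => sym f.1)).prod

lemma ZZ_natDegree_le (l : List (ℚ × ℚ)) : (ZZ l).natDegree ≤ l.length := by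
  refine le_trans (natDegree_list_prod_le _) ?_
  rw [List.map_map]
  refine le_trans (List.sum_le_card_nsmul _ 1 ?_) ?_
  · intro x hx
    simp only [List.mem_map, Function.comp] at hx
    obtain ⟨f, _, rfl⟩ := hx
    simpa [sym] using natDegree_X_add_C_le (f.1)
  · simp [mul_comm]

lemma symmul_coeff_succ (e : ℚ) (Z : ℚ[X]) (i : ℕ) :
    (sym e * Z).coeff (i + 1) = Z.coeff i + e * Z.coeff (i + 1) := by
  rw [sym, add_mul, coeff_add, coeff_X_mul, coeff_C_mul]

lemma symmul_coeff_zero (e : ℚ) (Z : ℚ[X]) :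
    (sym e * Z).coeff 0 = e * Z.coeff 0 := by
  rw [sym, add_mul, coeff_add, coeff_X_mul_zero, coeff_C_mul, zero_add]

lemma coeff_key (l : List (ℚ × ℚ)) :
    ∀ i j : ℕ, l.length ≤ i + j →
      ((PP l).coeff j).coeff i = if i + j = l.length then (ZZ l).coeff i else 0 := by
  induction l with
  | nil =>
      intro i j _
      simp only [PP, ZZ, List.map_nil, List.prod_nil, List.length_nil]
      by_cases hij : i = 0 ∧ j = 0
      · obtain ⟨rfl, rfl⟩ := hij; simp
      · rw [if_neg (by omega)]
        rcases Nat.eq_zero_or_pos j with rfl | hj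
        · rw [coeff_one, if_pos rfl, coeff_one, if_neg (by omega)]
        · rw [coeff_one, if_neg (by omega)]; simp
  | cons f t ih =>
      intro i j h
      simp only [List.length_cons] at h
      have hfac : PP (f :: t) = fac f * PP t := by simp [PP]
      have hz : ZZ (f :: t) = sym f.1 * ZZ t := by simp [ZZ]
      have hlen : (f :: t).length = t.length + 1 := rfl
      rw [hfac, hz, hlen]
      have hcoeff : (fac f * PP t).coeff j
          = (X - C f.2) * (PP t).coeff j + C f.1 * ((X * PP t).coeff j) := by
        rw [fac, add_mul, coeff_add, coeff_C_mul, mul_assoc, coeff_C_mul]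
      rw [hcoeff, coeff_add, sub_mul, coeff_sub, coeff_C_mul, coeff_C_mul]
      rcases j with _ | j'
      · -- j = 0
        rw [coeff_X_mul_zero]
        rcases i with _ | i'
        · exact absurd h (by omega)
        · have e1 := ih i' 0 (by omega)
          have e2 := ih (i' + 1) 0 (by omega)
          rw [coeff_X_mul, e1, e2]
          simp only [Nat.add_zero] at *
          by_cases hc : i' = t.length
          · rw [if_pos hc, if_neg (by omega), if_pos (by omega), symmul_coeff_succ]
            have hZ : (ZZ t).coeff (i' + 1) = 0 :=
              coeff_eq_zero_of_natDegree_lt (lt_of_le_of_lt (ZZ_natDegree_le t) (by omega))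
            rw [hZ]
            simp
          · rw [if_neg hc, if_neg (by omega), if_neg (by omega)]
            simp
      · -- j = j' + 1
        rw [coeff_X_mul]
        have e0 := ih i (j' + 1) (by omega)
        rw [if_neg (by omega)] at e0
        have e3 := ih i j' (by omega)
        rcases i with _ | i'
        · rw [coeff_X_mul_zero, e0, e3]
          by_cases hc : j' = t.length
          · rw [if_pos (show 0 + j' = t.length by omega),
              if_pos (show 0 + (j' + 1) = t.length + 1 by omega), symmul_coeff_zero]
            ring
          · rw [if_neg (show ¬ 0 + j' = t.length by omega),
              if_neg (show ¬ 0 + (j' + 1) = t.length + 1 by omega)]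
            ring
        · have e4 := ih i' (j' + 1) (by omega)
          rw [coeff_X_mul, e0, e3, e4]
          by_cases hc : i' + j' + 1 = t.length
          · rw [if_pos (show i' + 1 + j' = t.length by omega),
              if_pos (show i' + (j' + 1) = t.length by omega),
              if_pos (show i' + 1 + (j' + 1) = t.length + 1 by omega), symmul_coeff_succ]
            ring
          · rw [if_neg (show ¬ i' + 1 + j' = t.length by omega),
              if_neg (show ¬ i' + (j' + 1) = t.length by omega),
              if_neg (show ¬ i' + 1 + (j' + 1) = t.length + 1 by omega)]
            ring

lemma PP_coeff_eq_zero (l : List (ℚ × ℚ)) {j : ℕ} (hj : l.length < j) : (PP l).coeff j = 0 := by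
  ext i
  rw [coeff_key l i j (by omega), if_neg (by omega), coeff_zero]

lemma PP_natDegree_le (l : List (ℚ × ℚ)) : (PP l).natDegree ≤ l.length :=
  natDegree_le_iff_coeff_eq_zero.2 (fun _ hm => PP_coeff_eq_zero l hm)

lemma PP_inner_natDegree_le (l : List (ℚ × ℚ)) (j : ℕ) :
    ((PP l).coeff j).natDegree ≤ l.length - j := by
  rcases le_or_gt j l.length with hj | hj
  · refine natDegree_le_iff_coeff_eq_zero.2 (fun i hi => ?_)
    rw [coeff_key l i j (by omega), if_neg (by omega)]
  · rw [PP_coeff_eq_zero l hj]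
    simp


def eev (x y : ℚ) : Polynomial (Polynomial ℚ) →+* ℚ :=
  (evalRingHom x).comp (evalRingHom (C y))

lemma eev_PP (x y : ℚ) (l : List (ℚ × ℚ)) :
    eev x y (PP l) = (l.map (fun f => x + f.1 * y - f.2)).prod := by
  rw [PP, map_list_prod]
  congr 1
  rw [List.map_map]
  refine List.map_congr_left fun f _ => ?_
  simp only [Function.comp_apply, eev, fac, RingHom.coe_comp, coe_evalRingHom,
    eval_add, eval_mul, eval_C, eval_X, eval_sub]
  ring

lemma eev_expand (x y : ℚ) (l : List (ℚ × ℚ)) :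
    eev x y (PP l)
      = ∑ j ∈ Finset.range (l.length + 1), ((PP l).coeff j).eval x * y ^ j := by
  have h1 : Polynomial.eval (C y) (PP l)
      = ∑ j ∈ Finset.range (l.length + 1), (PP l).coeff j * C y ^ j :=
    eval_eq_sum_range' (lt_of_le_of_lt (PP_natDegree_le l) (Nat.lt_succ_self _)) _
  have h0 : eev x y (PP l) = Polynomial.eval x (Polynomial.eval (C y) (PP l)) := rfl
  rw [h0, h1, eval_finset_sum]
  refine Finset.sum_congr rfl fun j _ => ?_
  rw [eval_mul, eval_pow, eval_C]

theorem CN (Xs Ys : Finset ℚ) (hX : 0 < Xs.card) (hY : 0 < Ys.card) (l : List (ℚ × ℚ))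
    (hlen : l.length = (Xs.card - 1) + (Ys.card - 1))
    (hvan : ∀ x ∈ Xs, ∀ y ∈ Ys, ∃ f ∈ l, x + f.1 * y - f.2 = 0) :
    (ZZ l).coeff (Xs.card - 1) = 0 := by
  classical
  have hXne : Xs.Nonempty := Finset.card_pos.mp hX
  have hYne : Ys.Nonempty := Finset.card_pos.mp hY
  set p := Xs.card with hp
  set q := Ys.card with hq
  set N := l.length with hN
  have hzero : ∀ x ∈ Xs, ∀ y ∈ Ys, eev x y (PP l) = 0 := by
    intro x hx y hy
    rw [eev_PP]
    obtain ⟨f, hf, hval⟩ := hvan x hx y hy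
    exact List.prod_eq_zero (List.mem_map.2 ⟨f, hf, hval⟩)
  have hS : (0 : ℚ) = ∑ j ∈ Finset.range (N + 1),
      (∑ x ∈ Xs, wgt Xs x * ((PP l).coeff j).eval x) * (∑ y ∈ Ys, wgt Ys y * y ^ j) := by
    have e1 : (0 : ℚ) = ∑ x ∈ Xs, wgt Xs x * ∑ y ∈ Ys, wgt Ys y * eev x y (PP l) := by
      symm
      refine Finset.sum_eq_zero fun x hx => ?_
      rw [Finset.sum_congr rfl (fun y hy => by rw [hzero x hx y hy, mul_zero]),
        Finset.sum_const, smul_zero, mul_zero]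
    rw [e1]
    have e2 : ∀ x ∈ Xs, (∑ y ∈ Ys, wgt Ys y * eev x y (PP l))
        = ∑ j ∈ Finset.range (N + 1),
            ((PP l).coeff j).eval x * (∑ y ∈ Ys, wgt Ys y * y ^ j) := by
      intro x _
      calc ∑ y ∈ Ys, wgt Ys y * eev x y (PP l)
          = ∑ y ∈ Ys, ∑ j ∈ Finset.range (N + 1),
              wgt Ys y * (((PP l).coeff j).eval x * y ^ j) := by
            refine Finset.sum_congr rfl fun y _ => ?_
            rw [eev_expand, Finset.mul_sum]
        _ = ∑ j ∈ Finset.range (N + 1), ∑ y ∈ Ys,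
              wgt Ys y * (((PP l).coeff j).eval x * y ^ j) := Finset.sum_comm
        _ = ∑ j ∈ Finset.range (N + 1),
              ((PP l).coeff j).eval x * (∑ y ∈ Ys, wgt Ys y * y ^ j) := by
            refine Finset.sum_congr rfl fun j _ => ?_
            rw [Finset.mul_sum]
            exact Finset.sum_congr rfl fun y _ => by ring
    calc ∑ x ∈ Xs, wgt Xs x * ∑ y ∈ Ys, wgt Ys y * eev x y (PP l)
        = ∑ x ∈ Xs, ∑ j ∈ Finset.range (N + 1),
            wgt Xs x * (((PP l).coeff j).eval x * (∑ y ∈ Ys, wgt Ys y * y ^ j)) := by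
          refine Finset.sum_congr rfl fun x hx => ?_
          rw [e2 x hx, Finset.mul_sum]
      _ = ∑ j ∈ Finset.range (N + 1), ∑ x ∈ Xs,
            wgt Xs x * (((PP l).coeff j).eval x * (∑ y ∈ Ys, wgt Ys y * y ^ j)) :=
          Finset.sum_comm
      _ = ∑ j ∈ Finset.range (N + 1),
            (∑ x ∈ Xs, wgt Xs x * ((PP l).coeff j).eval x) *
              (∑ y ∈ Ys, wgt Ys y * y ^ j) := by
          refine Finset.sum_congr rfl fun j _ => ?_
          rw [Finset.sum_mul]
          exact Finset.sum_congr rfl fun x _ => by ring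
  have hmem : q - 1 ∈ Finset.range (N + 1) := by
    rw [Finset.mem_range]; omega
  have hmain : ∑ j ∈ Finset.range (N + 1),
      (∑ x ∈ Xs, wgt Xs x * ((PP l).coeff j).eval x) * (∑ y ∈ Ys, wgt Ys y * y ^ j)
      = (∑ x ∈ Xs, wgt Xs x * ((PP l).coeff (q - 1)).eval x) *
          (∑ y ∈ Ys, wgt Ys y * y ^ (q - 1)) := by
    refine Finset.sum_eq_single_of_mem _ hmem fun j _ hjne => ?_
    rcases lt_or_ge j q with hjq | hjq
    · -- j < q, j ≠ q-1 so j < q-1 : H_j = 0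
      have hH : (∑ y ∈ Ys, wgt Ys y * y ^ j) = 0 := by
        have := L1 hYne (g := (X : ℚ[X]) ^ j)
          (by rw [natDegree_X_pow]; omega)
        simp only [eval_pow, eval_X] at this
        rw [this, coeff_X_pow, if_neg (by omega)]
      rw [hH, mul_zero]
    · -- j ≥ q : first factor vanishes
      have hA : (∑ x ∈ Xs, wgt Xs x * ((PP l).coeff j).eval x) = 0 := by
        rcases le_or_gt j N with hjN | hjN
        · have hp2 : 2 ≤ p := by omega
          have hdeg : ((PP l).coeff j).natDegree < p := by
            have := PP_inner_natDegree_le l j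
            omega
          rw [L1 hXne hdeg]
          exact coeff_eq_zero_of_natDegree_lt
            (lt_of_le_of_lt (PP_inner_natDegree_le l j) (by omega))
        · rw [PP_coeff_eq_zero l hjN]
          simp
      rw [hA, zero_mul]
  have hH1 : (∑ y ∈ Ys, wgt Ys y * y ^ (q - 1)) = 1 := by
    have := L1 hYne (g := (X : ℚ[X]) ^ (q - 1))
      (by rw [natDegree_X_pow]; omega)
    simp only [eval_pow, eval_X] at this
    rw [this, coeff_X_pow, if_pos rfl]
  have hA1 : (∑ x ∈ Xs, wgt Xs x * ((PP l).coeff (q - 1)).eval x)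
      = (ZZ l).coeff (p - 1) := by
    have hdeg : ((PP l).coeff (q - 1)).natDegree < p := by
      have := PP_inner_natDegree_le l (q - 1)
      omega
    rw [L1 hXne hdeg]
    rw [coeff_key l (p - 1) (q - 1) (by omega), if_pos (by omega)]
  rw [hmain, hH1, hA1, mul_one] at hS
  exact hS.symm





lemma der_id (B a : ℕ) :
    ((X : ℚ[X]) ^ 2 - 1) * derivative (((X : ℚ[X]) - 1) ^ B * ((X : ℚ[X]) + 1) ^ a)
      = (C ((B : ℚ) + a) * X + C ((B : ℚ) - a)) *
          (((X : ℚ[X]) - 1) ^ B * ((X : ℚ[X]) + 1) ^ a) := by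
  have hC : ∀ u v : ℚ, (C (u + v) : ℚ[X]) = C u + C v := fun u v => map_add C u v
  rcases B with _ | B <;> rcases a with _ | a <;>
    simp only [derivative_mul, derivative_pow, derivative_sub, derivative_add, derivative_X,
      derivative_one, sub_zero, add_zero, Nat.succ_sub_one, Nat.cast_zero, Nat.cast_add,
      Nat.cast_one, pow_zero, one_mul, mul_one, map_add, map_sub, map_natCast, map_one,
      map_zero, C_eq_natCast]
  · ring
  · rw [pow_succ ((X : ℚ[X]) + 1) a]; push_cast; ring
  · rw [pow_succ ((X : ℚ[X]) - 1) B]; push_cast; ring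
  · rw [pow_succ ((X : ℚ[X]) - 1) B, pow_succ ((X : ℚ[X]) + 1) a]; push_cast; ring




lemma rec_coeff (B a i : ℕ) :
    (((X : ℚ[X]) - 1) ^ B * ((X : ℚ[X]) + 1) ^ a).coeff (i + 1) * ((i : ℚ) + 1)
      - (((X : ℚ[X]) - 1) ^ B * ((X : ℚ[X]) + 1) ^ a).coeff (i + 3) * ((i : ℚ) + 3)
    = ((B : ℚ) + a) * (((X : ℚ[X]) - 1) ^ B * ((X : ℚ[X]) + 1) ^ a).coeff (i + 1)
      + ((B : ℚ) - a) * (((X : ℚ[X]) - 1) ^ B * ((X : ℚ[X]) + 1) ^ a).coeff (i + 2) := by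
  set g : ℚ[X] := ((X : ℚ[X]) - 1) ^ B * ((X : ℚ[X]) + 1) ^ a with hg
  have h := der_id B a
  have hcongr := congrArg (fun p : ℚ[X] => p.coeff (i + 2)) h
  have hL : (((X : ℚ[X]) ^ 2 - 1) * derivative g).coeff (i + 2)
      = g.coeff (i + 1) * ((i : ℚ) + 1) - g.coeff (i + 3) * ((i : ℚ) + 3) := by
    rw [sub_mul, one_mul, coeff_sub]
    have h1 : ((X : ℚ[X]) ^ 2 * derivative g).coeff (i + 2) = (derivative g).coeff i := by
      have h2 := coeff_X_pow_mul (derivative g) 2 i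
      convert h2 using 2
      try omega
    rw [h1, coeff_derivative, coeff_derivative]
    try push_cast
    try ring
  have hR : ((C ((B : ℚ) + a) * X + C ((B : ℚ) - a)) * g).coeff (i + 2)
      = ((B : ℚ) + a) * g.coeff (i + 1) + ((B : ℚ) - a) * g.coeff (i + 2) := by
    rw [add_mul, coeff_add, mul_assoc, coeff_C_mul, coeff_C_mul, coeff_X_mul]
  rw [hL, hR] at hcongr
  exact hcongr

lemma lemK {B a e : ℕ} (he : 2 ≤ e) (hdeg : e - 1 ≤ B + a)
    (h1 : (((X : ℚ[X]) - 1) ^ B * ((X : ℚ[X]) + 1) ^ a).coeff (e - 1) = 0)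
    (h2 : (((X : ℚ[X]) - 1) ^ B * ((X : ℚ[X]) + 1) ^ a).coeff e = 0) : False := by
  set g : ℚ[X] := ((X : ℚ[X]) - 1) ^ B * ((X : ℚ[X]) + 1) ^ a with hg
  obtain ⟨e', rfl⟩ : ∃ e', e = e' + 2 := ⟨e - 2, by omega⟩
  have h1' : g.coeff (e' + 1) = 0 := by
    have : e' + 2 - 1 = e' + 1 := by omega
    rwa [this] at h1
  have key : ∀ d, g.coeff (e' + 1 + d) = 0 ∧ g.coeff (e' + 2 + d) = 0 := by
    intro d
    induction d with
    | zero => exact ⟨h1', h2⟩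
    | succ d ihd =>
        refine ⟨?_, ?_⟩
        · have := ihd.2
          have hidx : e' + 2 + d = e' + 1 + (d + 1) := by omega
          rwa [hidx] at this
        · have hr := rec_coeff B a (e' + d)
          have hi1 : e' + d + 1 = e' + 1 + d := by omega
          have hi2 : e' + d + 2 = e' + 2 + d := by omega
          have hi3 : e' + d + 3 = e' + 2 + (d + 1) := by omega
          rw [hi1, hi2, hi3, ihd.1, ihd.2] at hr
          simp only [zero_mul, mul_zero, sub_zero, add_zero, zero_sub, zero_add,
            neg_eq_zero] at hr
          rcases mul_eq_zero.mp hr with h | h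
          · exact h
          · exfalso
            have hpos : (0 : ℚ) < (e' + d : ℕ) + 3 := by positivity
            rw [h] at hpos
            exact lt_irrefl _ hpos
  have hmon : g.Monic := by
    rw [hg]
    have m1 : ((X : ℚ[X]) - 1).Monic := by
      have := monic_X_sub_C (1 : ℚ)
      simpa using this
    have m2 : ((X : ℚ[X]) + 1).Monic := by
      have := monic_X_add_C (1 : ℚ)
      simpa using this
    exact (m1.pow B).mul (m2.pow a)
  have hnd : g.natDegree = B + a := by
    rw [hg]
    have m1 : ((X : ℚ[X]) - 1).Monic := by simpa using monic_X_sub_C (1 : ℚ)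
    have m2 : ((X : ℚ[X]) + 1).Monic := by simpa using monic_X_add_C (1 : ℚ)
    rw [(m1.pow B).natDegree_mul (m2.pow a), natDegree_pow, natDegree_pow]
    have d1 : ((X : ℚ[X]) - 1).natDegree = 1 := by
      simpa using natDegree_X_sub_C (1 : ℚ)
    have d2 : ((X : ℚ[X]) + 1).natDegree = 1 := by
      simpa using natDegree_X_add_C (1 : ℚ)
    rw [d1, d2]; ring
  have hzero : g.coeff (B + a) = 0 := by
    have hidx : e' + 1 + (B + a - (e' + 1)) = B + a := by omega
    have := (key (B + a - (e' + 1))).1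
    rwa [hidx] at this
  have hone : g.coeff (B + a) = 1 := by
    have := hmon.coeff_natDegree
    rwa [hnd] at this
  rw [hzero] at hone
  exact absurd hone (by norm_num)

lemma symm_ne (k : ℕ) (hk : 1 ≤ k) :
    (((X : ℚ[X]) - 1) ^ (2 * k) * ((X : ℚ[X]) + 1) ^ (2 * k)).coeff (2 * k) ≠ 0 := by
  have h1 : ((X : ℚ[X]) - 1) ^ (2 * k) * ((X : ℚ[X]) + 1) ^ (2 * k)
      = ((X : ℚ[X]) ^ 2 - 1) ^ (2 * k) := by
    rw [← mul_pow]
    ring_nf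
  rw [h1]
  have h2 : ((X : ℚ[X]) ^ 2 - 1) ^ (2 * k)
      = ∑ i ∈ Finset.range (2 * k + 1),
          C ((-1 : ℚ) ^ (2 * k - i) * (Nat.choose (2 * k) i : ℚ)) * (X : ℚ[X]) ^ (2 * i) := by
    rw [sub_eq_add_neg, add_pow]
    refine Finset.sum_congr rfl fun i _ => ?_
    rw [← pow_mul]
    rw [map_mul, map_pow, map_neg, map_one, map_natCast]
    push_cast
    ring
  rw [h2, finset_sum_coeff]
  rw [Finset.sum_eq_single_of_mem k (by rw [Finset.mem_range]; omega)]
  · rw [coeff_C_mul, coeff_X_pow, if_pos rfl, mul_one]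
    have hc : (2 : ℕ) * k - k = k := by omega
    rw [hc]
    refine mul_ne_zero (pow_ne_zero _ (by norm_num)) ?_
    exact_mod_cast Nat.cast_ne_zero.2 (Nat.choose_pos (by omega : k ≤ 2 * k)).ne'
  · intro j _ hjne
    rw [coeff_C_mul, coeff_X_pow, if_neg (by omega), mul_zero]


lemma ZZ_append (l1 l2 : List (ℚ × ℚ)) : ZZ (l1 ++ l2) = ZZ l1 * ZZ l2 := by
  simp [ZZ]

lemma ZZ_map_const (e : ℚ) (L : List ℚ) :
    ZZ (L.map fun g => (e, g)) = sym e ^ L.length := by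
  induction L with
  | nil => simp [ZZ]
  | cons h t ih =>
      simp only [List.map_cons, ZZ, List.prod_cons, List.length_cons] at *
      rw [ih, pow_succ']

lemma ZZ_replicate (e g : ℚ) (m : ℕ) :
    ZZ (List.replicate m (e, g)) = sym e ^ m := by
  simp [ZZ, List.map_replicate, List.prod_replicate]

lemma sym_neg_one : sym (-1) = (X : ℚ[X]) - 1 := by
  rw [sym, map_neg, map_one, sub_eq_add_neg]

lemma sym_one : sym 1 = (X : ℚ[X]) + 1 := by
  rw [sym, map_one]


theorem cover_coeff_zero (Xs Ys : Finset ℚ) (hX : 0 < Xs.card) (hY : 0 < Ys.card)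
    (Dq Aq : Finset ℚ) (a b : ℕ) (hA : Aq.card ≤ a) (hD : Dq.card ≤ b)
    (hab : b + a = (Xs.card - 1) + (Ys.card - 1))
    (hcov : ∀ x ∈ Xs, ∀ y ∈ Ys, x - y ∈ Dq ∨ x + y ∈ Aq) :
    (((X : ℚ[X]) - 1) ^ b * ((X : ℚ[X]) + 1) ^ a).coeff (Xs.card - 1) = 0 := by
  classical
  set l : List (ℚ × ℚ) :=
    ((Dq.toList.map fun d => ((-1 : ℚ), d)) ++ List.replicate (b - Dq.card) ((-1 : ℚ), 0))
      ++ ((Aq.toList.map fun s0 => ((1 : ℚ), s0)) ++ List.replicate (a - Aq.card) ((1 : ℚ), 0))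
    with hl
  have hlen : l.length = (Xs.card - 1) + (Ys.card - 1) := by
    rw [hl]
    simp only [List.length_append, List.length_map, List.length_replicate,
      Finset.length_toList]
    omega
  have hZ : ZZ l = ((X : ℚ[X]) - 1) ^ b * ((X : ℚ[X]) + 1) ^ a := by
    rw [hl, ZZ_append, ZZ_append, ZZ_append, ZZ_map_const, ZZ_map_const, ZZ_replicate,
      ZZ_replicate, sym_neg_one, sym_one, Finset.length_toList, Finset.length_toList,
      ← pow_add, ← pow_add]
    congr 1 <;> congr 1 <;> omega
  have hvan : ∀ x ∈ Xs, ∀ y ∈ Ys, ∃ f ∈ l, x + f.1 * y - f.2 = 0 := by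
    intro x hx y hy
    rcases hcov x hx y hy with hd | ha2
    · refine ⟨((-1 : ℚ), x - y), ?_, by ring⟩
      rw [hl]
      refine List.mem_append.2 (Or.inl (List.mem_append.2 (Or.inl ?_)))
      exact List.mem_map.2 ⟨x - y, Finset.mem_toList.2 hd, rfl⟩
    · refine ⟨((1 : ℚ), x + y), ?_, by ring⟩
      rw [hl]
      refine List.mem_append.2 (Or.inr (List.mem_append.2 (Or.inl ?_)))
      exact List.mem_map.2 ⟨x + y, Finset.mem_toList.2 ha2, rfl⟩
  have := CN Xs Ys hX hY l hlen hvan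
  rwa [hZ] at this


end

end AuxCN

namespace AuxCN


lemma count_lines (Q : Finset (ℤ × ℤ)) (line : ℤ × ℤ → ℤ) (V : Finset ℤ)
    (hV : ∀ v ∈ V, 2 ≤ (Q.filter (fun q => line q = v)).card)
    (W : Finset (ℤ × ℤ)) (hWQ : W ⊆ Q) (hW : ∀ w ∈ W, line w ∉ V) :
    2 * V.card + W.card ≤ Q.card := by
  classical
  set U := V.biUnion (fun v => Q.filter (fun q => line q = v)) with hU
  have hdisj : ∀ v1 ∈ V, ∀ v2 ∈ V, v1 ≠ v2 →
      Disjoint (Q.filter (fun q => line q = v1)) (Q.filter (fun q => line q = v2)) := by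
    intro v1 _ v2 _ hne
    rw [Finset.disjoint_left]
    intro q h1 h2
    rw [Finset.mem_filter] at h1 h2
    exact hne (h1.2 ▸ h2.2 ▸ rfl)
  have hUcard : 2 * V.card ≤ U.card := by
    rw [hU, Finset.card_biUnion hdisj]
    calc 2 * V.card = ∑ _v ∈ V, 2 := by rw [Finset.sum_const, smul_eq_mul, mul_comm]
      _ ≤ _ := Finset.sum_le_sum hV
  have hUW : Disjoint U W := by
    rw [Finset.disjoint_left]
    intro q hq hqW
    rw [hU, Finset.mem_biUnion] at hq
    obtain ⟨v, hv, hqf⟩ := hq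
    rw [Finset.mem_filter] at hqf
    exact hW q hqW (hqf.2 ▸ hv)
  have hsub : U ∪ W ⊆ Q := by
    refine Finset.union_subset ?_ hWQ
    rw [hU]
    exact Finset.biUnion_subset.2 fun v _ => Finset.filter_subset _ _
  calc 2 * V.card + W.card ≤ U.card + W.card := by omega
    _ = (U ∪ W).card := (Finset.card_union_of_disjoint hUW).symm
    _ ≤ Q.card := Finset.card_le_card hsub

lemma two_on_line (Q : Finset (ℤ × ℤ)) (line : ℤ × ℤ → ℤ) {u v : ℤ × ℤ}
    (hu : u ∈ Q) (hv : v ∈ Q) (huv : u ≠ v) {t : ℤ} (h1 : line u = t) (h2 : line v = t) :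
    2 ≤ (Q.filter (fun q => line q = t)).card := by
  classical
  have hsub : ({u, v} : Finset (ℤ × ℤ)) ⊆ Q.filter (fun q => line q = t) := by
    intro w hw
    rw [Finset.mem_insert, Finset.mem_singleton] at hw
    rcases hw with rfl | rfl <;> rw [Finset.mem_filter] <;> exact ⟨by assumption, by assumption⟩
  calc 2 = ({u, v} : Finset (ℤ × ℤ)).card := (Finset.card_pair huv).symm
    _ ≤ _ := Finset.card_le_card hsub

lemma sat_extract {Q : Finset (ℤ × ℤ)} (hno3 : ¬ ThreeInLine Q) {s : ℤ × ℤ}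
    (h3 : ThreeInLine (insert s Q)) :
    ∃ u ∈ Q, ∃ v ∈ Q, u ≠ v ∧
      ((u.1 = s.1 ∧ v.1 = s.1) ∨ (u.2 = s.2 ∧ v.2 = s.2) ∨
       (u.1 - u.2 = s.1 - s.2 ∧ v.1 - v.2 = s.1 - s.2) ∨
       (u.1 + u.2 = s.1 + s.2 ∧ v.1 + v.2 = s.1 + s.2)) := by
  obtain ⟨A, hA, B, hB, C, hC, hab, hac, hbc, hline⟩ := h3
  rcases Finset.mem_insert.mp hA with rfl | hAQ
  · have hBQ : B ∈ Q := (Finset.mem_insert.mp hB).resolve_left (fun h => hab h.symm)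
    have hCQ : C ∈ Q := (Finset.mem_insert.mp hC).resolve_left (fun h => hac h.symm)
    refine ⟨B, hBQ, C, hCQ, hbc, ?_⟩
    rcases hline with ⟨e1, e2⟩ | ⟨e1, e2⟩ | ⟨e1, e2⟩ | ⟨e1, e2⟩
    · exact Or.inl ⟨e1.symm, (e1.trans e2).symm⟩
    · exact Or.inr (Or.inl ⟨e1.symm, (e1.trans e2).symm⟩)
    · exact Or.inr (Or.inr (Or.inl ⟨e1.symm, (e1.trans e2).symm⟩))
    · exact Or.inr (Or.inr (Or.inr ⟨e1.symm, (e1.trans e2).symm⟩))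
  · rcases Finset.mem_insert.mp hB with rfl | hBQ
    · have hCQ : C ∈ Q := (Finset.mem_insert.mp hC).resolve_left (fun h => hbc h.symm)
      refine ⟨A, hAQ, C, hCQ, hac, ?_⟩
      rcases hline with ⟨e1, e2⟩ | ⟨e1, e2⟩ | ⟨e1, e2⟩ | ⟨e1, e2⟩
      · exact Or.inl ⟨e1, e2.symm⟩
      · exact Or.inr (Or.inl ⟨e1, e2.symm⟩)
      · exact Or.inr (Or.inr (Or.inl ⟨e1, e2.symm⟩))
      · exact Or.inr (Or.inr (Or.inr ⟨e1, e2.symm⟩))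
    · rcases Finset.mem_insert.mp hC with rfl | hCQ
      · refine ⟨A, hAQ, B, hBQ, hab, ?_⟩
        rcases hline with ⟨e1, e2⟩ | ⟨e1, e2⟩ | ⟨e1, e2⟩ | ⟨e1, e2⟩
        · exact Or.inl ⟨e1.trans e2, e2⟩
        · exact Or.inr (Or.inl ⟨e1.trans e2, e2⟩)
        · exact Or.inr (Or.inr (Or.inl ⟨e1.trans e2, e2⟩))
        · exact Or.inr (Or.inr (Or.inr ⟨e1.trans e2, e2⟩))
      · exact absurd ⟨A, hAQ, B, hBQ, C, hCQ, hab, hac, hbc, hline⟩ hno3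


end AuxCN

theorem stmt_1 (k n : ℕ) (hk : 1 ≤ k) (hn : n = 4 * k + 1)
    (Q : Finset (ℤ × ℤ)) (hQ : IsGoodPlacement n Q) : n ≤ Q.card := by
  classical
  by_contra hlt
  push_neg at hlt
  have hm : Q.card ≤ 4 * k := by omega
  obtain ⟨hsub, hno3, hsat⟩ := hQ
  set fullRows : Finset ℤ :=
    (Finset.Icc (1:ℤ) (n:ℤ)).filter (fun y => 2 ≤ (Q.filter (fun q => q.2 = y)).card) with hfR
  set fullCols : Finset ℤ :=
    (Finset.Icc (1:ℤ) (n:ℤ)).filter (fun x => 2 ≤ (Q.filter (fun q => q.1 = x)).card) with hfC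
  set Dset : Finset ℤ :=
    (Q.image (fun q => q.1 - q.2)).filter
      (fun d => 2 ≤ (Q.filter (fun q => q.1 - q.2 = d)).card) with hDs
  set Aset : Finset ℤ :=
    (Q.image (fun q => q.1 + q.2)).filter
      (fun s0 => 2 ≤ (Q.filter (fun q => q.1 + q.2 = s0)).card) with hAs
  set Q1 : Finset (ℤ × ℤ) :=
    Q.filter (fun q => q.1 ∉ fullCols ∧ q.2 ∉ fullRows ∧
      q.1 - q.2 ∉ Dset ∧ q.1 + q.2 ∉ Aset) with hQ1
  set Dp : Finset ℤ := Dset ∪ Q1.image (fun q => q.1 - q.2) with hDp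
  have h1 : 2 * fullRows.card + Q1.card ≤ Q.card := by
    apply AuxCN.count_lines Q (fun q => q.2) fullRows
    · intro v hv; rw [hfR, Finset.mem_filter] at hv; exact hv.2
    · exact Finset.filter_subset _ _
    · intro w hw; rw [hQ1, Finset.mem_filter] at hw; exact hw.2.2.1
  have h2 : 2 * fullCols.card + Q1.card ≤ Q.card := by
    apply AuxCN.count_lines Q (fun q => q.1) fullCols
    · intro v hv; rw [hfC, Finset.mem_filter] at hv; exact hv.2
    · exact Finset.filter_subset _ _
    · intro w hw; rw [hQ1, Finset.mem_filter] at hw; exact hw.2.1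
  have h3 : 2 * Dset.card + Q1.card ≤ Q.card := by
    apply AuxCN.count_lines Q (fun q => q.1 - q.2) Dset
    · intro v hv; rw [hDs, Finset.mem_filter] at hv; exact hv.2
    · exact Finset.filter_subset _ _
    · intro w hw; rw [hQ1, Finset.mem_filter] at hw; exact hw.2.2.2.1
  have h4 : 2 * Aset.card + Q1.card ≤ Q.card := by
    apply AuxCN.count_lines Q (fun q => q.1 + q.2) Aset
    · intro v hv; rw [hAs, Finset.mem_filter] at hv; exact hv.2
    · exact Finset.filter_subset _ _
    · intro w hw; rw [hQ1, Finset.mem_filter] at hw; exact hw.2.2.2.2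
  have hIccCard : (Finset.Icc (1:ℤ) (n:ℤ)).card = n := by
    rw [Int.card_Icc]
    simp
  set XsZ : Finset ℤ := (Finset.Icc (1:ℤ) (n:ℤ)) \ fullCols with hXsZ
  set YsZ : Finset ℤ := (Finset.Icc (1:ℤ) (n:ℤ)) \ fullRows with hYsZ
  have hXsZcard : XsZ.card = n - fullCols.card := by
    rw [hXsZ, Finset.card_sdiff_of_subset, hIccCard]
    rw [hfC]; exact Finset.filter_subset _ _
  have hYsZcard : YsZ.card = n - fullRows.card := by
    rw [hYsZ, Finset.card_sdiff_of_subset, hIccCard]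
    rw [hfR]; exact Finset.filter_subset _ _
  set Xs : Finset ℚ := XsZ.image (fun z : ℤ => (z : ℚ)) with hXs
  set Ys : Finset ℚ := YsZ.image (fun z : ℤ => (z : ℚ)) with hYs
  set Dq : Finset ℚ := Dp.image (fun z : ℤ => (z : ℚ)) with hDq
  set Aq : Finset ℚ := Aset.image (fun z : ℤ => (z : ℚ)) with hAq
  have castinj : Function.Injective (fun z : ℤ => (z : ℚ)) := fun a b h => by
    simpa using h
  have hXcard : Xs.card = n - fullCols.card := by
    rw [hXs, Finset.card_image_of_injective _ castinj, hXsZcard]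
  have hYcard : Ys.card = n - fullRows.card := by
    rw [hYs, Finset.card_image_of_injective _ castinj, hYsZcard]
  -- covering over ℤ
  have hcovZ : ∀ x₀ ∈ XsZ, ∀ y₀ ∈ YsZ, (x₀ - y₀) ∈ Dp ∨ (x₀ + y₀) ∈ Aset := by
    intro x₀ hx₀ y₀ hy₀
    rw [hXsZ, Finset.mem_sdiff] at hx₀
    rw [hYsZ, Finset.mem_sdiff] at hy₀
    by_cases hsQ : (x₀, y₀) ∈ Q
    · by_cases hd : x₀ - y₀ ∈ Dset
      · exact Or.inl (Finset.mem_union_left _ hd)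
      by_cases ha : x₀ + y₀ ∈ Aset
      · exact Or.inr ha
      · refine Or.inl (Finset.mem_union_right _ ?_)
        exact Finset.mem_image.2 ⟨(x₀, y₀), by
          rw [hQ1, Finset.mem_filter]
          exact ⟨hsQ, hx₀.2, hy₀.2, hd, ha⟩, rfl⟩
    · have hb : (x₀, y₀) ∈ board n := by
        rw [board, Finset.mem_product]; exact ⟨hx₀.1, hy₀.1⟩
      obtain ⟨u, hu, v, hv, huv, hl⟩ := AuxCN.sat_extract hno3 (hsat _ hb hsQ)
      rcases hl with ⟨e1, e2⟩ | ⟨e1, e2⟩ | ⟨e1, e2⟩ | ⟨e1, e2⟩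
      · exfalso
        have h2c := AuxCN.two_on_line Q (fun q => q.1) hu hv huv (t := x₀) e1 e2
        exact hx₀.2 (by rw [hfC, Finset.mem_filter]; exact ⟨hx₀.1, h2c⟩)
      · exfalso
        have h2c := AuxCN.two_on_line Q (fun q => q.2) hu hv huv (t := y₀) e1 e2
        exact hy₀.2 (by rw [hfR, Finset.mem_filter]; exact ⟨hy₀.1, h2c⟩)
      · refine Or.inl (Finset.mem_union_left _ ?_)
        have h2c := AuxCN.two_on_line Q (fun q => q.1 - q.2) hu hv huv (t := x₀ - y₀) e1 e2
        rw [hDs, Finset.mem_filter]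
        exact ⟨Finset.mem_image.2 ⟨u, hu, e1⟩, h2c⟩
      · refine Or.inr ?_
        have h2c := AuxCN.two_on_line Q (fun q => q.1 + q.2) hu hv huv (t := x₀ + y₀) e1 e2
        rw [hAs, Finset.mem_filter]
        exact ⟨Finset.mem_image.2 ⟨u, hu, e1⟩, h2c⟩
  -- covering over ℚ
  have hcovQ : ∀ x ∈ Xs, ∀ y ∈ Ys, x - y ∈ Dq ∨ x + y ∈ Aq := by
    intro x hx y hy
    rw [hXs] at hx; rw [hYs] at hy
    obtain ⟨x₀, hx₀, rfl⟩ := Finset.mem_image.1 hx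
    obtain ⟨y₀, hy₀, rfl⟩ := Finset.mem_image.1 hy
    rcases hcovZ x₀ hx₀ y₀ hy₀ with h | h
    · exact Or.inl (Finset.mem_image.2 ⟨x₀ - y₀, h, by push_cast; ring⟩)
    · exact Or.inr (Finset.mem_image.2 ⟨x₀ + y₀, h, by push_cast; ring⟩)
  -- numeric bookkeeping
  have hDple : Dp.card ≤ Dset.card + Q1.card := by
    calc Dp.card ≤ Dset.card + (Q1.image (fun q => q.1 - q.2)).card :=
          Finset.card_union_le _ _
      _ ≤ Dset.card + Q1.card := by
          have := Finset.card_image_le (s := Q1) (f := fun q : ℤ × ℤ => q.1 - q.2)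
          omega
  have hAqcard : Aq.card ≤ Aset.card := by
    rw [hAq]; exact Finset.card_image_le
  have hDqcard : Dq.card ≤ Dp.card := by
    rw [hDq]; exact Finset.card_image_le
  have hXpos : 0 < Xs.card := by omega
  have hYpos : 0 < Ys.card := by omega
  by_cases hsp : Aset.card + Dp.card + 1 ≤ (Xs.card - 1) + (Ys.card - 1)
  · -- two consecutive splits, use lemK
    set T := (Xs.card - 1) + (Ys.card - 1) with hT
    have hz1 := AuxCN.cover_coeff_zero Xs Ys hXpos hYpos Dq Aq Aset.card (T - Aset.card)
      (by omega) (by omega) (by omega) hcovQ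
    have hz2 := AuxCN.cover_coeff_zero Xs Ys hXpos hYpos Dq Aq (Aset.card + 1)
      (T - Aset.card - 1) (by omega) (by omega) (by omega) hcovQ
    set Aa := Aset.card with hAa
    set Bb := T - Aset.card - 1 with hBb
    have hb1 : T - Aa = Bb + 1 := by omega
    rw [hb1] at hz1
    set g : Polynomial ℚ := ((Polynomial.X : Polynomial ℚ) - 1) ^ Bb *
      ((Polynomial.X : Polynomial ℚ) + 1) ^ Aa with hgdef
    obtain ⟨e', he'⟩ : ∃ e', Xs.card - 1 = e' + 1 := ⟨Xs.card - 2, by omega⟩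
    have hr1 : ((Polynomial.X : Polynomial ℚ) - 1) ^ (Bb + 1) *
        ((Polynomial.X : Polynomial ℚ) + 1) ^ Aa
        = ((Polynomial.X : Polynomial ℚ) - 1) * g := by
      rw [hgdef, pow_succ]; ring
    have hr2 : ((Polynomial.X : Polynomial ℚ) - 1) ^ Bb *
        ((Polynomial.X : Polynomial ℚ) + 1) ^ (Aa + 1)
        = ((Polynomial.X : Polynomial ℚ) + 1) * g := by
      rw [hgdef, pow_succ]; ring
    rw [hr1, he'] at hz1
    rw [hr2, he'] at hz2
    have c1 : g.coeff e' - g.coeff (e' + 1) = 0 := by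
      have hh : (((Polynomial.X : Polynomial ℚ) - 1) * g).coeff (e' + 1)
          = g.coeff e' - g.coeff (e' + 1) := by
        rw [sub_mul, one_mul, Polynomial.coeff_sub, Polynomial.coeff_X_mul]
      rw [hh] at hz1; exact hz1
    have c2 : g.coeff e' + g.coeff (e' + 1) = 0 := by
      have hh : (((Polynomial.X : Polynomial ℚ) + 1) * g).coeff (e' + 1)
          = g.coeff e' + g.coeff (e' + 1) := by
        rw [add_mul, one_mul, Polynomial.coeff_add, Polynomial.coeff_X_mul]
      rw [hh] at hz2; exact hz2
    have cz1 : g.coeff e' = 0 := by linarith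
    have cz2 : g.coeff (e' + 1) = 0 := by linarith
    refine AuxCN.lemK (B := Bb) (a := Aa) (e := e' + 1) (by omega) (by omega) ?_ ?_
    · rw [hgdef] at cz1
      have hidx : e' + 1 - 1 = e' := by omega
      rw [hidx]; exact cz1
    · rw [hgdef] at cz2; exact cz2
  · -- rigid case
    push_neg at hsp
    have hz := AuxCN.cover_coeff_zero Xs Ys hXpos hYpos Dq Aq (2 * k) (2 * k)
      (by omega) (by omega) (by omega) hcovQ
    have hXs1 : Xs.card - 1 = 2 * k := by omega
    rw [hXs1] at hz
    exact AuxCN.symm_ne k hk hz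
end

section
/- For every positive integer k, every good placement of queens on the n × n board B_n with n = 4k has size at least n. -/
/-! ### Auxiliary machinery -/

/-- The coordinate of a square along one of the four line directions. -/
def lv : Fin 4 → ℤ × ℤ → ℤ
  | 0, p => p.1
  | 1, p => p.2
  | 2, p => p.1 - p.2
  | 3, p => p.1 + p.2

@[simp] lemma lv0 (p : ℤ × ℤ) : lv 0 p = p.1 := rfl
@[simp] lemma lv1 (p : ℤ × ℤ) : lv 1 p = p.2 := rfl
@[simp] lemma lv2 (p : ℤ × ℤ) : lv 2 p = p.1 - p.2 := rfl
@[simp] lemma lv3 (p : ℤ × ℤ) : lv 3 p = p.1 + p.2 := rfl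

lemma threeInLine_iff {S : Finset (ℤ × ℤ)} : ThreeInLine S ↔
    ∃ i : Fin 4, ∃ a ∈ S, ∃ b ∈ S, ∃ c ∈ S,
      a ≠ b ∧ a ≠ c ∧ b ≠ c ∧ lv i a = lv i b ∧ lv i b = lv i c := by
  constructor
  · rintro ⟨a, ha, b, hb, c, hc, h1, h2, h3, (⟨e1, e2⟩ | ⟨e1, e2⟩ | ⟨e1, e2⟩ | ⟨e1, e2⟩)⟩
    · exact ⟨0, a, ha, b, hb, c, hc, h1, h2, h3, e1, e2⟩
    · exact ⟨1, a, ha, b, hb, c, hc, h1, h2, h3, e1, e2⟩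
    · exact ⟨2, a, ha, b, hb, c, hc, h1, h2, h3, e1, e2⟩
    · exact ⟨3, a, ha, b, hb, c, hc, h1, h2, h3, e1, e2⟩
  · rintro ⟨i, a, ha, b, hb, c, hc, h1, h2, h3, e1, e2⟩
    refine ⟨a, ha, b, hb, c, hc, h1, h2, h3, ?_⟩
    fin_cases i
    · exact Or.inl ⟨e1, e2⟩
    · exact Or.inr (Or.inl ⟨e1, e2⟩)
    · exact Or.inr (Or.inr (Or.inl ⟨e1, e2⟩))
    · exact Or.inr (Or.inr (Or.inr ⟨e1, e2⟩))

lemma no3 {Q : Finset (ℤ × ℤ)} (h : ¬ ThreeInLine Q) (i : Fin 4) (v : ℤ) :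
    (Q.filter (fun p => lv i p = v)).card ≤ 2 := by
  by_contra hc
  push_neg at hc
  obtain ⟨a, b, c, ha, hb, hc', hab, hac, hbc⟩ := Finset.two_lt_card_iff.mp hc
  rw [Finset.mem_filter] at ha hb hc'
  exact h (threeInLine_iff.mpr ⟨i, a, ha.1, b, hb.1, c, hc'.1, hab, hac, hbc,
    ha.2.trans hb.2.symm, hb.2.trans hc'.2.symm⟩)

lemma sat_full {n : ℕ} {Q : Finset (ℤ × ℤ)} (hno3 : ¬ ThreeInLine Q)
    (hsat : ∀ s ∈ board n, s ∉ Q → ThreeInLine (insert s Q))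
    {s : ℤ × ℤ} (hs : s ∈ board n) (hns : s ∉ Q) :
    ∃ i, (Q.filter (fun p => lv i p = lv i s)).card = 2 := by
  obtain ⟨i, a, ha, b, hb, c, hc, hab, hac, hbc, e1, e2⟩ := threeInLine_iff.mp (hsat s hs hns)
  rw [Finset.mem_insert] at ha hb hc
  have key : ∀ u w : ℤ × ℤ, u ∈ Q → w ∈ Q → u ≠ w → lv i u = lv i s → lv i w = lv i s →
      ∃ i', (Q.filter (fun p => lv i' p = lv i' s)).card = 2 := by
    intro u w hu hw huw eu ew
    refine ⟨i, le_antisymm (no3 hno3 i _) ?_⟩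
    have hsub : ({u, w} : Finset (ℤ × ℤ)) ⊆ Q.filter (fun p => lv i p = lv i s) := by
      intro z hz
      rw [Finset.mem_insert, Finset.mem_singleton] at hz
      rw [Finset.mem_filter]
      rcases hz with rfl | rfl
      · exact ⟨hu, eu⟩
      · exact ⟨hw, ew⟩
    calc (2 : ℕ) = ({u, w} : Finset (ℤ × ℤ)).card := (Finset.card_pair huw).symm
      _ ≤ _ := Finset.card_le_card hsub
  rcases ha with rfl | ha
  · rcases hb with rfl | hb
    · exact absurd rfl hab
    rcases hc with rfl | hc
    · exact absurd rfl hac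
    exact key b c hb hc hbc e1.symm (e1.trans e2).symm
  · rcases hb with rfl | hb
    · rcases hc with rfl | hc
      · exact absurd rfl hbc
      exact key a c ha hc hac e1 e2.symm
    · rcases hc with rfl | hc
      · exact key a b ha hb hab (e1.trans e2) e2
      · exact absurd (threeInLine_iff.mpr ⟨i, a, ha, b, hb, c, hc, hab, hac, hbc, e1, e2⟩) hno3

lemma sum_card_filter_comm {α β : Type*} [DecidableEq α] [DecidableEq β]
    (s : Finset α) (t : Finset β) (r : α → β → Prop) [∀ a b, Decidable (r a b)] :
    ∑ a ∈ s, (t.filter (fun b => r a b)).card = ∑ b ∈ t, (s.filter (fun a => r a b)).card := by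
  simp only [Finset.card_filter]
  rw [Finset.sum_comm]

theorem stmt_2 (k n : ℕ) (hk : 1 ≤ k) (hn : n = 4 * k)
    (Q : Finset (ℤ × ℤ)) (hQ : IsGoodPlacement n Q) : n ≤ Q.card := by
  classical
  by_contra hcon
  push_neg at hcon
  obtain ⟨hsub, hno3, hsat⟩ := hQ
  have hn4 : 4 ≤ n := by omega
  have hcoord : ∀ p ∈ Q, (1:ℤ) ≤ p.1 ∧ p.1 ≤ (n:ℤ) ∧ (1:ℤ) ≤ p.2 ∧ p.2 ≤ (n:ℤ) := by
    intro p hp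
    have h := hsub hp
    simp only [board, Finset.mem_product, Finset.mem_Icc] at h
    exact ⟨h.1.1, h.1.2, h.2.1, h.2.2⟩
  have hIccn : (Finset.Icc (1:ℤ) (n:ℤ)).card = n := by
    rw [Int.card_Icc]; omega
  -- ### Non-full rows: there are at least two
  have hNFrows : ∀ (j : Fin 4) (coordlo : ∀ p ∈ Q, (1:ℤ) ≤ lv j p ∧ lv j p ≤ n),
      1 < ((Finset.Icc (1:ℤ) n).filter
        (fun v => ¬ (Q.filter (fun p => lv j p = v)).card = 2)).card := by
    intro j coordlo
    have hfib : Q.card = ∑ v ∈ Finset.Icc (1:ℤ) n, (Q.filter (fun p => lv j p = v)).card :=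
      Finset.card_eq_sum_card_fiberwise (fun p hp => Finset.mem_Icc.mpr (coordlo p hp))
    set NF := (Finset.Icc (1:ℤ) n).filter
        (fun v => ¬ (Q.filter (fun p => lv j p = v)).card = 2) with hNF
    set FF := (Finset.Icc (1:ℤ) n).filter
        (fun v => (Q.filter (fun p => lv j p = v)).card = 2) with hFF
    have hcards : FF.card + NF.card = (Finset.Icc (1:ℤ) (n:ℤ)).card := by
      rw [hFF, hNF]
      exact Finset.card_filter_add_card_filter_not
        (p := fun v => (Q.filter (fun p => lv j p = v)).card = 2)
    have h1 : ∑ v ∈ FF, (Q.filter (fun p => lv j p = v)).card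
        ≤ ∑ v ∈ Finset.Icc (1:ℤ) n, (Q.filter (fun p => lv j p = v)).card :=
      Finset.sum_le_sum_of_subset (Finset.filter_subset _ _)
    have h2 : ∑ v ∈ FF, (Q.filter (fun p => lv j p = v)).card = 2 * FF.card := by
      rw [Finset.sum_congr rfl (fun v hv => (Finset.mem_filter.mp hv).2),
        Finset.sum_const, smul_eq_mul, mul_comm]
    rw [← hfib] at h1
    omega
  have hNR2 := hNFrows 1 (fun p hp => ⟨(hcoord p hp).2.2.1, (hcoord p hp).2.2.2⟩)
  have hNC2 := hNFrows 0 (fun p hp => ⟨(hcoord p hp).1, (hcoord p hp).2.1⟩)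
  set NR := (Finset.Icc (1:ℤ) n).filter
      (fun v => ¬ (Q.filter (fun p => lv 1 p = v)).card = 2) with hNRdef
  set NC := (Finset.Icc (1:ℤ) n).filter
      (fun v => ¬ (Q.filter (fun p => lv 0 p = v)).card = 2) with hNCdef
  have hNRne : NR.Nonempty := Finset.card_pos.mp (by omega)
  have hNCne : NC.Nonempty := Finset.card_pos.mp (by omega)
  set y₁ := NR.min' hNRne with hy₁def
  set y₂ := NR.max' hNRne with hy₂def
  set x₁ := NC.min' hNCne with hx₁def
  set x₂ := NC.max' hNCne with hx₂def
  have hy12 : y₁ < y₂ := NR.min'_lt_max'_of_card hNR2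
  have hx12 : x₁ < x₂ := NC.min'_lt_max'_of_card hNC2
  have hyIcc : (1:ℤ) ≤ y₁ ∧ y₂ ≤ n := by
    have h1 := (Finset.mem_filter.mp (NR.min'_mem hNRne)).1
    have h2 := (Finset.mem_filter.mp (NR.max'_mem hNRne)).1
    rw [Finset.mem_Icc] at h1 h2
    exact ⟨h1.1, h2.2⟩
  have hxIcc : (1:ℤ) ≤ x₁ ∧ x₂ ≤ n := by
    have h1 := (Finset.mem_filter.mp (NC.min'_mem hNCne)).1
    have h2 := (Finset.mem_filter.mp (NC.max'_mem hNCne)).1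
    rw [Finset.mem_Icc] at h1 h2
    exact ⟨h1.1, h2.2⟩
  have hy₁nf : ¬ (Q.filter (fun p => lv 1 p = y₁)).card = 2 :=
    (Finset.mem_filter.mp (NR.min'_mem hNRne)).2
  have hy₂nf : ¬ (Q.filter (fun p => lv 1 p = y₂)).card = 2 :=
    (Finset.mem_filter.mp (NR.max'_mem hNRne)).2
  have hx₁nf : ¬ (Q.filter (fun p => lv 0 p = x₁)).card = 2 :=
    (Finset.mem_filter.mp (NC.min'_mem hNCne)).2
  have hx₂nf : ¬ (Q.filter (fun p => lv 0 p = x₂)).card = 2 :=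
    (Finset.mem_filter.mp (NC.max'_mem hNCne)).2
  have hrowfull : ∀ v : ℤ, 1 ≤ v → v ≤ n → (v < y₁ ∨ y₂ < v) →
      (Q.filter (fun p => lv 1 p = v)).card = 2 := by
    intro v h1 h2 h3
    by_contra hne
    have hvNR : v ∈ NR := Finset.mem_filter.mpr ⟨Finset.mem_Icc.mpr ⟨h1, h2⟩, hne⟩
    have ha := NR.min'_le v hvNR
    have hb := NR.le_max' v hvNR
    rw [← hy₁def] at ha; rw [← hy₂def] at hb
    omega
  have hcolfull : ∀ v : ℤ, 1 ≤ v → v ≤ n → (v < x₁ ∨ x₂ < v) →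
      (Q.filter (fun p => lv 0 p = v)).card = 2 := by
    intro v h1 h2 h3
    by_contra hne
    have hvNC : v ∈ NC := Finset.mem_filter.mpr ⟨Finset.mem_Icc.mpr ⟨h1, h2⟩, hne⟩
    have ha := NC.min'_le v hvNC
    have hb := NC.le_max' v hvNC
    rw [← hx₁def] at ha; rw [← hx₂def] at hb
    omega
  clear hy₁def hy₂def hx₁def hx₂def
  clear_value y₁ y₂ x₁ x₂
  clear hNRne hNCne hNR2 hNC2 hNRdef hNCdef
  clear NR NC
  -- ### The frame
  set frame := (Finset.Icc x₁ x₂ ×ˢ ({y₁, y₂} : Finset ℤ)) ∪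
      (({x₁, x₂} : Finset ℤ) ×ˢ Finset.Icc y₁ y₂) with hframedef
  have hframe_mem : ∀ c : ℤ × ℤ, c ∈ frame ↔
      ((x₁ ≤ c.1 ∧ c.1 ≤ x₂ ∧ (c.2 = y₁ ∨ c.2 = y₂)) ∨
       ((c.1 = x₁ ∨ c.1 = x₂) ∧ y₁ ≤ c.2 ∧ c.2 ≤ y₂)) := by
    intro c
    rw [hframedef]
    simp only [Finset.mem_union, Finset.mem_product, Finset.mem_Icc, Finset.mem_insert,
      Finset.mem_singleton]
    omega
  have hframeR : ∀ c ∈ frame, x₁ ≤ c.1 ∧ c.1 ≤ x₂ ∧ y₁ ≤ c.2 ∧ c.2 ≤ y₂ := by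
    intro c hc
    have h := (hframe_mem c).mp hc
    omega
  have hframeboard : ∀ c ∈ frame, c ∈ board n := by
    intro c hc
    have h := hframeR c hc
    simp only [board, Finset.mem_product, Finset.mem_Icc]
    omega
  -- ### Full lines meeting the frame
  set L := (frame.biUnion (fun c => (Finset.univ : Finset (Fin 4)).image (fun i => (i, lv i c)))).filter
      (fun ℓ => (Q.filter (fun p => lv ℓ.1 p = ℓ.2)).card = 2) with hLdef
  have hLmem : ∀ ℓ : Fin 4 × ℤ, ℓ ∈ L ↔
      ((∃ c ∈ frame, lv ℓ.1 c = ℓ.2) ∧ (Q.filter (fun p => lv ℓ.1 p = ℓ.2)).card = 2) := by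
    intro ℓ
    rw [hLdef, Finset.mem_filter, Finset.mem_biUnion]
    constructor
    · rintro ⟨⟨c, hc, him⟩, h2⟩
      rw [Finset.mem_image] at him
      obtain ⟨i, -, rfl⟩ := him
      exact ⟨⟨c, hc, rfl⟩, h2⟩
    · rintro ⟨⟨c, hc, hlv⟩, h2⟩
      refine ⟨⟨c, hc, ?_⟩, h2⟩
      rw [Finset.mem_image]
      exact ⟨ℓ.1, Finset.mem_univ _, Prod.ext rfl hlv⟩
  clear hLdef
  clear_value L
  have hpair : ∀ (u w : ℤ × ℤ) (s : Finset (ℤ × ℤ)), (∀ c ∈ s, c = u ∨ c = w) → s.card ≤ 2 := by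
    intro u w s hs
    have hsub2 : s ⊆ {u, w} := by
      intro c hc
      rw [Finset.mem_insert, Finset.mem_singleton]
      exact hs c hc
    calc s.card ≤ ({u, w} : Finset (ℤ × ℤ)).card := Finset.card_le_card hsub2
      _ ≤ 2 := (Finset.card_insert_le _ _).trans (by simp)
  have hline2 : ∀ ℓ ∈ L, (frame.filter (fun c => lv ℓ.1 c = ℓ.2)).card ≤ 2 := by
    rintro ⟨i, v⟩ hℓ
    have hful := ((hLmem _).mp hℓ).2
    fin_cases i
    · -- column
      have hv1 : v ≠ x₁ := by rintro rfl; exact hx₁nf hful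
      have hv2 : v ≠ x₂ := by rintro rfl; exact hx₂nf hful
      refine hpair (v, y₁) (v, y₂) _ ?_
      rintro ⟨cx, cy⟩ hc
      rw [Finset.mem_filter] at hc
      obtain ⟨hcf, hcv⟩ := hc
      have h := (hframe_mem _).mp hcf
      have hcv' : cx = v := hcv
      simp only [Prod.mk.injEq]
      omega
    · -- row
      have hv1 : v ≠ y₁ := by rintro rfl; exact hy₁nf hful
      have hv2 : v ≠ y₂ := by rintro rfl; exact hy₂nf hful
      refine hpair (x₁, v) (x₂, v) _ ?_
      rintro ⟨cx, cy⟩ hc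
      rw [Finset.mem_filter] at hc
      obtain ⟨hcf, hcv⟩ := hc
      have h := (hframe_mem _).mp hcf
      have hcv' : cy = v := hcv
      simp only [Prod.mk.injEq]
      omega
    · -- diagonal
      refine hpair (max x₁ (y₁ + v), max x₁ (y₁ + v) - v) (min x₂ (y₂ + v), min x₂ (y₂ + v) - v) _ ?_
      rintro ⟨cx, cy⟩ hc
      rw [Finset.mem_filter] at hc
      obtain ⟨hcf, hcv⟩ := hc
      have h := (hframe_mem _).mp hcf
      have hcv' : cx - cy = v := hcv
      simp only [Prod.mk.injEq]
      omega
    · -- antidiagonal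
      refine hpair (max x₁ (v - y₂), v - max x₁ (v - y₂))
        (min x₂ (v - y₁), v - min x₂ (v - y₁)) _ ?_
      rintro ⟨cx, cy⟩ hc
      rw [Finset.mem_filter] at hc
      obtain ⟨hcf, hcv⟩ := hc
      have h := (hframe_mem _).mp hcf
      have hcv' : cx + cy = v := hcv
      simp only [Prod.mk.injEq]
      omega
  -- ### Admissible directions for a queen
  set adm : ℤ × ℤ → Finset (Fin 4) := fun p => (Finset.univ : Finset (Fin 4)).filter
      (fun i => (i = 0 → x₁ ≤ p.1 ∧ p.1 ≤ x₂) ∧ (i = 1 → y₁ ≤ p.2 ∧ p.2 ≤ y₂)) with hadmdef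
  have hadmcard : ∀ p : ℤ × ℤ, (adm p).card =
      2 + (if x₁ ≤ p.1 ∧ p.1 ≤ x₂ then 1 else 0) + (if y₁ ≤ p.2 ∧ p.2 ≤ y₂ then 1 else 0) := by
    intro p
    rw [hadmdef]
    rw [Finset.card_filter, Fin.sum_univ_four]
    by_cases hx : x₁ ≤ p.1 ∧ p.1 ≤ x₂ <;> by_cases hy : y₁ ≤ p.2 ∧ p.2 ≤ y₂ <;>
      simp [hx, hy]
  have hsubim : ∀ p : ℤ × ℤ, L.filter (fun ℓ => lv ℓ.1 p = ℓ.2) ⊆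
      (adm p).image (fun i => (i, lv i p)) := by
    intro p ℓ hℓ
    rw [Finset.mem_filter] at hℓ
    obtain ⟨hℓL, hℓp⟩ := hℓ
    rw [Finset.mem_image]
    refine ⟨ℓ.1, ?_, Prod.ext rfl hℓp⟩
    rw [hadmdef]
    rw [Finset.mem_filter]
    obtain ⟨⟨c, hc, hlvc⟩, -⟩ := (hLmem ℓ).mp hℓL
    have hr := hframeR c hc
    refine ⟨Finset.mem_univ _, ?_, ?_⟩
    · intro h0
      rw [h0] at hlvc hℓp
      have h1 : c.1 = ℓ.2 := hlvc
      have h2 : p.1 = ℓ.2 := hℓp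
      omega
    · intro h1
      rw [h1] at hlvc hℓp
      have h1' : c.2 = ℓ.2 := hlvc
      have h2 : p.2 = ℓ.2 := hℓp
      omega
  have hble : ∀ p : ℤ × ℤ, (L.filter (fun ℓ => lv ℓ.1 p = ℓ.2)).card ≤ (adm p).card :=
    fun p => (Finset.card_le_card (hsubim p)).trans Finset.card_image_le
  -- ### The double count
  set fE := frame.filter (fun c => c ∉ Q) with hfEdef
  set fQ := frame.filter (fun c => c ∈ Q) with hfQdef
  set QF := Q.filter (fun p => p ∈ frame) with hQFdef
  set Qoff := Q.filter (fun p => p ∉ frame) with hQoffdef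
  have hA : fE.card ≤ ∑ ℓ ∈ L, (fE.filter (fun c => lv ℓ.1 c = ℓ.2)).card := by
    refine (Finset.card_le_card ?_).trans (Finset.card_biUnion_le)
    intro c hc
    have hcf : c ∈ frame := (Finset.mem_filter.mp hc).1
    have hcQ : c ∉ Q := (Finset.mem_filter.mp hc).2
    obtain ⟨i, hi⟩ := sat_full hno3 hsat (hframeboard c hcf) hcQ
    rw [Finset.mem_biUnion]
    refine ⟨(i, lv i c), ?_, ?_⟩
    · rw [hLmem]
      exact ⟨⟨c, hcf, rfl⟩, hi⟩
    · rw [Finset.mem_filter]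
      exact ⟨hc, rfl⟩
  have hBpt : ∀ ℓ ∈ L, (fE.filter (fun c => lv ℓ.1 c = ℓ.2)).card +
      (fQ.filter (fun c => lv ℓ.1 c = ℓ.2)).card ≤ 2 := by
    intro ℓ hℓ
    have hsplit : (fQ.filter (fun c => lv ℓ.1 c = ℓ.2)).card +
        (fE.filter (fun c => lv ℓ.1 c = ℓ.2)).card
        = (frame.filter (fun c => lv ℓ.1 c = ℓ.2)).card := by
      rw [hfQdef, hfEdef, Finset.filter_comm, (Finset.filter_comm _ _ _ : (frame.filter (fun c => c ∉ Q)).filter (fun c => lv ℓ.1 c = ℓ.2) = _)]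
      exact Finset.card_filter_add_card_filter_not (p := fun c : ℤ × ℤ => c ∈ Q)
    have := hline2 ℓ hℓ
    omega
  have hBsum : (∑ ℓ ∈ L, (fE.filter (fun c => lv ℓ.1 c = ℓ.2)).card) +
      (∑ ℓ ∈ L, (fQ.filter (fun c => lv ℓ.1 c = ℓ.2)).card) ≤ 2 * L.card := by
    rw [← Finset.sum_add_distrib]
    calc ∑ ℓ ∈ L, ((fE.filter (fun c => lv ℓ.1 c = ℓ.2)).card +
          (fQ.filter (fun c => lv ℓ.1 c = ℓ.2)).card)
        ≤ ∑ _ℓ ∈ L, 2 := Finset.sum_le_sum hBpt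
      _ = 2 * L.card := by rw [Finset.sum_const, smul_eq_mul, mul_comm]
  have h2L : ∑ ℓ ∈ L, (Q.filter (fun p => lv ℓ.1 p = ℓ.2)).card = 2 * L.card := by
    rw [Finset.sum_congr rfl (fun ℓ hℓ => ((hLmem ℓ).mp hℓ).2), Finset.sum_const,
      smul_eq_mul, mul_comm]
  have hswapQ : ∑ ℓ ∈ L, (Q.filter (fun p => lv ℓ.1 p = ℓ.2)).card
      = ∑ p ∈ Q, (L.filter (fun ℓ => lv ℓ.1 p = ℓ.2)).card :=
    sum_card_filter_comm L Q (fun ℓ p => lv ℓ.1 p = ℓ.2)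
  have hswapF : ∑ ℓ ∈ L, (fQ.filter (fun c => lv ℓ.1 c = ℓ.2)).card
      = ∑ p ∈ fQ, (L.filter (fun ℓ => lv ℓ.1 p = ℓ.2)).card :=
    sum_card_filter_comm L fQ (fun ℓ p => lv ℓ.1 p = ℓ.2)
  have hfQQF : fQ = QF := by
    ext c
    rw [hfQdef, hQFdef, Finset.mem_filter, Finset.mem_filter]
    exact and_comm
  have hQsplit : ∑ p ∈ QF, (L.filter (fun ℓ => lv ℓ.1 p = ℓ.2)).card
      + ∑ p ∈ Qoff, (L.filter (fun ℓ => lv ℓ.1 p = ℓ.2)).card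
      = ∑ p ∈ Q, (L.filter (fun ℓ => lv ℓ.1 p = ℓ.2)).card := by
    rw [hQFdef, hQoffdef]
    exact Finset.sum_filter_add_sum_filter_not Q _ _
  have hkey : fE.card ≤ ∑ p ∈ Qoff, (L.filter (fun ℓ => lv ℓ.1 p = ℓ.2)).card := by
    rw [← hfQQF] at hQsplit
    omega
  -- ### Sum of admissible-direction counts
  have hadmsum : ∑ p ∈ Qoff, (adm p).card = 2 * Qoff.card
      + (Qoff.filter (fun p => x₁ ≤ p.1 ∧ p.1 ≤ x₂)).card
      + (Qoff.filter (fun p => y₁ ≤ p.2 ∧ p.2 ≤ y₂)).card := by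
    calc ∑ p ∈ Qoff, (adm p).card
        = ∑ p ∈ Qoff, (2 + (if x₁ ≤ p.1 ∧ p.1 ≤ x₂ then 1 else 0)
            + (if y₁ ≤ p.2 ∧ p.2 ≤ y₂ then 1 else 0)) :=
          Finset.sum_congr rfl (fun p _ => hadmcard p)
      _ = (∑ _p ∈ Qoff, 2) + (∑ p ∈ Qoff, if x₁ ≤ p.1 ∧ p.1 ≤ x₂ then 1 else 0)
            + (∑ p ∈ Qoff, if y₁ ≤ p.2 ∧ p.2 ≤ y₂ then 1 else 0) := by
          rw [Finset.sum_add_distrib, Finset.sum_add_distrib]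
      _ = _ := by
          rw [Finset.sum_const, smul_eq_mul, mul_comm, ← Finset.card_filter, ← Finset.card_filter]
  have hD : ∑ p ∈ Qoff, (L.filter (fun ℓ => lv ℓ.1 p = ℓ.2)).card
      ≤ ∑ p ∈ Qoff, (adm p).card := Finset.sum_le_sum (fun p _ => hble p)
  -- ### Counting queens outside the strips
  have hinoutX : (Qoff.filter (fun p => x₁ ≤ p.1 ∧ p.1 ≤ x₂)).card
      + (Q.filter (fun p => ¬(x₁ ≤ p.1 ∧ p.1 ≤ x₂))).card = Qoff.card := by
    have h1 : Qoff.filter (fun p => ¬(x₁ ≤ p.1 ∧ p.1 ≤ x₂))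
        = Q.filter (fun p => ¬(x₁ ≤ p.1 ∧ p.1 ≤ x₂)) := by
      rw [hQoffdef, Finset.filter_filter]
      apply Finset.filter_congr
      intro p _
      constructor
      · rintro ⟨-, h⟩; exact h
      · intro h
        exact ⟨fun hf => h ⟨(hframeR p hf).1, (hframeR p hf).2.1⟩, h⟩
    rw [← h1]
    exact Finset.card_filter_add_card_filter_not (p := fun p : ℤ × ℤ => x₁ ≤ p.1 ∧ p.1 ≤ x₂)
  have hinoutY : (Qoff.filter (fun p => y₁ ≤ p.2 ∧ p.2 ≤ y₂)).card
      + (Q.filter (fun p => ¬(y₁ ≤ p.2 ∧ p.2 ≤ y₂))).card = Qoff.card := by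
    have h1 : Qoff.filter (fun p => ¬(y₁ ≤ p.2 ∧ p.2 ≤ y₂))
        = Q.filter (fun p => ¬(y₁ ≤ p.2 ∧ p.2 ≤ y₂)) := by
      rw [hQoffdef, Finset.filter_filter]
      apply Finset.filter_congr
      intro p _
      constructor
      · rintro ⟨-, h⟩; exact h
      · intro h
        exact ⟨fun hf => h ⟨(hframeR p hf).2.2.1, (hframeR p hf).2.2.2⟩, h⟩
    rw [← h1]
    exact Finset.card_filter_add_card_filter_not (p := fun p : ℤ × ℤ => y₁ ≤ p.2 ∧ p.2 ≤ y₂)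
  have hXout : (Q.filter (fun p => ¬(x₁ ≤ p.1 ∧ p.1 ≤ x₂))).card
      = 2 * ((Finset.Icc (1:ℤ) n).filter (fun v => v < x₁ ∨ x₂ < v)).card := by
    have hmap : ∀ p ∈ Q.filter (fun p => ¬(x₁ ≤ p.1 ∧ p.1 ≤ x₂)),
        (fun p : ℤ × ℤ => lv 0 p) p ∈ (Finset.Icc (1:ℤ) n).filter (fun v => v < x₁ ∨ x₂ < v) := by
      intro p hp
      rw [Finset.mem_filter] at hp ⊢
      have hco := hcoord p hp.1
      have h2 := hp.2
      simp only [lv0]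
      exact ⟨Finset.mem_Icc.mpr ⟨hco.1, hco.2.1⟩, by omega⟩
    have hfib : ∀ v ∈ (Finset.Icc (1:ℤ) n).filter (fun v => v < x₁ ∨ x₂ < v),
        ((Q.filter (fun p => ¬(x₁ ≤ p.1 ∧ p.1 ≤ x₂))).filter (fun p => lv 0 p = v)).card = 2 := by
      intro v hv
      rw [Finset.mem_filter, Finset.mem_Icc] at hv
      have heq2 : (Q.filter (fun p => ¬(x₁ ≤ p.1 ∧ p.1 ≤ x₂))).filter (fun p => lv 0 p = v)
          = Q.filter (fun p => lv 0 p = v) := by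
        rw [Finset.filter_filter]
        apply Finset.filter_congr
        intro p _
        simp only [lv0]
        constructor
        · rintro ⟨-, h⟩; exact h
        · intro h; exact ⟨by omega, h⟩
      rw [heq2]
      exact hcolfull v hv.1.1 hv.1.2 hv.2
    rw [Finset.card_eq_sum_card_fiberwise hmap, Finset.sum_congr rfl hfib, Finset.sum_const,
      smul_eq_mul, mul_comm]
  have hYout : (Q.filter (fun p => ¬(y₁ ≤ p.2 ∧ p.2 ≤ y₂))).card
      = 2 * ((Finset.Icc (1:ℤ) n).filter (fun v => v < y₁ ∨ y₂ < v)).card := by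
    have hmap : ∀ p ∈ Q.filter (fun p => ¬(y₁ ≤ p.2 ∧ p.2 ≤ y₂)),
        (fun p : ℤ × ℤ => lv 1 p) p ∈ (Finset.Icc (1:ℤ) n).filter (fun v => v < y₁ ∨ y₂ < v) := by
      intro p hp
      rw [Finset.mem_filter] at hp ⊢
      have hco := hcoord p hp.1
      have h2 := hp.2
      simp only [lv1]
      exact ⟨Finset.mem_Icc.mpr ⟨hco.2.2.1, hco.2.2.2⟩, by omega⟩
    have hfib : ∀ v ∈ (Finset.Icc (1:ℤ) n).filter (fun v => v < y₁ ∨ y₂ < v),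
        ((Q.filter (fun p => ¬(y₁ ≤ p.2 ∧ p.2 ≤ y₂))).filter (fun p => lv 1 p = v)).card = 2 := by
      intro v hv
      rw [Finset.mem_filter, Finset.mem_Icc] at hv
      have heq2 : (Q.filter (fun p => ¬(y₁ ≤ p.2 ∧ p.2 ≤ y₂))).filter (fun p => lv 1 p = v)
          = Q.filter (fun p => lv 1 p = v) := by
        rw [Finset.filter_filter]
        apply Finset.filter_congr
        intro p _
        simp only [lv1]
        constructor
        · rintro ⟨-, h⟩; exact h
        · intro h; exact ⟨by omega, h⟩
      rw [heq2]
      exact hrowfull v hv.1.1 hv.1.2 hv.2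
    rw [Finset.card_eq_sum_card_fiberwise hmap, Finset.sum_congr rfl hfib, Finset.sum_const,
      smul_eq_mul, mul_comm]
  have hTx : ((Finset.Icc (1:ℤ) n).filter (fun v => v < x₁ ∨ x₂ < v)).card
      + (Finset.Icc x₁ x₂).card = n := by
    have heq2 : (Finset.Icc (1:ℤ) (n:ℤ)).filter (fun v => ¬(v < x₁ ∨ x₂ < v)) = Finset.Icc x₁ x₂ := by
      ext v
      rw [Finset.mem_filter, Finset.mem_Icc, Finset.mem_Icc]
      constructor
      · intro h; omega
      · intro h
        have hx := hxIcc
        refine ⟨⟨by omega, by omega⟩, by omega⟩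
    have h2 := Finset.card_filter_add_card_filter_not
      (s := Finset.Icc (1:ℤ) (n:ℤ)) (p := fun v => v < x₁ ∨ x₂ < v)
    rw [heq2] at h2
    omega
  have hTy : ((Finset.Icc (1:ℤ) n).filter (fun v => v < y₁ ∨ y₂ < v)).card
      + (Finset.Icc y₁ y₂).card = n := by
    have heq2 : (Finset.Icc (1:ℤ) (n:ℤ)).filter (fun v => ¬(v < y₁ ∨ y₂ < v)) = Finset.Icc y₁ y₂ := by
      ext v
      rw [Finset.mem_filter, Finset.mem_Icc, Finset.mem_Icc]
      constructor
      · intro h; omega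
      · intro h
        have hy := hyIcc
        refine ⟨⟨by omega, by omega⟩, by omega⟩
    have h2 := Finset.card_filter_add_card_filter_not
      (s := Finset.Icc (1:ℤ) (n:ℤ)) (p := fun v => v < y₁ ∨ y₂ < v)
    rw [heq2] at h2
    omega
  -- ### Frame cardinality
  have hframecard : 2 * (Finset.Icc x₁ x₂).card + 2 * (Finset.Ioo y₁ y₂).card ≤ frame.card := by
    have hsub2 : (Finset.Icc x₁ x₂ ×ˢ ({y₁, y₂} : Finset ℤ))
        ∪ (({x₁, x₂} : Finset ℤ) ×ˢ Finset.Ioo y₁ y₂) ⊆ frame := by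
      intro c hc
      rw [Finset.mem_union] at hc
      refine (hframe_mem c).mpr ?_
      rcases hc with hc | hc
      · rw [Finset.mem_product, Finset.mem_Icc] at hc
        simp only [Finset.mem_insert, Finset.mem_singleton] at hc
        exact Or.inl ⟨hc.1.1, hc.1.2, hc.2⟩
      · rw [Finset.mem_product, Finset.mem_Ioo] at hc
        simp only [Finset.mem_insert, Finset.mem_singleton] at hc
        exact Or.inr ⟨hc.1, by omega⟩
    have hdisj : Disjoint (Finset.Icc x₁ x₂ ×ˢ ({y₁, y₂} : Finset ℤ))
        (({x₁, x₂} : Finset ℤ) ×ˢ Finset.Ioo y₁ y₂) := by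
      rw [Finset.disjoint_left]
      intro c h1 h2
      rw [Finset.mem_product] at h1 h2
      simp only [Finset.mem_insert, Finset.mem_singleton, Finset.mem_Ioo] at h1 h2
      omega
    calc 2 * (Finset.Icc x₁ x₂).card + 2 * (Finset.Ioo y₁ y₂).card
        = ((Finset.Icc x₁ x₂ ×ˢ ({y₁, y₂} : Finset ℤ))
            ∪ (({x₁, x₂} : Finset ℤ) ×ˢ Finset.Ioo y₁ y₂)).card := by
          rw [Finset.card_union_of_disjoint hdisj, Finset.card_product, Finset.card_product,
            Finset.card_pair (by omega : y₁ ≠ y₂), Finset.card_pair (by omega : x₁ ≠ x₂)]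
          ring
      _ ≤ frame.card := Finset.card_le_card hsub2
  have hfsplit : fQ.card + fE.card = frame.card := by
    rw [hfQdef, hfEdef]
    exact Finset.card_filter_add_card_filter_not (p := fun c : ℤ × ℤ => c ∈ Q)
  have hQcardsplit : QF.card + Qoff.card = Q.card := by
    rw [hQFdef, hQoffdef]
    exact Finset.card_filter_add_card_filter_not (p := fun p : ℤ × ℤ => p ∈ frame)
  have hfQcard : fQ.card = QF.card := congrArg Finset.card hfQQF
  have hIccxcard : (Finset.Icc x₁ x₂).card = (x₂ + 1 - x₁).toNat := Int.card_Icc x₁ x₂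
  have hIccycard : (Finset.Icc y₁ y₂).card = (y₂ + 1 - y₁).toNat := Int.card_Icc y₁ y₂
  have hIooycard : (Finset.Ioo y₁ y₂).card = (y₂ - y₁ - 1).toNat := Int.card_Ioo y₁ y₂
  -- ### First conclusion: |Q| = n-1 and no queens on the frame
  have hmain : QF.card = 0 ∧ Q.card + 1 = n := by
    constructor <;> omega
  obtain ⟨hQF0, hqval⟩ := hmain
  -- ### Equality is forced everywhere, so each queen's full lines realize all admissible dirs
  have hsandwich : ∑ p ∈ Qoff, (L.filter (fun ℓ => lv ℓ.1 p = ℓ.2)).card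
      = ∑ p ∈ Qoff, (adm p).card := by
    refine le_antisymm hD ?_
    omega
  have hpw : ∀ p ∈ Qoff, (L.filter (fun ℓ => lv ℓ.1 p = ℓ.2)).card = (adm p).card :=
    (Finset.sum_eq_sum_iff_of_le (fun p _ => hble p)).mp hsandwich
  have hQoffQ : Qoff = Q := by
    rw [hQoffdef]
    apply Finset.filter_true_of_mem
    intro p hp hf
    have hmem : p ∈ QF := by
      rw [hQFdef, Finset.mem_filter]; exact ⟨hp, hf⟩
    rw [Finset.card_eq_zero.mp hQF0] at hmem
    exact absurd hmem (Finset.notMem_empty p)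
  -- ### Every queen lies in a full row
  have hrowall : ∀ p ∈ Q, (Q.filter (fun r => lv 1 r = p.2)).card = 2 := by
    intro p hp
    by_cases hyin : y₁ ≤ p.2 ∧ p.2 ≤ y₂
    · have hpe := hpw p (by rw [hQoffQ]; exact hp)
      have him : ((adm p).image (fun i => (i, lv i p))).card
          ≤ (L.filter (fun ℓ => lv ℓ.1 p = ℓ.2)).card := by
        rw [hpe]; exact Finset.card_image_le
      have heq := Finset.eq_of_subset_of_card_le (hsubim p) him
      have h1mem : ((1 : Fin 4), p.2) ∈ (adm p).image (fun i => (i, lv i p)) := by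
        rw [Finset.mem_image]
        refine ⟨1, ?_, rfl⟩
        rw [hadmdef, Finset.mem_filter]
        exact ⟨Finset.mem_univ _, fun h => absurd h (by decide), fun _ => hyin⟩
      rw [← heq, Finset.mem_filter] at h1mem
      exact ((hLmem _).mp h1mem.1).2
    · exact hrowfull p.2 (hcoord p hp).2.2.1 (hcoord p hp).2.2.2 (by omega)
  -- ### Parity: |Q| is even, contradiction with |Q| = 4k - 1
  have hfib2 : Q.card = ∑ v ∈ Q.image (fun p => lv 1 p), (Q.filter (fun p' => lv 1 p' = v)).card :=
    Finset.card_eq_sum_card_fiberwise (fun p hp => Finset.mem_image_of_mem _ hp)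
  have hcongr2 : ∀ v ∈ Q.image (fun p => lv 1 p), (Q.filter (fun p' => lv 1 p' = v)).card = 2 := by
    intro v hv
    obtain ⟨p, hp, rfl⟩ := Finset.mem_image.mp hv
    exact hrowall p hp
  have heven : Q.card = 2 * (Q.image (fun p => lv 1 p)).card := by
    rw [hfib2, Finset.sum_congr rfl hcongr2, Finset.sum_const, smul_eq_mul, mul_comm]
  omega
end

section
/- For every nonnegative integer k, every good placement of queens on the n × n board B_n with n = 4k + 2 has size at least n. -/
open Finset


/-- Two-row construction: a full bottom row plus a mostly-full second row. -/
lemma two_rows (A B : Finset ℤ) (y0 y1 : ℤ) (h0 : y0 ∈ B) (h1 : y1 ∈ B) (hne : y1 ≠ y0)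
    (hover : ((A.image (fun x => x + (y1 - y0))) ∩ A).card ≤ 1) :
    ∃ I : Finset (ℤ × ℤ), I ⊆ A ×ˢ B ∧ A.card + A.card ≤ I.card + 2 ∧
      (∀ z ∈ I, ∀ w ∈ I, z.1 + z.2 = w.1 + w.2 → z = w) ∧
      (∀ z ∈ I, ∀ w ∈ I, z.1 - z.2 = w.1 - w.2 → z = w) := by
  classical
  set Δ := y1 - y0 with hΔdef
  set U : Finset ℤ := A.image (fun x => x + Δ) ∪ A.image (fun x => x - Δ) with hU
  have hAlcard : A.card ≤ (A \ U).card + 2 := by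
    have h2 : (A ∩ U).card ≤ 2 := by
      have hsplit : A ∩ U =
          (A ∩ A.image (fun x => x + Δ)) ∪ (A ∩ A.image (fun x => x - Δ)) := by
        rw [hU]; exact inter_union_distrib_left _ _ _
      have hc1 : (A ∩ A.image (fun x => x + Δ)).card ≤ 1 := by
        rw [inter_comm]; exact hover
      have hc2 : (A ∩ A.image (fun x => x - Δ)).card ≤ 1 := by
        have hinj : ∀ z ∈ A ∩ A.image (fun x => x - Δ),
            z + Δ ∈ (A.image (fun x => x + Δ)) ∩ A := by
          intro z hz
          simp only [mem_inter, mem_image] at hz ⊢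
          obtain ⟨hzA, a, haA, hae⟩ := hz
          have hza : z + Δ = a := by omega
          exact ⟨⟨z, hzA, rfl⟩, by rw [hza]; exact haA⟩
        have := Finset.card_le_card_of_injOn (fun z => z + Δ) hinj
          (fun a _ b _ h => by simpa using h)
        omega
      calc (A ∩ U).card
          = ((A ∩ A.image (fun x => x + Δ)) ∪ (A ∩ A.image (fun x => x - Δ))).card := by
            rw [hsplit]
        _ ≤ _ := card_union_le _ _
        _ ≤ 2 := by omega
    have := Finset.card_sdiff_add_card_inter A U
    omega
  have hmem : ∀ z ∈ (A ×ˢ ({y0} : Finset ℤ)) ∪ ((A \ U) ×ˢ ({y1} : Finset ℤ)),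
      (z.1 ∈ A ∧ z.2 = y0) ∨ (z.1 ∈ A \ U ∧ z.2 = y1) := by
    intro z hz
    rw [mem_union, mem_product, mem_product, mem_singleton, mem_singleton] at hz
    exact hz
  have hnotim : ∀ x' ∈ A \ U, (x' + Δ ∉ A) ∧ (x' - Δ ∉ A) := by
    intro x' hx'
    rw [mem_sdiff] at hx'
    constructor
    · intro hc
      apply hx'.2
      rw [hU, mem_union, mem_image, mem_image]
      right
      exact ⟨x' + Δ, hc, by omega⟩
    · intro hc
      apply hx'.2
      rw [hU, mem_union, mem_image, mem_image]
      left
      exact ⟨x' - Δ, hc, by omega⟩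
  refine ⟨(A ×ˢ ({y0} : Finset ℤ)) ∪ ((A \ U) ×ˢ ({y1} : Finset ℤ)), ?_, ?_, ?_, ?_⟩
  · intro z hz
    rcases hmem z hz with ⟨h, he⟩ | ⟨h, he⟩ <;> rw [mem_product]
    · exact ⟨h, he ▸ h0⟩
    · exact ⟨sdiff_subset h, he ▸ h1⟩
  · have hdisj : Disjoint (A ×ˢ ({y0} : Finset ℤ)) ((A \ U) ×ˢ ({y1} : Finset ℤ)) := by
      rw [disjoint_left]
      intro z hz hz'
      rw [mem_product, mem_singleton] at hz hz'
      exact hne (by rw [← hz.2, ← hz'.2])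
    rw [card_union_of_disjoint hdisj, card_product, card_product]
    simp only [card_singleton, mul_one]
    omega
  · intro z hz w hw he
    have hΔ0 : Δ ≠ 0 := fun h => hne (by omega)
    rcases hmem z hz with ⟨hz1, hz2⟩ | ⟨hz1, hz2⟩ <;>
      rcases hmem w hw with ⟨hw1, hw2⟩ | ⟨hw1, hw2⟩
    · have : z.1 = w.1 := by omega
      exact Prod.ext this (by rw [hz2, hw2])
    · exfalso
      have : w.1 + Δ = z.1 := by omega
      exact (hnotim w.1 hw1).1 (this ▸ hz1)
    · exfalso
      have : z.1 + Δ = w.1 := by omega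
      exact (hnotim z.1 hz1).1 (this ▸ hw1)
    · have : z.1 = w.1 := by omega
      exact Prod.ext this (by rw [hz2, hw2])
  · intro z hz w hw he
    have hΔ0 : Δ ≠ 0 := fun h => hne (by omega)
    rcases hmem z hz with ⟨hz1, hz2⟩ | ⟨hz1, hz2⟩ <;>
      rcases hmem w hw with ⟨hw1, hw2⟩ | ⟨hw1, hw2⟩
    · have : z.1 = w.1 := by omega
      exact Prod.ext this (by rw [hz2, hw2])
    · exfalso
      have : w.1 - Δ = z.1 := by omega
      exact (hnotim w.1 hw1).2 (this ▸ hz1)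
    · exfalso
      have : z.1 - Δ = w.1 := by omega
      exact (hnotim z.1 hz1).2 (this ▸ hw1)
    · have : z.1 = w.1 := by omega
      exact Prod.ext this (by rw [hz2, hw2])



/-- Two-column construction, by swapping coordinates. -/
lemma two_cols (A B : Finset ℤ) (x0 x1 : ℤ) (h0 : x0 ∈ A) (h1 : x1 ∈ A) (hne : x1 ≠ x0)
    (hover : ((B.image (fun y => y + (x1 - x0))) ∩ B).card ≤ 1) :
    ∃ I : Finset (ℤ × ℤ), I ⊆ A ×ˢ B ∧ B.card + B.card ≤ I.card + 2 ∧
      (∀ z ∈ I, ∀ w ∈ I, z.1 + z.2 = w.1 + w.2 → z = w) ∧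
      (∀ z ∈ I, ∀ w ∈ I, z.1 - z.2 = w.1 - w.2 → z = w) := by
  classical
  obtain ⟨J, hJsub, hJcard, hJs, hJd⟩ := two_rows B A x0 x1 h0 h1 hne hover
  refine ⟨J.image Prod.swap, ?_, ?_, ?_, ?_⟩
  · intro z hz
    rw [mem_image] at hz
    obtain ⟨u, hu, he⟩ := hz
    have := hJsub hu
    rw [mem_product] at this ⊢
    rw [← he]
    exact ⟨this.2, this.1⟩
  · rw [Finset.card_image_of_injective _ Prod.swap_injective]
    exact hJcard
  · intro z hz w hw he
    rw [mem_image] at hz hw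
    obtain ⟨u, hu, heu⟩ := hz
    obtain ⟨v, hv, hev⟩ := hw
    have : u = v := by
      apply hJs u hu v hv
      have h1 : z.1 + z.2 = u.2 + u.1 := by rw [← heu]; simp
      have h2 : w.1 + w.2 = v.2 + v.1 := by rw [← hev]; simp
      omega
    rw [← heu, ← hev, this]
  · intro z hz w hw he
    rw [mem_image] at hz hw
    obtain ⟨u, hu, heu⟩ := hz
    obtain ⟨v, hv, hev⟩ := hw
    have : u = v := by
      apply hJd u hu v hv
      have h1 : z.1 - z.2 = u.2 - u.1 := by rw [← heu]; simp
      have h2 : w.1 - w.2 = v.2 - v.1 := by rw [← hev]; simp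
      omega
    rw [← heu, ← hev, this]

/-- Bishop lemma: an A×B grid with |A| = |B| = t contains at least 2t-2 cells
    with pairwise distinct sums and pairwise distinct differences. -/
lemma bishop (t : ℕ) (A B : Finset ℤ) (hA : A.card = t) (hB : B.card = t) :
    ∃ I : Finset (ℤ × ℤ), I ⊆ A ×ˢ B ∧ 2 * t ≤ I.card + 2 ∧
      (∀ z ∈ I, ∀ w ∈ I, z.1 + z.2 = w.1 + w.2 → z = w) ∧
      (∀ z ∈ I, ∀ w ∈ I, z.1 - z.2 = w.1 - w.2 → z = w) := by
  classical
  rcases le_or_gt t 1 with ht | ht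
  · exact ⟨∅, empty_subset _, by simp; omega, by simp, by simp⟩
  have hA0 : A.Nonempty := card_pos.mp (by omega)
  have hB0 : B.Nonempty := card_pos.mp (by omega)
  by_cases hc1 : ∃ y' ∈ B, y' ≠ B.min' hB0 ∧
      ((A.image (fun x => x + (y' - B.min' hB0))) ∩ A).card ≤ 1
  · obtain ⟨y', hy', hyne, hov⟩ := hc1
    obtain ⟨I, hsub, hcard, hs, hd⟩ := two_rows A B (B.min' hB0) y' (B.min'_mem hB0) hy' hyne hov
    exact ⟨I, hsub, by omega, hs, hd⟩
  by_cases hc2 : ∃ x' ∈ A, x' ≠ A.min' hA0 ∧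
      ((B.image (fun y => y + (x' - A.min' hA0))) ∩ B).card ≤ 1
  · obtain ⟨x', hx', hxne, hov⟩ := hc2
    obtain ⟨I, hsub, hcard, hs, hd⟩ := two_cols A B (A.min' hA0) x' (A.min'_mem hA0) hx' hxne hov
    exact ⟨I, hsub, by omega, hs, hd⟩
  exfalso
  push_neg at hc1 hc2
  have hBlt : B.min' hB0 < B.max' hB0 := B.min'_lt_max'_of_card (by omega)
  have hAlt : A.min' hA0 < A.max' hA0 := A.min'_lt_max'_of_card (by omega)
  -- spread of A exceeds spread of B
  have key : ∀ (C D : Finset ℤ) (hC : C.Nonempty) (hD : D.Nonempty),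
      1 < ((C.image (fun x => x + (D.max' hD - D.min' hD))) ∩ C).card →
      D.max' hD - D.min' hD < C.max' hC - C.min' hC := by
    intro C D hC hD hcard
    obtain ⟨u, hu, v, hv, huv⟩ := Finset.one_lt_card.mp hcard
    rw [mem_inter, mem_image] at hu hv
    obtain ⟨⟨a, haC, hae⟩, huC⟩ := hu
    obtain ⟨⟨b, hbC, hbe⟩, hvC⟩ := hv
    have h1 := C.min'_le a haC
    have h2 := C.min'_le b hbC
    have h3 := C.le_max' u huC
    have h4 := C.le_max' v hvC
    omega
  have h1 := key A B hA0 hB0 (hc1 (B.max' hB0) (B.max'_mem hB0) (ne_of_gt hBlt))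
  have h2 := key B A hB0 hA0 (hc2 (A.max' hA0) (A.max'_mem hA0) (ne_of_gt hAlt))
  omega

/-- Counting: lines in a family `D`, each holding ≥ 2 queens, use up ≥ 2|D| queens. -/
lemma count_pairs (Q : Finset (ℤ × ℤ)) (f : ℤ × ℤ → ℤ) (D : Finset ℤ)
    (hD : ∀ d ∈ D, 2 ≤ (Q.filter (fun q => f q = d)).card) :
    2 * D.card ≤ (Q.filter (fun q => f q ∈ D)).card := by
  classical
  have hfib : (Q.filter (fun q => f q ∈ D)).card
      = ∑ d ∈ D, ((Q.filter (fun q => f q ∈ D)).filter (fun q => f q = d)).card :=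
    Finset.card_eq_sum_card_fiberwise (fun q hq => (mem_filter.mp hq).2)
  have heq : ∀ d ∈ D, ((Q.filter (fun q => f q ∈ D)).filter (fun q => f q = d))
      = Q.filter (fun q => f q = d) := by
    intro d hd
    rw [filter_filter]
    apply filter_congr
    intro q _
    constructor
    · intro h; exact h.2
    · intro h; exact ⟨by rw [h]; exact hd, h⟩
  calc 2 * D.card = ∑ _d ∈ D, 2 := by rw [Finset.sum_const, smul_eq_mul, mul_comm]
    _ ≤ ∑ d ∈ D, (Q.filter (fun q => f q = d)).card := Finset.sum_le_sum hD
    _ = (Q.filter (fun q => f q ∈ D)).card := by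
        rw [hfib]
        exact (Finset.sum_congr rfl (fun d hd => congrArg Finset.card (heq d hd))).symm

/-- A non-queen cell on a deficient row and column has a doubled diagonal
    or antidiagonal. -/
lemma sat_step (n : ℕ) (Q : Finset (ℤ × ℤ)) (hno3 : ¬ ThreeInLine Q)
    (hsat : ∀ s ∈ board n, s ∉ Q → ThreeInLine (insert s Q))
    (z : ℤ × ℤ) (hzb : z ∈ board n) (hz : z ∉ Q)
    (hcol : (Q.filter (fun q => q.1 = z.1)).card ≤ 1)
    (hrow : (Q.filter (fun q => q.2 = z.2)).card ≤ 1) :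
    2 ≤ (Q.filter (fun q => q.1 - q.2 = z.1 - z.2)).card ∨
    2 ≤ (Q.filter (fun q => q.1 + q.2 = z.1 + z.2)).card := by
  classical
  obtain ⟨a, ha, b, hb, c, hc, hab, hac, hbc, hline⟩ := hsat z hzb hz
  rw [mem_insert] at ha hb hc
  have two : ∀ (p : ℤ × ℤ → Prop) (_ : DecidablePred p) (q1 q2 : ℤ × ℤ), q1 ∈ Q → q2 ∈ Q →
      q1 ≠ q2 → p q1 → p q2 → 2 ≤ (Q.filter p).card := by
    intro p hp q1 q2 h1 h2 hne hp1 hp2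
    exact Finset.one_lt_card.mpr ⟨q1, mem_filter.mpr ⟨h1, hp1⟩, q2, mem_filter.mpr ⟨h2, hp2⟩, hne⟩
  rcases ha with rfl | haQ
  · rcases hb with rfl | hbQ
    · exact absurd rfl hab
    rcases hc with rfl | hcQ
    · exact absurd rfl hac
    rcases hline with ⟨e1, e2⟩ | ⟨e1, e2⟩ | ⟨e1, e2⟩ | ⟨e1, e2⟩
    · exfalso
      have := two (fun q => q.1 = a.1) (by infer_instance) b c hbQ hcQ hbc (by omega) (by omega)
      omega
    · exfalso
      have := two (fun q => q.2 = a.2) (by infer_instance) b c hbQ hcQ hbc (by omega) (by omega)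
      omega
    · left
      exact two (fun q => q.1 - q.2 = a.1 - a.2) (by infer_instance) b c hbQ hcQ hbc
        (by omega) (by omega)
    · right
      exact two (fun q => q.1 + q.2 = a.1 + a.2) (by infer_instance) b c hbQ hcQ hbc
        (by omega) (by omega)
  · rcases hb with rfl | hbQ
    · rcases hc with rfl | hcQ
      · exact absurd rfl hbc
      rcases hline with ⟨e1, e2⟩ | ⟨e1, e2⟩ | ⟨e1, e2⟩ | ⟨e1, e2⟩
      · exfalso
        have := two (fun q => q.1 = b.1) (by infer_instance) a c haQ hcQ hac (by omega) (by omega)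
        omega
      · exfalso
        have := two (fun q => q.2 = b.2) (by infer_instance) a c haQ hcQ hac (by omega) (by omega)
        omega
      · left
        exact two (fun q => q.1 - q.2 = b.1 - b.2) (by infer_instance) a c haQ hcQ hac
          (by omega) (by omega)
      · right
        exact two (fun q => q.1 + q.2 = b.1 + b.2) (by infer_instance) a c haQ hcQ hac
          (by omega) (by omega)
    · rcases hc with rfl | hcQ
      · rcases hline with ⟨e1, e2⟩ | ⟨e1, e2⟩ | ⟨e1, e2⟩ | ⟨e1, e2⟩
        · exfalso
          have := two (fun q => q.1 = c.1) (by infer_instance) a b haQ hbQ hab (by omega) (by omega)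
          omega
        · exfalso
          have := two (fun q => q.2 = c.2) (by infer_instance) a b haQ hbQ hab (by omega) (by omega)
          omega
        · left
          exact two (fun q => q.1 - q.2 = c.1 - c.2) (by infer_instance) a b haQ hbQ hab
            (by omega) (by omega)
        · right
          exact two (fun q => q.1 + q.2 = c.1 + c.2) (by infer_instance) a b haQ hbQ hab
            (by omega) (by omega)
      · exact absurd ⟨a, haQ, b, hbQ, c, hcQ, hab, hac, hbc, hline⟩ hno3

theorem stmt_3 (k n : ℕ) (hn : n = 4 * k + 2)
    (Q : Finset (ℤ × ℤ)) (hQ : IsGoodPlacement n Q) : n ≤ Q.card := by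
  classical
  obtain ⟨hQb, hno3, hsat⟩ := hQ
  by_contra hlt
  push_neg at hlt
  set m := Q.card with hm
  have hIcc : (Finset.Icc (1 : ℤ) (n : ℤ)).card = n := by
    rw [Int.card_Icc]; omega
  set pairCols := (Finset.Icc (1 : ℤ) (n : ℤ)).filter
      (fun x => 2 ≤ (Q.filter (fun q => q.1 = x)).card) with hpc
  set defCols := (Finset.Icc (1 : ℤ) (n : ℤ)).filter
      (fun x => ¬ 2 ≤ (Q.filter (fun q => q.1 = x)).card) with hdc
  set pairRows := (Finset.Icc (1 : ℤ) (n : ℤ)).filter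
      (fun y => 2 ≤ (Q.filter (fun q => q.2 = y)).card) with hpr
  set defRows := (Finset.Icc (1 : ℤ) (n : ℤ)).filter
      (fun y => ¬ 2 ≤ (Q.filter (fun q => q.2 = y)).card) with hdr
  have hsplitC : pairCols.card + defCols.card = n := by
    rw [hpc, hdc, Finset.card_filter_add_card_filter_not, hIcc]
  have hsplitR : pairRows.card + defRows.card = n := by
    rw [hpr, hdr, Finset.card_filter_add_card_filter_not, hIcc]
  have hpcQ : 2 * pairCols.card ≤ (Q.filter (fun q => q.1 ∈ pairCols)).card :=
    count_pairs Q (fun q => q.1) pairCols (fun d hd => (Finset.mem_filter.mp hd).2)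
  have hprQ : 2 * pairRows.card ≤ (Q.filter (fun q => q.2 ∈ pairRows)).card :=
    count_pairs Q (fun q => q.2) pairRows (fun d hd => (Finset.mem_filter.mp hd).2)
  have hQsplitC : (Q.filter (fun q => q.1 ∈ pairCols)).card
      + (Q.filter (fun q => ¬ q.1 ∈ pairCols)).card = m :=
    Finset.card_filter_add_card_filter_not _
  have hQsplitR : (Q.filter (fun q => q.2 ∈ pairRows)).card
      + (Q.filter (fun q => ¬ q.2 ∈ pairRows)).card = m :=
    Finset.card_filter_add_card_filter_not _
  set M := max pairCols.card pairRows.card with hM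
  have hMn : M ≤ n := by omega
  set t := n - M with ht
  have hdefC : t ≤ defCols.card := by omega
  have hdefR : t ≤ defRows.card := by omega
  obtain ⟨A0, hA0sub, hA0card⟩ := Finset.exists_subset_card_eq hdefC
  obtain ⟨B0, hB0sub, hB0card⟩ := Finset.exists_subset_card_eq hdefR
  obtain ⟨I, hIsub, hIcard, hIs, hId⟩ := bishop t A0 B0 hA0card hB0card
  -- basic facts about cells of I
  have hIboard : ∀ z ∈ I, z ∈ board n := by
    intro z hz
    have h := Finset.mem_product.mp (hIsub hz)
    exact Finset.mem_product.mpr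
      ⟨(Finset.mem_filter.mp (hA0sub h.1)).1, (Finset.mem_filter.mp (hB0sub h.2)).1⟩
  have hIcol : ∀ z ∈ I, (Q.filter (fun q => q.1 = z.1)).card ≤ 1 := by
    intro z hz
    have h := Finset.mem_product.mp (hIsub hz)
    have := (Finset.mem_filter.mp (hA0sub h.1)).2
    omega
  have hIrow : ∀ z ∈ I, (Q.filter (fun q => q.2 = z.2)).card ≤ 1 := by
    intro z hz
    have h := Finset.mem_product.mp (hIsub hz)
    have := (Finset.mem_filter.mp (hB0sub h.2)).2
    omega
  -- classify cells of I
  set Iq := I.filter (fun z => z ∈ Q) with hIq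
  set Ine := I.filter (fun z => ¬ z ∈ Q) with hIne
  have hIqne : Iq.card + Ine.card = I.card :=
    Finset.card_filter_add_card_filter_not _
  set Ind := Ine.filter (fun z => 2 ≤ (Q.filter (fun q => q.1 - q.2 = z.1 - z.2)).card) with hInd
  set Ina := Ine.filter
      (fun z => ¬ 2 ≤ (Q.filter (fun q => q.1 - q.2 = z.1 - z.2)).card) with hIna
  have hInda : Ind.card + Ina.card = Ine.card :=
    Finset.card_filter_add_card_filter_not _
  have hInaA : ∀ z ∈ Ina, 2 ≤ (Q.filter (fun q => q.1 + q.2 = z.1 + z.2)).card := by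
    intro z hz
    rw [hIna, Finset.mem_filter] at hz
    obtain ⟨hzne, hznd⟩ := hz
    rw [hIne, Finset.mem_filter] at hzne
    obtain ⟨hzI, hzQ⟩ := hzne
    rcases sat_step n Q hno3 hsat z (hIboard z hzI) hzQ (hIcol z hzI) (hIrow z hzI) with h | h
    · exact absurd h hznd
    · exact h
  -- pair diagonals and antidiagonals
  set Dall := ((Q.image (fun q => q.1 - q.2)).filter
      (fun d => 2 ≤ (Q.filter (fun q => q.1 - q.2 = d)).card)) with hDall
  set Aall := ((Q.image (fun q => q.1 + q.2)).filter
      (fun s => 2 ≤ (Q.filter (fun q => q.1 + q.2 = s)).card)) with hAall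
  have hIndD : Ind.card ≤ Dall.card := by
    apply Finset.card_le_card_of_injOn (fun z => z.1 - z.2)
    · intro z hz
      rw [Finset.mem_coe, hInd, Finset.mem_filter] at hz
      have h2 := hz.2
      have hne : (Q.filter (fun q => q.1 - q.2 = z.1 - z.2)).Nonempty :=
        Finset.card_pos.mp (by omega)
      obtain ⟨q, hq⟩ := hne
      rw [Finset.mem_filter] at hq
      rw [Finset.mem_coe, hDall, Finset.mem_filter]
      exact ⟨Finset.mem_image.mpr ⟨q, hq.1, hq.2⟩, h2⟩
    · intro z hz w hw he
      have hzI : z ∈ I := (Finset.mem_filter.mp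
        ((Finset.mem_filter.mp hz).1)).1
      have hwI : w ∈ I := (Finset.mem_filter.mp
        ((Finset.mem_filter.mp hw).1)).1
      exact hId z hzI w hwI he
  have hInaAc : Ina.card ≤ Aall.card := by
    apply Finset.card_le_card_of_injOn (fun z => z.1 + z.2)
    · intro z hz
      have h2 := hInaA z hz
      have hne : (Q.filter (fun q => q.1 + q.2 = z.1 + z.2)).Nonempty :=
        Finset.card_pos.mp (by omega)
      obtain ⟨q, hq⟩ := hne
      rw [Finset.mem_filter] at hq
      rw [Finset.mem_coe, hAall, Finset.mem_filter]
      exact ⟨Finset.mem_image.mpr ⟨q, hq.1, hq.2⟩, h2⟩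
    · intro z hz w hw he
      have hzI : z ∈ I := (Finset.mem_filter.mp
        ((Finset.mem_filter.mp hz).1)).1
      have hwI : w ∈ I := (Finset.mem_filter.mp
        ((Finset.mem_filter.mp hw).1)).1
      exact hIs z hzI w hwI he
  -- parity split
  set De := Dall.filter (fun d => d % 2 = 0) with hDe
  set Do := Dall.filter (fun d => ¬ d % 2 = 0) with hDo
  have hDsplit : De.card + Do.card = Dall.card :=
    Finset.card_filter_add_card_filter_not _
  set Ae := Aall.filter (fun s => s % 2 = 0) with hAe
  set Ao := Aall.filter (fun s => ¬ s % 2 = 0) with hAo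
  have hAsplit : Ae.card + Ao.card = Aall.card :=
    Finset.card_filter_add_card_filter_not _
  -- queen colors
  have hQcsplit : (Q.filter (fun q => (q.1 + q.2) % 2 = 0)).card
      + (Q.filter (fun q => ¬ (q.1 + q.2) % 2 = 0)).card = m :=
    Finset.card_filter_add_card_filter_not _
  -- bounds per color
  have hDeB : 2 * De.card ≤ (Q.filter (fun q => (q.1 + q.2) % 2 = 0)).card := by
    have h1 : 2 * De.card ≤ (Q.filter (fun q => (q.1 - q.2) ∈ De)).card := by
      apply count_pairs
      intro d hd
      rw [hDe, Finset.mem_filter] at hd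
      exact (Finset.mem_filter.mp hd.1).2
    refine le_trans h1 (Finset.card_le_card ?_)
    intro q hq
    rw [Finset.mem_filter] at hq ⊢
    refine ⟨hq.1, ?_⟩
    have := (Finset.mem_filter.mp hq.2).2
    omega
  have hDoB : 2 * Do.card ≤ (Q.filter (fun q => ¬ (q.1 + q.2) % 2 = 0)).card := by
    have h1 : 2 * Do.card ≤ (Q.filter (fun q => (q.1 - q.2) ∈ Do)).card := by
      apply count_pairs
      intro d hd
      rw [hDo, Finset.mem_filter] at hd
      exact (Finset.mem_filter.mp hd.1).2
    refine le_trans h1 (Finset.card_le_card ?_)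
    intro q hq
    rw [Finset.mem_filter] at hq ⊢
    refine ⟨hq.1, ?_⟩
    have := (Finset.mem_filter.mp hq.2).2
    omega
  have hAeB : 2 * Ae.card ≤ (Q.filter (fun q => (q.1 + q.2) % 2 = 0)).card := by
    have h1 : 2 * Ae.card ≤ (Q.filter (fun q => (q.1 + q.2) ∈ Ae)).card := by
      apply count_pairs
      intro d hd
      rw [hAe, Finset.mem_filter] at hd
      exact (Finset.mem_filter.mp hd.1).2
    refine le_trans h1 (Finset.card_le_card ?_)
    intro q hq
    rw [Finset.mem_filter] at hq ⊢
    refine ⟨hq.1, ?_⟩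
    have := (Finset.mem_filter.mp hq.2).2
    omega
  have hAoB : 2 * Ao.card ≤ (Q.filter (fun q => ¬ (q.1 + q.2) % 2 = 0)).card := by
    have h1 : 2 * Ao.card ≤ (Q.filter (fun q => (q.1 + q.2) ∈ Ao)).card := by
      apply count_pairs
      intro d hd
      rw [hAo, Finset.mem_filter] at hd
      exact (Finset.mem_filter.mp hd.1).2
    refine le_trans h1 (Finset.card_le_card ?_)
    intro q hq
    rw [Finset.mem_filter] at hq ⊢
    refine ⟨hq.1, ?_⟩
    have := (Finset.mem_filter.mp hq.2).2
    omega
  -- queens of I lie outside pair lines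
  have hIqm : Iq.card + 2 * M ≤ m := by
    rcases max_cases pairCols.card pairRows.card with ⟨hMe, _⟩ | ⟨hMe, _⟩
    · have hsub : Iq ⊆ Q.filter (fun q => ¬ q.1 ∈ pairCols) := by
        intro z hz
        rw [hIq, Finset.mem_filter] at hz
        rw [Finset.mem_filter]
        refine ⟨hz.2, ?_⟩
        have hzA : z.1 ∈ A0 := (Finset.mem_product.mp (hIsub hz.1)).1
        have hdef := (Finset.mem_filter.mp (hA0sub hzA)).2
        intro hc
        rw [hpc, Finset.mem_filter] at hc
        exact hdef hc.2
      have := Finset.card_le_card hsub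
      omega
    · have hsub : Iq ⊆ Q.filter (fun q => ¬ q.2 ∈ pairRows) := by
        intro z hz
        rw [hIq, Finset.mem_filter] at hz
        rw [Finset.mem_filter]
        refine ⟨hz.2, ?_⟩
        have hzB : z.2 ∈ B0 := (Finset.mem_product.mp (hIsub hz.1)).2
        have hdef := (Finset.mem_filter.mp (hB0sub hzB)).2
        intro hc
        rw [hpr, Finset.mem_filter] at hc
        exact hdef hc.2
      have := Finset.card_le_card hsub
      omega
  omega
end

section
/- For every nonnegative integer k, every good placement of queens on the n × n board B_n with n = 4k + 3 has size at least n − 1. -/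
namespace Stmt4Aux

open Finset

/-- number of queens on the `f`-line of value `v` -/
def cnt (Q : Finset (ℤ × ℤ)) (f : ℤ × ℤ → ℤ) (v : ℤ) : ℕ :=
  (Q.filter fun s => f s = v).card

lemma two_le_cnt {Q : Finset (ℤ × ℤ)} {f : ℤ × ℤ → ℤ} {u v : ℤ × ℤ} {w : ℤ}
    (hu : u ∈ Q) (hv : v ∈ Q) (huv : u ≠ v) (h1 : f u = w) (h2 : f v = w) :
    2 ≤ cnt Q f w := by
  have hsub : ({u, v} : Finset (ℤ × ℤ)) ⊆ Q.filter fun s => f s = w := by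
    intro s hs
    simp only [mem_insert, mem_singleton] at hs
    rcases hs with rfl | rfl <;> simp [Finset.mem_filter, hu, hv, h1, h2]
  have h2card : ({u, v} : Finset (ℤ × ℤ)).card = 2 := by
    rw [card_insert_of_notMem (by simp [huv]), card_singleton]
  calc 2 = ({u, v} : Finset (ℤ × ℤ)).card := h2card.symm
    _ ≤ _ := card_le_card hsub

lemma sum_cnt (Q : Finset (ℤ × ℤ)) (f : ℤ × ℤ → ℤ) (S : Finset ℤ)
    (hS : ∀ s ∈ Q, f s ∈ S) : ∑ v ∈ S, cnt Q f v = Q.card :=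
  (Finset.card_eq_sum_card_fiberwise hS).symm

lemma two_mul_card_le (Q : Finset (ℤ × ℤ)) (f : ℤ × ℤ → ℤ) (S : Finset ℤ)
    (hS : ∀ s ∈ Q, f s ∈ S) :
    2 * (S.filter fun v => 2 ≤ cnt Q f v).card ≤ Q.card := by
  calc 2 * (S.filter fun v => 2 ≤ cnt Q f v).card
      = ∑ _v ∈ (S.filter fun v => 2 ≤ cnt Q f v), 2 := by
        rw [Finset.sum_const, smul_eq_mul, mul_comm]
    _ ≤ ∑ v ∈ (S.filter fun v => 2 ≤ cnt Q f v), cnt Q f v :=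
        Finset.sum_le_sum (fun v hv => (Finset.mem_filter.mp hv).2)
    _ ≤ ∑ v ∈ S, cnt Q f v :=
        Finset.sum_le_sum_of_subset (Finset.filter_subset _ _)
    _ = Q.card := sum_cnt Q f S hS

/-- at least `n - m/2`-ish many non-full lines; we only need: if `Q.card + 2 ≤ n`
then the set of non-full line values has at least 2 elements. -/
lemma nonfull_two {n : ℕ} {Q : Finset (ℤ × ℤ)} (f : ℤ × ℤ → ℤ)
    (hS : ∀ s ∈ Q, f s ∈ Finset.Icc (1 : ℤ) n)
    (hm : Q.card + 2 ≤ n) :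
    2 ≤ ((Finset.Icc (1 : ℤ) n).filter fun v => cnt Q f v ≤ 1).card := by
  set S := Finset.Icc (1 : ℤ) n with hSdef
  have hcardS : S.card = n := by
    rw [hSdef, Int.card_Icc]
    omega
  have hsplit : (S.filter fun v => cnt Q f v ≤ 1).card
      + (S.filter fun v => ¬ (cnt Q f v ≤ 1)).card = S.card :=
    Finset.card_filter_add_card_filter_not _
  have hfull : 2 * (S.filter fun v => ¬ (cnt Q f v ≤ 1)).card ≤ Q.card := by
    have : (S.filter fun v => ¬ (cnt Q f v ≤ 1)) = (S.filter fun v => 2 ≤ cnt Q f v) := by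
      apply Finset.filter_congr
      intro v _
      constructor
      · intro h; exact Nat.lt_of_not_le (by simpa using h)
      · intro h; simpa using Nat.not_le.mpr (by omega)
    rw [this]
    exact two_mul_card_le Q f S hS
  omega

lemma cover_exists {n : ℕ} {Q : Finset (ℤ × ℤ)} (hQ : IsGoodPlacement n Q)
    {s : ℤ × ℤ} (hs : s ∈ board n) (hsQ : s ∉ Q) :
    ∃ u ∈ Q, ∃ v ∈ Q, u ≠ v ∧
      ((u.1 = s.1 ∧ v.1 = s.1) ∨ (u.2 = s.2 ∧ v.2 = s.2) ∨
       (u.1 - u.2 = s.1 - s.2 ∧ v.1 - v.2 = s.1 - s.2) ∨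
       (u.1 + u.2 = s.1 + s.2 ∧ v.1 + v.2 = s.1 + s.2)) := by
  obtain ⟨a, ha, b, hb, c, hc, hab, hac, hbc, hline⟩ := hQ.2.2 s hs hsQ
  rcases Finset.mem_insert.mp ha with rfl | haQ
  · -- a = s
    have hbQ : b ∈ Q := by
      rcases Finset.mem_insert.mp hb with rfl | h
      · exact absurd rfl hab
      · exact h
    have hcQ : c ∈ Q := by
      rcases Finset.mem_insert.mp hc with rfl | h
      · exact absurd rfl hac
      · exact h
    refine ⟨b, hbQ, c, hcQ, hbc, ?_⟩
    rcases hline with ⟨h1, h2⟩ | ⟨h1, h2⟩ | ⟨h1, h2⟩ | ⟨h1, h2⟩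
    · exact Or.inl ⟨h1.symm, (h1.trans h2).symm⟩
    · exact Or.inr (Or.inl ⟨h1.symm, (h1.trans h2).symm⟩)
    · exact Or.inr (Or.inr (Or.inl ⟨h1.symm, (h1.trans h2).symm⟩))
    · exact Or.inr (Or.inr (Or.inr ⟨h1.symm, (h1.trans h2).symm⟩))
  rcases Finset.mem_insert.mp hb with rfl | hbQ
  · -- b = s
    have hcQ : c ∈ Q := by
      rcases Finset.mem_insert.mp hc with rfl | h
      · exact absurd rfl hbc
      · exact h
    refine ⟨a, haQ, c, hcQ, hac, ?_⟩
    rcases hline with ⟨h1, h2⟩ | ⟨h1, h2⟩ | ⟨h1, h2⟩ | ⟨h1, h2⟩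
    · exact Or.inl ⟨h1, h2.symm⟩
    · exact Or.inr (Or.inl ⟨h1, h2.symm⟩)
    · exact Or.inr (Or.inr (Or.inl ⟨h1, h2.symm⟩))
    · exact Or.inr (Or.inr (Or.inr ⟨h1, h2.symm⟩))
  rcases Finset.mem_insert.mp hc with rfl | hcQ
  · -- c = s
    refine ⟨a, haQ, b, hbQ, hab, ?_⟩
    rcases hline with ⟨h1, h2⟩ | ⟨h1, h2⟩ | ⟨h1, h2⟩ | ⟨h1, h2⟩
    · exact Or.inl ⟨h1.trans h2, h2⟩
    · exact Or.inr (Or.inl ⟨h1.trans h2, h2⟩)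
    · exact Or.inr (Or.inr (Or.inl ⟨h1.trans h2, h2⟩))
    · exact Or.inr (Or.inr (Or.inr ⟨h1.trans h2, h2⟩))
  · exact absurd ⟨a, haQ, b, hbQ, c, hcQ, hab, hac, hbc, hline⟩ hQ.2.1

lemma core (n k : ℕ) (hn : n = 4 * k + 3) (Q : Finset (ℤ × ℤ))
    (a b : ℤ × ℤ → ℤ) (mk : ℤ → ℤ → ℤ × ℤ)
    (hmka : ∀ x y, a (mk x y) = x) (hmkb : ∀ x y, b (mk x y) = y)
    (hmkboard : ∀ x y : ℤ, 1 ≤ x → x ≤ n → 1 ≤ y → y ≤ n → mk x y ∈ board n)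
    (hrange : ∀ s ∈ Q, (1 ≤ a s ∧ a s ≤ n) ∧ (1 ≤ b s ∧ b s ≤ n))
    (hcover : ∀ s ∈ board n, s ∉ Q → ∃ u ∈ Q, ∃ v ∈ Q, u ≠ v ∧
      ((a u = a s ∧ a v = a s) ∨ (b u = b s ∧ b v = b s) ∨
       (a u - b u = a s - b s ∧ a v - b v = a s - b s) ∨
       (a u + b u = a s + b s ∧ a v + b v = a s + b s)))
    (hm : Q.card + 2 ≤ n)
    (c c' r r' : ℤ)
    (hc1 : 1 ≤ c) (hcn : c ≤ n) (hc'1 : 1 ≤ c') (hc'n : c' ≤ n)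
    (hr1 : 1 ≤ r) (hrn : r ≤ n) (hr'1 : 1 ≤ r') (hr'n : r' ≤ n)
    (hcc' : c ≤ c') (hrr' : r ≤ r')
    (hrnf : cnt Q b r ≤ 1) (hr'nf : cnt Q b r' ≤ 1)
    (hcmin : ∀ v : ℤ, 1 ≤ v → v < c → 2 ≤ cnt Q a v)
    (hcmax : ∀ v : ℤ, c' < v → v ≤ n → 2 ≤ cnt Q a v)
    (hbr : c' - c ≤ r' - r) : False := by
  classical
  set C2 := (Finset.Icc (1 : ℤ) n).filter (fun v => 2 ≤ cnt Q a v) with hC2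
  set D2 := (Finset.Icc (1 - (n : ℤ)) ((n : ℤ) - 1)).filter
      (fun v => 2 ≤ cnt Q (fun s => a s - b s) v) with hD2
  set A2 := (Finset.Icc (2 : ℤ) (2 * (n : ℤ))).filter
      (fun v => 2 ≤ cnt Q (fun s => a s + b s) v) with hA2
  have capC : 2 * C2.card ≤ Q.card := by
    rw [hC2]
    exact two_mul_card_le Q a _ (fun s hs => Finset.mem_Icc.mpr ⟨(hrange s hs).1.1, (hrange s hs).1.2⟩)
  have capD : 2 * D2.card ≤ Q.card := by
    rw [hD2]
    refine two_mul_card_le Q _ _ (fun s hs => Finset.mem_Icc.mpr ?_)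
    have h := hrange s hs
    omega
  have capA : 2 * A2.card ≤ Q.card := by
    rw [hA2]
    refine two_mul_card_le Q _ _ (fun s hs => Finset.mem_Icc.mpr ?_)
    have h := hrange s hs
    omega
  -- the demand inequality for a non-full b-line w
  have demand : ∀ w : ℤ, 1 ≤ w → w ≤ n → cnt Q b w ≤ 1 →
      (Finset.Icc c c').card ≤
        (C2 ∩ Finset.Icc c c').card
        + (D2 ∩ Finset.Icc (c - w) (c' - w)).card
        + (A2 ∩ Finset.Icc (c + w) (c' + w)).card + 1 := by
    intro w hw1 hw2 hwnf
    have hcomp : ((Finset.Icc c c').filter (fun x => mk x w ∈ Q)).card ≤ 1 := by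
      refine le_trans (le_trans (Finset.card_le_card_of_injOn (fun x => mk x w) ?_ ?_) le_rfl) hwnf
      · intro x hx
        rw [Finset.mem_coe, Finset.mem_filter] at hx
        exact Finset.mem_filter.mpr ⟨hx.2, hmkb x w⟩
      · intro x _ y _ hxy
        have := congrArg a hxy
        rwa [hmka, hmka] at this
    have hsplitS : ((Finset.Icc c c').filter (fun x => mk x w ∈ Q)).card
        + ((Finset.Icc c c').filter (fun x => ¬ (mk x w ∈ Q))).card
        = (Finset.Icc c c').card :=
      Finset.card_filter_add_card_filter_not _
    have hsub : ((Finset.Icc c c').filter (fun x => ¬ (mk x w ∈ Q))) ⊆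
        ((C2 ∩ Finset.Icc c c')
          ∪ ((D2 ∩ Finset.Icc (c - w) (c' - w)).image (fun δ => δ + w)))
          ∪ ((A2 ∩ Finset.Icc (c + w) (c' + w)).image (fun σ => σ - w)) := by
      intro x hx
      rw [Finset.mem_filter, Finset.mem_Icc] at hx
      obtain ⟨⟨hxc, hxc'⟩, hxQ⟩ := hx
      have hxb : mk x w ∈ board n := hmkboard x w (by omega) (by omega) hw1 hw2
      obtain ⟨u, hu, v, hv, huv, hcase⟩ := hcover _ hxb hxQ
      rcases hcase with ⟨h1, h2⟩ | ⟨h1, h2⟩ | ⟨h1, h2⟩ | ⟨h1, h2⟩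
      · rw [hmka] at h1 h2
        have hx2 : 2 ≤ cnt Q a x := two_le_cnt hu hv huv h1 h2
        apply Finset.mem_union_left
        apply Finset.mem_union_left
        refine Finset.mem_inter.mpr ⟨?_, Finset.mem_Icc.mpr ⟨hxc, hxc'⟩⟩
        rw [hC2]
        exact Finset.mem_filter.mpr ⟨Finset.mem_Icc.mpr ⟨by omega, by omega⟩, hx2⟩
      · rw [hmkb] at h1 h2
        have : 2 ≤ cnt Q b w := two_le_cnt hu hv huv h1 h2
        omega
      · rw [hmka, hmkb] at h1 h2
        have hd : 2 ≤ cnt Q (fun s => a s - b s) (x - w) := two_le_cnt hu hv huv h1 h2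
        apply Finset.mem_union_left
        apply Finset.mem_union_right
        refine Finset.mem_image.mpr ⟨x - w, ?_, by ring⟩
        refine Finset.mem_inter.mpr ⟨?_, Finset.mem_Icc.mpr ⟨by omega, by omega⟩⟩
        rw [hD2]
        exact Finset.mem_filter.mpr ⟨Finset.mem_Icc.mpr ⟨by omega, by omega⟩, hd⟩
      · rw [hmka, hmkb] at h1 h2
        have hd : 2 ≤ cnt Q (fun s => a s + b s) (x + w) := two_le_cnt hu hv huv h1 h2
        apply Finset.mem_union_right
        refine Finset.mem_image.mpr ⟨x + w, ?_, by ring⟩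
        refine Finset.mem_inter.mpr ⟨?_, Finset.mem_Icc.mpr ⟨by omega, by omega⟩⟩
        rw [hA2]
        exact Finset.mem_filter.mpr ⟨Finset.mem_Icc.mpr ⟨by omega, by omega⟩, hd⟩
    have hcard : ((Finset.Icc c c').filter (fun x => ¬ (mk x w ∈ Q))).card ≤
        (C2 ∩ Finset.Icc c c').card
        + (D2 ∩ Finset.Icc (c - w) (c' - w)).card
        + (A2 ∩ Finset.Icc (c + w) (c' + w)).card := by
      refine le_trans (Finset.card_le_card hsub) ?_
      refine le_trans (Finset.card_union_le _ _) ?_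
      have h1 : ((C2 ∩ Finset.Icc c c')
          ∪ ((D2 ∩ Finset.Icc (c - w) (c' - w)).image (fun δ => δ + w))).card
          ≤ (C2 ∩ Finset.Icc c c').card + (D2 ∩ Finset.Icc (c - w) (c' - w)).card :=
        le_trans (Finset.card_union_le _ _) (by
          exact Nat.add_le_add le_rfl (Finset.card_image_le))
      have h2 : ((A2 ∩ Finset.Icc (c + w) (c' + w)).image (fun σ => σ - w)).card
          ≤ (A2 ∩ Finset.Icc (c + w) (c' + w)).card := Finset.card_image_le
      omega
    omega
  have hpre : (Finset.Icc (1 : ℤ) (c - 1)).card + (C2 ∩ Finset.Icc c c').card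
      + (Finset.Icc (c' + 1) (n : ℤ)).card ≤ C2.card := by
    have hsub : (Finset.Icc (1 : ℤ) (c - 1) ∪ (C2 ∩ Finset.Icc c c'))
        ∪ Finset.Icc (c' + 1) (n : ℤ) ⊆ C2 := by
      intro v hv
      rcases Finset.mem_union.mp hv with hv | hv
      · rcases Finset.mem_union.mp hv with hv | hv
        · rw [Finset.mem_Icc] at hv
          rw [hC2]
          exact Finset.mem_filter.mpr ⟨Finset.mem_Icc.mpr ⟨by omega, by omega⟩,
            hcmin v (by omega) (by omega)⟩
        · exact (Finset.mem_inter.mp hv).1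
      · rw [Finset.mem_Icc] at hv
        rw [hC2]
        exact Finset.mem_filter.mpr ⟨Finset.mem_Icc.mpr ⟨by omega, by omega⟩,
          hcmax v (by omega) (by omega)⟩
    have hd1 : Disjoint (Finset.Icc (1 : ℤ) (c - 1)) (C2 ∩ Finset.Icc c c') := by
      rw [Finset.disjoint_left]
      intro v hv hv'
      rw [Finset.mem_Icc] at hv
      have h2 := Finset.mem_Icc.mp (Finset.mem_inter.mp hv').2
      omega
    have hd2 : Disjoint (Finset.Icc (1 : ℤ) (c - 1) ∪ (C2 ∩ Finset.Icc c c'))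
        (Finset.Icc (c' + 1) (n : ℤ)) := by
      rw [Finset.disjoint_left]
      intro v hv hv'
      rw [Finset.mem_Icc] at hv'
      rcases Finset.mem_union.mp hv with hv | hv
      · rw [Finset.mem_Icc] at hv; omega
      · have h2 := Finset.mem_Icc.mp (Finset.mem_inter.mp hv).2; omega
    calc (Finset.Icc (1 : ℤ) (c - 1)).card + (C2 ∩ Finset.Icc c c').card
        + (Finset.Icc (c' + 1) (n : ℤ)).card
        = ((Finset.Icc (1 : ℤ) (c - 1) ∪ (C2 ∩ Finset.Icc c c'))
            ∪ Finset.Icc (c' + 1) (n : ℤ)).card := by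
          rw [Finset.card_union_of_disjoint hd2, Finset.card_union_of_disjoint hd1]
      _ ≤ C2.card := Finset.card_le_card hsub
  have hovD : (D2 ∩ Finset.Icc (c - r) (c' - r)).card
      + (D2 ∩ Finset.Icc (c - r') (c' - r')).card ≤ D2.card + 1 := by
    have hui := Finset.card_union_add_card_inter (D2 ∩ Finset.Icc (c - r) (c' - r))
      (D2 ∩ Finset.Icc (c - r') (c' - r'))
    have hU : ((D2 ∩ Finset.Icc (c - r) (c' - r)) ∪ (D2 ∩ Finset.Icc (c - r') (c' - r'))).card
        ≤ D2.card := by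
      refine Finset.card_le_card ?_
      intro v hv
      rcases Finset.mem_union.mp hv with h | h
      exacts [(Finset.mem_inter.mp h).1, (Finset.mem_inter.mp h).1]
    have hI : ((D2 ∩ Finset.Icc (c - r) (c' - r)) ∩ (D2 ∩ Finset.Icc (c - r') (c' - r'))).card
        ≤ 1 := by
      have hsub : ((D2 ∩ Finset.Icc (c - r) (c' - r)) ∩ (D2 ∩ Finset.Icc (c - r') (c' - r')))
          ⊆ Finset.Icc (c - r) (c' - r') := by
        intro v hv
        have h1 := Finset.mem_Icc.mp (Finset.mem_inter.mp (Finset.mem_inter.mp hv).1).2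
        have h2 := Finset.mem_Icc.mp (Finset.mem_inter.mp (Finset.mem_inter.mp hv).2).2
        exact Finset.mem_Icc.mpr ⟨h1.1, h2.2⟩
      refine le_trans (Finset.card_le_card hsub) ?_
      rw [Int.card_Icc]
      omega
    omega
  have hovA : (A2 ∩ Finset.Icc (c + r) (c' + r)).card
      + (A2 ∩ Finset.Icc (c + r') (c' + r')).card ≤ A2.card + 1 := by
    have hui := Finset.card_union_add_card_inter (A2 ∩ Finset.Icc (c + r) (c' + r))
      (A2 ∩ Finset.Icc (c + r') (c' + r'))
    have hU : ((A2 ∩ Finset.Icc (c + r) (c' + r)) ∪ (A2 ∩ Finset.Icc (c + r') (c' + r'))).card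
        ≤ A2.card := by
      refine Finset.card_le_card ?_
      intro v hv
      rcases Finset.mem_union.mp hv with h | h
      exacts [(Finset.mem_inter.mp h).1, (Finset.mem_inter.mp h).1]
    have hI : ((A2 ∩ Finset.Icc (c + r) (c' + r)) ∩ (A2 ∩ Finset.Icc (c + r') (c' + r'))).card
        ≤ 1 := by
      have hsub : ((A2 ∩ Finset.Icc (c + r) (c' + r)) ∩ (A2 ∩ Finset.Icc (c + r') (c' + r')))
          ⊆ Finset.Icc (c + r') (c' + r) := by
        intro v hv
        have h1 := Finset.mem_Icc.mp (Finset.mem_inter.mp (Finset.mem_inter.mp hv).1).2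
        have h2 := Finset.mem_Icc.mp (Finset.mem_inter.mp (Finset.mem_inter.mp hv).2).2
        exact Finset.mem_Icc.mpr ⟨h2.1, h1.2⟩
      refine le_trans (Finset.card_le_card hsub) ?_
      rw [Int.card_Icc]
      omega
    omega
  have hd1 := demand r hr1 hrn hrnf
  have hd2 := demand r' hr'1 hr'n hr'nf
  have hLcc : (Finset.Icc c c').card = (c' + 1 - c).toNat := Int.card_Icc _ _
  have hpre1 : (Finset.Icc (1 : ℤ) (c - 1)).card = (c - 1 + 1 - 1).toNat := Int.card_Icc _ _
  have hpre2 : (Finset.Icc (c' + 1) (n : ℤ)).card = ((n : ℤ) + 1 - (c' + 1)).toNat :=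
    Int.card_Icc _ _
  omega

end Stmt4Aux

theorem stmt_4 (k n : ℕ) (hn : n = 4 * k + 3)
    (Q : Finset (ℤ × ℤ)) (hQ : IsGoodPlacement n Q) : n - 1 ≤ Q.card := by
  classical
  open Stmt4Aux in
  by_contra hcon
  push_neg at hcon
  have hm : Q.card + 2 ≤ n := by omega
  have hrange : ∀ s ∈ Q, (1 ≤ s.1 ∧ s.1 ≤ (n : ℤ)) ∧ (1 ≤ s.2 ∧ s.2 ≤ (n : ℤ)) := by
    intro s hs
    have hb := hQ.1 hs
    rw [board, Finset.mem_product, Finset.mem_Icc, Finset.mem_Icc] at hb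
    exact hb
  have hmkboard : ∀ x y : ℤ, 1 ≤ x → x ≤ (n : ℤ) → 1 ≤ y → y ≤ (n : ℤ) →
      ((x, y) : ℤ × ℤ) ∈ board n := by
    intro x y h1 h2 h3 h4
    rw [board, Finset.mem_product, Finset.mem_Icc, Finset.mem_Icc]
    exact ⟨⟨h1, h2⟩, ⟨h3, h4⟩⟩
  -- non-full column values
  set NFa := (Finset.Icc (1 : ℤ) n).filter (fun v => cnt Q (fun s => s.1) v ≤ 1) with hNFa
  set NFb := (Finset.Icc (1 : ℤ) n).filter (fun v => cnt Q (fun s => s.2) v ≤ 1) with hNFb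
  have h2a : 2 ≤ NFa.card := by
    rw [hNFa]
    exact nonfull_two _ (fun s hs => Finset.mem_Icc.mpr (hrange s hs).1) hm
  have h2b : 2 ≤ NFb.card := by
    rw [hNFb]
    exact nonfull_two _ (fun s hs => Finset.mem_Icc.mpr (hrange s hs).2) hm
  have hnea : NFa.Nonempty := Finset.card_pos.mp (by omega)
  have hneb : NFb.Nonempty := Finset.card_pos.mp (by omega)
  set c := NFa.min' hnea with hc
  set c' := NFa.max' hnea with hc'
  set r := NFb.min' hneb with hr
  set r' := NFb.max' hneb with hr'
  have hcmem : c ∈ NFa := NFa.min'_mem hnea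
  have hc'mem : c' ∈ NFa := NFa.max'_mem hnea
  have hrmem : r ∈ NFb := NFb.min'_mem hneb
  have hr'mem : r' ∈ NFb := NFb.max'_mem hneb
  rw [hNFa, Finset.mem_filter, Finset.mem_Icc] at hcmem hc'mem
  rw [hNFb, Finset.mem_filter, Finset.mem_Icc] at hrmem hr'mem
  have hcc' : c ≤ c' := NFa.min'_le _ (NFa.max'_mem hnea)
  have hrr' : r ≤ r' := NFb.min'_le _ (NFb.max'_mem hneb)
  have hcmin : ∀ v : ℤ, 1 ≤ v → v < c → 2 ≤ cnt Q (fun s => s.1) v := by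
    intro v h1 h2
    by_contra hcnt
    push_neg at hcnt
    have hv : v ∈ NFa := by
      rw [hNFa, Finset.mem_filter, Finset.mem_Icc]
      exact ⟨⟨h1, by omega⟩, by omega⟩
    have := NFa.min'_le _ hv
    omega
  have hcmax : ∀ v : ℤ, c' < v → v ≤ (n : ℤ) → 2 ≤ cnt Q (fun s => s.1) v := by
    intro v h1 h2
    by_contra hcnt
    push_neg at hcnt
    have hv : v ∈ NFa := by
      rw [hNFa, Finset.mem_filter, Finset.mem_Icc]
      exact ⟨⟨by omega, h2⟩, by omega⟩
    have := NFa.le_max' _ hv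
    omega
  have hrmin : ∀ v : ℤ, 1 ≤ v → v < r → 2 ≤ cnt Q (fun s => s.2) v := by
    intro v h1 h2
    by_contra hcnt
    push_neg at hcnt
    have hv : v ∈ NFb := by
      rw [hNFb, Finset.mem_filter, Finset.mem_Icc]
      exact ⟨⟨h1, by omega⟩, by omega⟩
    have := NFb.min'_le _ hv
    omega
  have hrmax : ∀ v : ℤ, r' < v → v ≤ (n : ℤ) → 2 ≤ cnt Q (fun s => s.2) v := by
    intro v h1 h2
    by_contra hcnt
    push_neg at hcnt
    have hv : v ∈ NFb := by
      rw [hNFb, Finset.mem_filter, Finset.mem_Icc]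
      exact ⟨⟨by omega, h2⟩, by omega⟩
    have := NFb.le_max' _ hv
    omega
  rcases le_total (c' - c) (r' - r) with hbr | hbr
  · exact Stmt4Aux.core n k hn Q (fun s => s.1) (fun s => s.2) (fun x y => (x, y))
      (fun _ _ => rfl) (fun _ _ => rfl) hmkboard hrange
      (fun s hs hsQ => Stmt4Aux.cover_exists hQ hs hsQ) hm
      c c' r r' hcmem.1.1 hcmem.1.2 hc'mem.1.1 hc'mem.1.2
      hrmem.1.1 hrmem.1.2 hr'mem.1.1 hr'mem.1.2 hcc' hrr'
      hrmem.2 hr'mem.2 hcmin hcmax hbr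
  · have hcover2 : ∀ s ∈ board n, s ∉ Q → ∃ u ∈ Q, ∃ v ∈ Q, u ≠ v ∧
        ((u.2 = s.2 ∧ v.2 = s.2) ∨ (u.1 = s.1 ∧ v.1 = s.1) ∨
         (u.2 - u.1 = s.2 - s.1 ∧ v.2 - v.1 = s.2 - s.1) ∨
         (u.2 + u.1 = s.2 + s.1 ∧ v.2 + v.1 = s.2 + s.1)) := by
      intro s hs hsQ
      obtain ⟨u, hu, v, hv, huv, hcse⟩ := Stmt4Aux.cover_exists hQ hs hsQ
      refine ⟨u, hu, v, hv, huv, ?_⟩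
      rcases hcse with ⟨h1, h2⟩ | ⟨h1, h2⟩ | ⟨h1, h2⟩ | ⟨h1, h2⟩
      · exact Or.inr (Or.inl ⟨h1, h2⟩)
      · exact Or.inl ⟨h1, h2⟩
      · exact Or.inr (Or.inr (Or.inl ⟨by omega, by omega⟩))
      · exact Or.inr (Or.inr (Or.inr ⟨by omega, by omega⟩))
    exact Stmt4Aux.core n k hn Q (fun s => s.2) (fun s => s.1) (fun x y => (y, x))
      (fun _ _ => rfl) (fun _ _ => rfl)
      (fun x y h1 h2 h3 h4 => hmkboard y x h3 h4 h1 h2)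
      (fun s hs => ⟨(hrange s hs).2, (hrange s hs).1⟩)
      hcover2 hm
      r r' c c' hrmem.1.1 hrmem.1.2 hr'mem.1.1 hr'mem.1.2
      hcmem.1.1 hcmem.1.2 hc'mem.1.1 hc'mem.1.2 hrr' hcc'
      hcmem.2 hc'mem.2 hrmin hrmax hbr
end

section
/- For every integer n ≥ 1, every good placement of queens on the n × n board B_n has size at least n − 1. -/
/-- The fiber of a line-coordinate function over a placement. -/
def stmt5fib (Q : Finset (ℤ × ℤ)) (g : ℤ × ℤ → ℤ) (v : ℤ) : Finset (ℤ × ℤ) :=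
  Q.filter (fun p => g p = v)

lemma stmt5_sum_fib_le (Q : Finset (ℤ × ℤ)) (g : ℤ × ℤ → ℤ) (S : Finset ℤ) :
    ∑ v ∈ S, (stmt5fib Q g v).card ≤ Q.card := by
  classical
  have hdisj : ∀ x ∈ S, ∀ y ∈ S, x ≠ y → Disjoint (stmt5fib Q g x) (stmt5fib Q g y) := by
    intro x _ y _ hxy
    rw [Finset.disjoint_left]
    intro p hpx hpy
    exact hxy ((Finset.mem_filter.mp hpx).2.symm.trans (Finset.mem_filter.mp hpy).2)
  rw [← Finset.card_biUnion hdisj]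
  apply Finset.card_le_card
  intro p hp
  rw [Finset.mem_biUnion] at hp
  obtain ⟨v, _, hv⟩ := hp
  exact (Finset.mem_filter.mp hv).1

lemma stmt5_fib_le_two (Q : Finset (ℤ × ℤ)) (hno3 : ¬ ThreeInLine Q) (g : ℤ × ℤ → ℤ)
    (hg : ∀ a b c : ℤ × ℤ, g a = g b → g b = g c →
      ((a.1 = b.1 ∧ b.1 = c.1) ∨ (a.2 = b.2 ∧ b.2 = c.2) ∨
       (a.1 - a.2 = b.1 - b.2 ∧ b.1 - b.2 = c.1 - c.2) ∨
       (a.1 + a.2 = b.1 + b.2 ∧ b.1 + b.2 = c.1 + c.2)))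
    (v : ℤ) : (stmt5fib Q g v).card ≤ 2 := by
  by_contra h
  push_neg at h
  obtain ⟨a, b, c, ha, hb, hc, hab, hac, hbc⟩ := Finset.two_lt_card_iff.mp h
  rw [stmt5fib, Finset.mem_filter] at ha hb hc
  exact hno3 ⟨a, ha.1, b, hb.1, c, hc.1, hab, hac, hbc,
    hg a b c (ha.2.trans hb.2.symm) (hb.2.trans hc.2.symm)⟩

lemma stmt5_cover_aux (Q : Finset (ℤ × ℤ)) (g : ℤ × ℤ → ℤ) (p a b c : ℤ × ℤ)
    (ha : a ∈ insert p Q) (hb : b ∈ insert p Q) (hc : c ∈ insert p Q)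
    (hab : a ≠ b) (hac : a ≠ c) (hbc : b ≠ c)
    (h1 : g a = g b) (h2 : g b = g c)
    (hall : ¬(a ∈ Q ∧ b ∈ Q ∧ c ∈ Q)) :
    2 ≤ (stmt5fib Q g (g p)).card := by
  rw [Finset.mem_insert] at ha hb hc
  have key : ∃ u v : ℤ × ℤ, u ∈ Q ∧ v ∈ Q ∧ u ≠ v ∧ g u = g p ∧ g v = g p := by
    rcases ha with rfl | haQ
    · have hbQ : b ∈ Q := hb.resolve_left (fun h => hab h.symm)
      have hcQ : c ∈ Q := hc.resolve_left (fun h => hac h.symm)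
      exact ⟨b, c, hbQ, hcQ, hbc, h1.symm, (h1.trans h2).symm⟩
    · rcases hb with rfl | hbQ
      · have hcQ : c ∈ Q := hc.resolve_left (fun h => hbc h.symm)
        exact ⟨a, c, haQ, hcQ, hac, h1, h2.symm⟩
      · rcases hc with rfl | hcQ
        · exact ⟨a, b, haQ, hbQ, hab, h1.trans h2, h2⟩
        · exact absurd ⟨haQ, hbQ, hcQ⟩ hall
  obtain ⟨u, v, hu, hv, huv, hup, hvp⟩ := key
  have h1lt : 1 < (stmt5fib Q g (g p)).card :=
    Finset.one_lt_card.mpr ⟨u, Finset.mem_filter.mpr ⟨hu, hup⟩,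
      v, Finset.mem_filter.mpr ⟨hv, hvp⟩, huv⟩
  omega

theorem stmt_5 (n : ℕ) (hn : 1 ≤ n)
    (Q : Finset (ℤ × ℤ)) (hQ : IsGoodPlacement n Q) : n - 1 ≤ Q.card := by
  classical
  obtain ⟨hsub, hno3, hsat⟩ := hQ
  set g1 : ℤ × ℤ → ℤ := fun p => p.1 with hg1def
  set g2 : ℤ × ℤ → ℤ := fun p => p.2 with hg2def
  set g3 : ℤ × ℤ → ℤ := fun p => p.1 - p.2 with hg3def
  set g4 : ℤ × ℤ → ℤ := fun p => p.1 + p.2 with hg4def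
  have hF1le : ∀ v, (stmt5fib Q g1 v).card ≤ 2 :=
    stmt5_fib_le_two Q hno3 g1 (fun a b c h1 h2 => Or.inl ⟨h1, h2⟩)
  have hF2le : ∀ v, (stmt5fib Q g2 v).card ≤ 2 :=
    stmt5_fib_le_two Q hno3 g2 (fun a b c h1 h2 => Or.inr (Or.inl ⟨h1, h2⟩))
  -- the cover property
  have hcov : ∀ p : ℤ × ℤ, p ∈ board n → p ∉ Q →
      2 ≤ (stmt5fib Q g1 (g1 p)).card ∨ 2 ≤ (stmt5fib Q g2 (g2 p)).card ∨
      2 ≤ (stmt5fib Q g3 (g3 p)).card ∨ 2 ≤ (stmt5fib Q g4 (g4 p)).card := by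
    intro p hpb hpQ
    obtain ⟨a, ha, b, hb, c, hc, hab, hac, hbc, hline⟩ := hsat p hpb hpQ
    rcases hline with h | h | h | h
    · exact Or.inl (stmt5_cover_aux Q g1 p a b c ha hb hc hab hac hbc h.1 h.2
        (fun ⟨hA, hB, hC⟩ => hno3 ⟨a, hA, b, hB, c, hC, hab, hac, hbc, Or.inl h⟩))
    · exact Or.inr (Or.inl (stmt5_cover_aux Q g2 p a b c ha hb hc hab hac hbc h.1 h.2
        (fun ⟨hA, hB, hC⟩ => hno3 ⟨a, hA, b, hB, c, hC, hab, hac, hbc, Or.inr (Or.inl h)⟩)))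
    · exact Or.inr (Or.inr (Or.inl (stmt5_cover_aux Q g3 p a b c ha hb hc hab hac hbc h.1 h.2
        (fun ⟨hA, hB, hC⟩ => hno3 ⟨a, hA, b, hB, c, hC, hab, hac, hbc, Or.inr (Or.inr (Or.inl h))⟩))))
    · exact Or.inr (Or.inr (Or.inr (stmt5_cover_aux Q g4 p a b c ha hb hc hab hac hbc h.1 h.2
        (fun ⟨hA, hB, hC⟩ => hno3 ⟨a, hA, b, hB, c, hC, hab, hac, hbc, Or.inr (Or.inr (Or.inr h))⟩))))
  -- columns/rows with at most one queen
  set C1 : Finset ℤ := (Finset.Icc (1 : ℤ) n).filter (fun v => (stmt5fib Q g1 v).card ≤ 1) with hC1def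
  set R1 : Finset ℤ := (Finset.Icc (1 : ℤ) n).filter (fun v => (stmt5fib Q g2 v).card ≤ 1) with hR1def
  have hIccCard : (Finset.Icc (1 : ℤ) n).card = n := by
    rw [Int.card_Icc]
    simp
  -- if few non-doubled columns (or rows), Q is big
  have hbig : ∀ (g : ℤ × ℤ → ℤ) (T : Finset ℤ), T = (Finset.Icc (1 : ℤ) n).filter
      (fun v => (stmt5fib Q g v).card ≤ 1) → T.card ≤ 1 → n - 1 ≤ Q.card := by
    intro g T hT hTcard
    set Sbad := (Finset.Icc (1 : ℤ) n).filter (fun v => 2 ≤ (stmt5fib Q g v).card) with hSbad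
    have hsum := stmt5_sum_fib_le Q g Sbad
    have hlow : 2 * Sbad.card ≤ ∑ v ∈ Sbad, (stmt5fib Q g v).card := by
      have := Finset.card_nsmul_le_sum Sbad (fun v => (stmt5fib Q g v).card) 2
        (fun x hx => (Finset.mem_filter.mp hx).2)
      simpa [mul_comm] using this
    have hcover : Finset.Icc (1 : ℤ) n ⊆ T ∪ Sbad := by
      intro v hv
      rw [Finset.mem_union, hT, hSbad, Finset.mem_filter, Finset.mem_filter]
      by_cases h : (stmt5fib Q g v).card ≤ 1
      · exact Or.inl ⟨hv, h⟩
      · exact Or.inr ⟨hv, by omega⟩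
    have hcard := (Finset.card_le_card hcover).trans (Finset.card_union_le T Sbad)
    rw [hIccCard] at hcard
    omega
  by_cases hC1small : C1.card ≤ 1
  · exact hbig g1 C1 hC1def hC1small
  by_cases hR1small : R1.card ≤ 1
  · exact hbig g2 R1 hR1def hR1small
  push_neg at hC1small hR1small
  have hC1ne : C1.Nonempty := Finset.card_pos.mp (by omega)
  have hR1ne : R1.Nonempty := Finset.card_pos.mp (by omega)
  set cL := C1.min' hC1ne with hcLdef
  set cR := C1.max' hC1ne with hcRdef
  set rB := R1.min' hR1ne with hrBdef
  set rT := R1.max' hR1ne with hrTdef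
  have hcLcR : cL < cR := Finset.min'_lt_max'_of_card C1 hC1small
  have hrBrT : rB < rT := Finset.min'_lt_max'_of_card R1 hR1small
  have hC1spec : ∀ v ∈ C1, (1 ≤ v ∧ v ≤ (n : ℤ)) ∧ (stmt5fib Q g1 v).card ≤ 1 := by
    intro v hv
    rw [hC1def, Finset.mem_filter, Finset.mem_Icc] at hv
    exact hv
  have hR1spec : ∀ v ∈ R1, (1 ≤ v ∧ v ≤ (n : ℤ)) ∧ (stmt5fib Q g2 v).card ≤ 1 := by
    intro v hv
    rw [hR1def, Finset.mem_filter, Finset.mem_Icc] at hv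
    exact hv
  obtain ⟨⟨hcL1, hcLn⟩, hcLfib⟩ := hC1spec _ (C1.min'_mem hC1ne)
  obtain ⟨⟨hcR1, hcRn⟩, hcRfib⟩ := hC1spec _ (C1.max'_mem hC1ne)
  obtain ⟨⟨hrB1, hrBn⟩, hrBfib⟩ := hR1spec _ (R1.min'_mem hR1ne)
  obtain ⟨⟨hrT1, hrTn⟩, hrTfib⟩ := hR1spec _ (R1.max'_mem hR1ne)
  rw [← hcLdef] at hcL1 hcLn hcLfib
  rw [← hcRdef] at hcR1 hcRn hcRfib
  rw [← hrBdef] at hrB1 hrBn hrBfib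
  rw [← hrTdef] at hrT1 hrTn hrTfib
  -- columns outside [cL, cR] are doubled, same for rows
  have houtc : ∀ v : ℤ, 1 ≤ v → v ≤ n → ¬(cL ≤ v ∧ v ≤ cR) → 2 ≤ (stmt5fib Q g1 v).card := by
    intro v h1 h2 h3
    by_contra h
    push_neg at h
    have hv : v ∈ C1 := by
      rw [hC1def, Finset.mem_filter, Finset.mem_Icc]
      exact ⟨⟨h1, h2⟩, by omega⟩
    exact h3 ⟨C1.min'_le v hv, C1.le_max' v hv⟩
  have houtr : ∀ v : ℤ, 1 ≤ v → v ≤ n → ¬(rB ≤ v ∧ v ≤ rT) → 2 ≤ (stmt5fib Q g2 v).card := by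
    intro v h1 h2 h3
    by_contra h
    push_neg at h
    have hv : v ∈ R1 := by
      rw [hR1def, Finset.mem_filter, Finset.mem_Icc]
      exact ⟨⟨h1, h2⟩, by omega⟩
    exact h3 ⟨R1.min'_le v hv, R1.le_max' v hv⟩
  -- the border of the rectangle [cL,cR] × [rB,rT]
  set border : Finset (ℤ × ℤ) :=
    (({cL, cR} : Finset ℤ) ×ˢ Finset.Icc rB rT) ∪ (Finset.Icc cL cR ×ˢ ({rB, rT} : Finset ℤ))
    with hborderdef
  have hmemB : ∀ x y : ℤ, (x, y) ∈ border →
      cL ≤ x ∧ x ≤ cR ∧ rB ≤ y ∧ y ≤ rT ∧ (x = cL ∨ x = cR ∨ y = rB ∨ y = rT) := by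
    intro x y h
    rw [hborderdef] at h
    simp only [Finset.mem_union, Finset.mem_product, Finset.mem_insert, Finset.mem_singleton,
      Finset.mem_Icc] at h
    omega
  -- doubled lines
  set L1 : Finset ℤ := (Finset.Ioo cL cR).filter (fun v => 2 ≤ (stmt5fib Q g1 v).card) with hL1def
  set L2 : Finset ℤ := (Finset.Ioo rB rT).filter (fun v => 2 ≤ (stmt5fib Q g2 v).card) with hL2def
  set L3 : Finset ℤ := (Q.image g3).filter (fun v => 2 ≤ (stmt5fib Q g3 v).card) with hL3def
  set L4 : Finset ℤ := (Q.image g4).filter (fun v => 2 ≤ (stmt5fib Q g4 v).card) with hL4def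
  -- per-line bounds on border cells
  have hpair2 : ∀ (a b : ℤ × ℤ), (({a, b} : Finset (ℤ × ℤ))).card ≤ 2 := by
    intro a b
    exact (Finset.card_insert_le _ _).trans (by simp)
  have hpl1 : ∀ v ∈ L1, (border.filter (fun p => g1 p = v)).card ≤ 2 := by
    intro v hv
    rw [hL1def, Finset.mem_filter, Finset.mem_Ioo] at hv
    have hsub : border.filter (fun p => g1 p = v) ⊆ {(v, rB), (v, rT)} := by
      intro p hp
      obtain ⟨x, y⟩ := p
      rw [Finset.mem_filter] at hp
      have hm := hmemB x y hp.1
      have hxv : x = v := hp.2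
      simp only [Finset.mem_insert, Finset.mem_singleton, Prod.mk.injEq]
      omega
    exact (Finset.card_le_card hsub).trans (hpair2 _ _)
  have hpl2 : ∀ v ∈ L2, (border.filter (fun p => g2 p = v)).card ≤ 2 := by
    intro v hv
    rw [hL2def, Finset.mem_filter, Finset.mem_Ioo] at hv
    have hsub : border.filter (fun p => g2 p = v) ⊆ {(cL, v), (cR, v)} := by
      intro p hp
      obtain ⟨x, y⟩ := p
      rw [Finset.mem_filter] at hp
      have hm := hmemB x y hp.1
      have hyv : y = v := hp.2
      simp only [Finset.mem_insert, Finset.mem_singleton, Prod.mk.injEq]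
      omega
    exact (Finset.card_le_card hsub).trans (hpair2 _ _)
  have hpl3 : ∀ v : ℤ, (border.filter (fun p => g3 p = v)).card ≤ 2 := by
    intro v
    have hsub : border.filter (fun p => g3 p = v) ⊆
        {(max cL (rB + v), max cL (rB + v) - v), (min cR (rT + v), min cR (rT + v) - v)} := by
      intro p hp
      obtain ⟨x, y⟩ := p
      rw [Finset.mem_filter] at hp
      have hm := hmemB x y hp.1
      have hxy : x - y = v := hp.2
      have h1 := le_max_left cL (rB + v)
      have h2 := le_max_right cL (rB + v)
      have h3 := max_choice cL (rB + v)
      have h4 := min_le_left cR (rT + v)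
      have h5 := min_le_right cR (rT + v)
      have h6 := min_choice cR (rT + v)
      simp only [Finset.mem_insert, Finset.mem_singleton, Prod.mk.injEq]
      omega
    exact (Finset.card_le_card hsub).trans (hpair2 _ _)
  have hpl4 : ∀ v : ℤ, (border.filter (fun p => g4 p = v)).card ≤ 2 := by
    intro v
    have hsub : border.filter (fun p => g4 p = v) ⊆
        {(max cL (v - rT), v - max cL (v - rT)), (min cR (v - rB), v - min cR (v - rB))} := by
      intro p hp
      obtain ⟨x, y⟩ := p
      rw [Finset.mem_filter] at hp
      have hm := hmemB x y hp.1
      have hxy : x + y = v := hp.2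
      have h1 := le_max_left cL (v - rT)
      have h2 := le_max_right cL (v - rT)
      have h3 := max_choice cL (v - rT)
      have h4 := min_le_left cR (v - rB)
      have h5 := min_le_right cR (v - rB)
      have h6 := min_choice cR (v - rB)
      simp only [Finset.mem_insert, Finset.mem_singleton, Prod.mk.injEq]
      omega
    exact (Finset.card_le_card hsub).trans (hpair2 _ _)
  -- E5 : border minus queens is covered by doubled lines
  have hcovB : border \ Q ⊆
      (L1.biUnion (fun v => border.filter (fun p => g1 p = v))) ∪
      (L2.biUnion (fun v => border.filter (fun p => g2 p = v))) ∪
      (L3.biUnion (fun v => border.filter (fun p => g3 p = v))) ∪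
      (L4.biUnion (fun v => border.filter (fun p => g4 p = v))) := by
    intro p hp
    rw [Finset.mem_sdiff] at hp
    obtain ⟨hpb, hpQ⟩ := hp
    obtain ⟨x, y⟩ := p
    have hm := hmemB x y hpb
    have hpboard : ((x, y) : ℤ × ℤ) ∈ board n := by
      rw [board, Finset.mem_product, Finset.mem_Icc, Finset.mem_Icc]
      constructor
      · constructor <;> [skip; skip] <;> simp only [] <;> omega
      · constructor <;> simp only [] <;> omega
    rcases hcov (x, y) hpboard hpQ with h | h | h | h
    · replace h : 2 ≤ (stmt5fib Q g1 x).card := h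
      apply Finset.mem_union_left
      apply Finset.mem_union_left
      apply Finset.mem_union_left
      rw [Finset.mem_biUnion]
      refine ⟨x, ?_, Finset.mem_filter.mpr ⟨hpb, rfl⟩⟩
      rw [hL1def, Finset.mem_filter, Finset.mem_Ioo]
      have hxL : x ≠ cL := by
        intro hx
        rw [hx] at h
        omega
      have hxR : x ≠ cR := by
        intro hx
        rw [hx] at h
        omega
      exact ⟨⟨by omega, by omega⟩, h⟩
    · replace h : 2 ≤ (stmt5fib Q g2 y).card := h
      apply Finset.mem_union_left
      apply Finset.mem_union_left
      apply Finset.mem_union_right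
      rw [Finset.mem_biUnion]
      refine ⟨y, ?_, Finset.mem_filter.mpr ⟨hpb, rfl⟩⟩
      rw [hL2def, Finset.mem_filter, Finset.mem_Ioo]
      have hyB : y ≠ rB := by
        intro hy
        rw [hy] at h
        omega
      have hyT : y ≠ rT := by
        intro hy
        rw [hy] at h
        omega
      exact ⟨⟨by omega, by omega⟩, h⟩
    · apply Finset.mem_union_left
      apply Finset.mem_union_right
      rw [Finset.mem_biUnion]
      refine ⟨g3 (x, y), ?_, Finset.mem_filter.mpr ⟨hpb, rfl⟩⟩
      rw [hL3def, Finset.mem_filter]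
      refine ⟨?_, h⟩
      have hne : (stmt5fib Q g3 (g3 (x, y))).Nonempty := Finset.card_pos.mp (by omega)
      obtain ⟨u, hu⟩ := hne
      rw [stmt5fib, Finset.mem_filter] at hu
      exact Finset.mem_image.mpr ⟨u, hu.1, hu.2⟩
    · apply Finset.mem_union_right
      rw [Finset.mem_biUnion]
      refine ⟨g4 (x, y), ?_, Finset.mem_filter.mpr ⟨hpb, rfl⟩⟩
      rw [hL4def, Finset.mem_filter]
      refine ⟨?_, h⟩
      have hne : (stmt5fib Q g4 (g4 (x, y))).Nonempty := Finset.card_pos.mp (by omega)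
      obtain ⟨u, hu⟩ := hne
      rw [stmt5fib, Finset.mem_filter] at hu
      exact Finset.mem_image.mpr ⟨u, hu.1, hu.2⟩
  have hE5 : (border \ Q).card ≤ 2 * L1.card + 2 * L2.card + 2 * L3.card + 2 * L4.card := by
    have h0 := Finset.card_le_card hcovB
    have hb1 : (L1.biUnion (fun v => border.filter (fun p => g1 p = v))).card ≤ 2 * L1.card := by
      refine (Finset.card_biUnion_le).trans ?_
      have := Finset.sum_le_card_nsmul L1 (fun v => (border.filter (fun p => g1 p = v)).card) 2 hpl1
      simpa [mul_comm] using this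
    have hb2 : (L2.biUnion (fun v => border.filter (fun p => g2 p = v))).card ≤ 2 * L2.card := by
      refine (Finset.card_biUnion_le).trans ?_
      have := Finset.sum_le_card_nsmul L2 (fun v => (border.filter (fun p => g2 p = v)).card) 2 hpl2
      simpa [mul_comm] using this
    have hb3 : (L3.biUnion (fun v => border.filter (fun p => g3 p = v))).card ≤ 2 * L3.card := by
      refine (Finset.card_biUnion_le).trans ?_
      have := Finset.sum_le_card_nsmul L3 (fun v => (border.filter (fun p => g3 p = v)).card) 2
        (fun v _ => hpl3 v)
      simpa [mul_comm] using this
    have hb4 : (L4.biUnion (fun v => border.filter (fun p => g4 p = v))).card ≤ 2 * L4.card := by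
      refine (Finset.card_biUnion_le).trans ?_
      have := Finset.sum_le_card_nsmul L4 (fun v => (border.filter (fun p => g4 p = v)).card) 2
        (fun v _ => hpl4 v)
      simpa [mul_comm] using this
    have hu1 := Finset.card_union_le
      ((L1.biUnion (fun v => border.filter (fun p => g1 p = v))) ∪
       (L2.biUnion (fun v => border.filter (fun p => g2 p = v))) ∪
       (L3.biUnion (fun v => border.filter (fun p => g3 p = v))))
      (L4.biUnion (fun v => border.filter (fun p => g4 p = v)))
    have hu2 := Finset.card_union_le
      ((L1.biUnion (fun v => border.filter (fun p => g1 p = v))) ∪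
       (L2.biUnion (fun v => border.filter (fun p => g2 p = v))))
      (L3.biUnion (fun v => border.filter (fun p => g3 p = v)))
    have hu3 := Finset.card_union_le
      (L1.biUnion (fun v => border.filter (fun p => g1 p = v)))
      (L2.biUnion (fun v => border.filter (fun p => g2 p = v)))
    omega
  -- E6 : border queens are in the four extreme lines
  have hE6 : (border ∩ Q).card ≤ (stmt5fib Q g1 cL).card + (stmt5fib Q g1 cR).card +
      (stmt5fib Q g2 rB).card + (stmt5fib Q g2 rT).card := by
    have hsub : border ∩ Q ⊆ (stmt5fib Q g1 cL ∪ stmt5fib Q g1 cR) ∪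
        (stmt5fib Q g2 rB ∪ stmt5fib Q g2 rT) := by
      intro p hp
      rw [Finset.mem_inter] at hp
      obtain ⟨x, y⟩ := p
      have hm := hmemB x y hp.1
      have hQ' := hp.2
      rcases hm.2.2.2.2 with h | h | h | h
      · exact Finset.mem_union_left _ (Finset.mem_union_left _
          (Finset.mem_filter.mpr ⟨hQ', h⟩))
      · exact Finset.mem_union_left _ (Finset.mem_union_right _
          (Finset.mem_filter.mpr ⟨hQ', h⟩))
      · exact Finset.mem_union_right _ (Finset.mem_union_left _
          (Finset.mem_filter.mpr ⟨hQ', h⟩))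
      · exact Finset.mem_union_right _ (Finset.mem_union_right _
          (Finset.mem_filter.mpr ⟨hQ', h⟩))
    have h0 := Finset.card_le_card hsub
    have hu1 := Finset.card_union_le (stmt5fib Q g1 cL ∪ stmt5fib Q g1 cR)
      (stmt5fib Q g2 rB ∪ stmt5fib Q g2 rT)
    have hu2 := Finset.card_union_le (stmt5fib Q g1 cL) (stmt5fib Q g1 cR)
    have hu3 := Finset.card_union_le (stmt5fib Q g2 rB) (stmt5fib Q g2 rT)
    omega
  -- E7 : border size
  set wdt := (Finset.Icc cL cR).card with hwdtdef
  set hgt := (Finset.Icc rB rT).card with hhgtdef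
  have hE7 : border.card + 4 = 2 * hgt + 2 * wdt := by
    have hcards : (({cL, cR} : Finset ℤ)).card = 2 := by
      rw [Finset.card_insert_of_notMem (by simp [hcLcR.ne]), Finset.card_singleton]
    have hcards' : (({rB, rT} : Finset ℤ)).card = 2 := by
      rw [Finset.card_insert_of_notMem (by simp [hrBrT.ne]), Finset.card_singleton]
    have hA : (({cL, cR} : Finset ℤ) ×ˢ Finset.Icc rB rT).card = 2 * hgt := by
      rw [Finset.card_product, hcards]
    have hB : (Finset.Icc cL cR ×ˢ ({rB, rT} : Finset ℤ)).card = 2 * wdt := by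
      rw [Finset.card_product, hcards']
      ring
    have hAB : (({cL, cR} : Finset ℤ) ×ˢ Finset.Icc rB rT) ∩
        (Finset.Icc cL cR ×ˢ ({rB, rT} : Finset ℤ)) =
        ({cL, cR} : Finset ℤ) ×ˢ ({rB, rT} : Finset ℤ) := by
      ext ⟨x, y⟩
      simp only [Finset.mem_inter, Finset.mem_product, Finset.mem_insert, Finset.mem_singleton,
        Finset.mem_Icc]
      constructor
      · intro h
        exact ⟨h.1.1, h.2.2⟩
      · intro h
        refine ⟨⟨h.1, ?_⟩, ⟨?_, h.2⟩⟩ <;> omega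
    have hABcard : ((({cL, cR} : Finset ℤ) ×ˢ Finset.Icc rB rT) ∩
        (Finset.Icc cL cR ×ˢ ({rB, rT} : Finset ℤ))).card = 4 := by
      rw [hAB, Finset.card_product, hcards, hcards']
    have := Finset.card_union_add_card_inter
      (({cL, cR} : Finset ℤ) ×ˢ Finset.Icc rB rT)
      (Finset.Icc cL cR ×ˢ ({rB, rT} : Finset ℤ))
    rw [hABcard, hA, hB] at this
    rw [hborderdef]
    omega
  -- E8
  have hE8 : (border ∩ Q).card + (border \ Q).card = border.card :=
    Finset.card_inter_add_card_sdiff border Q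
  -- E9
  have hwle : Finset.Icc cL cR ⊆ Finset.Icc (1 : ℤ) n := by
    apply Finset.Icc_subset_Icc <;> omega
  have hhle : Finset.Icc rB rT ⊆ Finset.Icc (1 : ℤ) n := by
    apply Finset.Icc_subset_Icc <;> omega
  have hE9c : wdt + (Finset.Icc (1 : ℤ) n \ Finset.Icc cL cR).card = n := by
    have := Finset.card_sdiff_add_card_eq_card hwle
    omega
  have hE9r : hgt + (Finset.Icc (1 : ℤ) n \ Finset.Icc rB rT).card = n := by
    have := Finset.card_sdiff_add_card_eq_card hhle
    omega
  -- E1 : column budget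
  have hE1 : 2 * L1.card + ((stmt5fib Q g1 cL).card + (stmt5fib Q g1 cR).card) +
      2 * (Finset.Icc (1 : ℤ) n \ Finset.Icc cL cR).card ≤ Q.card := by
    set Sout := Finset.Icc (1 : ℤ) n \ Finset.Icc cL cR with hSoutdef
    have hd2 : Disjoint ({cL, cR} : Finset ℤ) Sout := by
      rw [Finset.disjoint_left]
      intro v hv hv2
      rw [hSoutdef, Finset.mem_sdiff, Finset.mem_Icc, Finset.mem_Icc] at hv2
      simp only [Finset.mem_insert, Finset.mem_singleton] at hv
      omega
    have hd1 : Disjoint L1 (({cL, cR} : Finset ℤ) ∪ Sout) := by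
      rw [Finset.disjoint_left]
      intro v hv hv2
      rw [hL1def, Finset.mem_filter, Finset.mem_Ioo] at hv
      rw [Finset.mem_union] at hv2
      rcases hv2 with h | h
      · simp only [Finset.mem_insert, Finset.mem_singleton] at h
        omega
      · rw [hSoutdef, Finset.mem_sdiff, Finset.mem_Icc, Finset.mem_Icc] at h
        omega
    have hsum := stmt5_sum_fib_le Q g1 (L1 ∪ (({cL, cR} : Finset ℤ) ∪ Sout))
    rw [Finset.sum_union hd1, Finset.sum_union hd2] at hsum
    have hs1 : 2 * L1.card ≤ ∑ v ∈ L1, (stmt5fib Q g1 v).card := by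
      have := Finset.card_nsmul_le_sum L1 (fun v => (stmt5fib Q g1 v).card) 2
        (fun x hx => (Finset.mem_filter.mp hx).2)
      simpa [mul_comm] using this
    have hs2 : ∑ v ∈ ({cL, cR} : Finset ℤ), (stmt5fib Q g1 v).card =
        (stmt5fib Q g1 cL).card + (stmt5fib Q g1 cR).card :=
      Finset.sum_pair hcLcR.ne
    have hs3 : 2 * Sout.card ≤ ∑ v ∈ Sout, (stmt5fib Q g1 v).card := by
      have := Finset.card_nsmul_le_sum Sout (fun v => (stmt5fib Q g1 v).card) 2
        (fun x hx => by
          rw [hSoutdef, Finset.mem_sdiff, Finset.mem_Icc, Finset.mem_Icc] at hx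
          exact houtc x hx.1.1 hx.1.2 (by omega))
      simpa [mul_comm] using this
    omega
  -- E2 : row budget
  have hE2 : 2 * L2.card + ((stmt5fib Q g2 rB).card + (stmt5fib Q g2 rT).card) +
      2 * (Finset.Icc (1 : ℤ) n \ Finset.Icc rB rT).card ≤ Q.card := by
    set Sout := Finset.Icc (1 : ℤ) n \ Finset.Icc rB rT with hSoutdef
    have hd2 : Disjoint ({rB, rT} : Finset ℤ) Sout := by
      rw [Finset.disjoint_left]
      intro v hv hv2
      rw [hSoutdef, Finset.mem_sdiff, Finset.mem_Icc, Finset.mem_Icc] at hv2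
      simp only [Finset.mem_insert, Finset.mem_singleton] at hv
      omega
    have hd1 : Disjoint L2 (({rB, rT} : Finset ℤ) ∪ Sout) := by
      rw [Finset.disjoint_left]
      intro v hv hv2
      rw [hL2def, Finset.mem_filter, Finset.mem_Ioo] at hv
      rw [Finset.mem_union] at hv2
      rcases hv2 with h | h
      · simp only [Finset.mem_insert, Finset.mem_singleton] at h
        omega
      · rw [hSoutdef, Finset.mem_sdiff, Finset.mem_Icc, Finset.mem_Icc] at h
        omega
    have hsum := stmt5_sum_fib_le Q g2 (L2 ∪ (({rB, rT} : Finset ℤ) ∪ Sout))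
    rw [Finset.sum_union hd1, Finset.sum_union hd2] at hsum
    have hs1 : 2 * L2.card ≤ ∑ v ∈ L2, (stmt5fib Q g2 v).card := by
      have := Finset.card_nsmul_le_sum L2 (fun v => (stmt5fib Q g2 v).card) 2
        (fun x hx => (Finset.mem_filter.mp hx).2)
      simpa [mul_comm] using this
    have hs2 : ∑ v ∈ ({rB, rT} : Finset ℤ), (stmt5fib Q g2 v).card =
        (stmt5fib Q g2 rB).card + (stmt5fib Q g2 rT).card :=
      Finset.sum_pair hrBrT.ne
    have hs3 : 2 * Sout.card ≤ ∑ v ∈ Sout, (stmt5fib Q g2 v).card := by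
      have := Finset.card_nsmul_le_sum Sout (fun v => (stmt5fib Q g2 v).card) 2
        (fun x hx => by
          rw [hSoutdef, Finset.mem_sdiff, Finset.mem_Icc, Finset.mem_Icc] at hx
          exact houtr x hx.1.1 hx.1.2 (by omega))
      simpa [mul_comm] using this
    omega
  -- E3, E4 : diagonal budgets
  have hE3 : 2 * L3.card ≤ Q.card := by
    have hsum := stmt5_sum_fib_le Q g3 L3
    have hs1 : 2 * L3.card ≤ ∑ v ∈ L3, (stmt5fib Q g3 v).card := by
      have := Finset.card_nsmul_le_sum L3 (fun v => (stmt5fib Q g3 v).card) 2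
        (fun x hx => (Finset.mem_filter.mp hx).2)
      simpa [mul_comm] using this
    omega
  have hE4 : 2 * L4.card ≤ Q.card := by
    have hsum := stmt5_sum_fib_le Q g4 L4
    have hs1 : 2 * L4.card ≤ ∑ v ∈ L4, (stmt5fib Q g4 v).card := by
      have := Finset.card_nsmul_le_sum L4 (fun v => (stmt5fib Q g4 v).card) 2
        (fun x hx => (Finset.mem_filter.mp hx).2)
      simpa [mul_comm] using this
    omega
  -- final arithmetic
  omega
end

section
/- For every even integer n ≥ 2, every good placement of queens on the n × n board B_n has size at least n. -/
/-- Coordinate of a cell along one of the four line directions. -/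
def lpi : Fin 4 → ℤ × ℤ → ℤ := fun i c =>
  if i = 0 then c.1 else if i = 1 then c.2 else if i = 2 then c.1 - c.2 else c.1 + c.2

lemma three_of_line {Q : Finset (ℤ × ℤ)} {i : Fin 4} {a b c : ℤ × ℤ}
    (ha : a ∈ Q) (hb : b ∈ Q) (hc : c ∈ Q) (hab : a ≠ b) (hac : a ≠ c) (hbc : b ≠ c)
    (h1 : lpi i a = lpi i b) (h2 : lpi i b = lpi i c) : ThreeInLine Q := by
  refine ⟨a, ha, b, hb, c, hc, hab, hac, hbc, ?_⟩
  fin_cases i <;> simp [lpi] at h1 h2 <;> tauto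

lemma line_card_le_two {Q : Finset (ℤ × ℤ)} (h : ¬ ThreeInLine Q) (i : Fin 4) (v : ℤ) :
    (Q.filter fun c => lpi i c = v).card ≤ 2 := by
  by_contra h'
  push_neg at h'
  obtain ⟨t, hts, ht3⟩ := Finset.exists_subset_card_eq
    (show 3 ≤ (Q.filter fun c => lpi i c = v).card by omega)
  rw [Finset.card_eq_three] at ht3
  obtain ⟨a, b, c, hab, hac, hbc, rfl⟩ := ht3
  have ha := Finset.mem_filter.mp (hts (show a ∈ ({a,b,c} : Finset (ℤ×ℤ)) by simp))
  have hb := Finset.mem_filter.mp (hts (show b ∈ ({a,b,c} : Finset (ℤ×ℤ)) by simp))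
  have hc := Finset.mem_filter.mp (hts (show c ∈ ({a,b,c} : Finset (ℤ×ℤ)) by simp))
  exact h (three_of_line ha.1 hb.1 hc.1 hab hac hbc (ha.2.trans hb.2.symm) (hb.2.trans hc.2.symm))

lemma cover_exists {n : ℕ} {Q : Finset (ℤ × ℤ)} (hno3 : ¬ ThreeInLine Q)
    (hsat : ∀ s ∈ board n, s ∉ Q → ThreeInLine (insert s Q))
    {s : ℤ × ℤ} (hs : s ∈ board n) (hsQ : s ∉ Q) :
    ∃ i : Fin 4, (Q.filter fun c => lpi i c = lpi i s).card = 2 := by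
  obtain ⟨a, ha, b, hb, c, hc, hab, hac, hbc, hd⟩ := hsat s hs hsQ
  have hd' : ∃ i : Fin 4, lpi i a = lpi i b ∧ lpi i b = lpi i c := by
    rcases hd with h | h | h | h
    · exact ⟨0, by simpa [lpi] using h⟩
    · exact ⟨1, by simpa [lpi] using h⟩
    · exact ⟨2, by simpa [lpi] using h⟩
    · exact ⟨3, by simpa [lpi] using h⟩
  obtain ⟨i, h1, h2⟩ := hd'
  rw [Finset.mem_insert] at ha hb hc
  have key : ∀ u v : ℤ × ℤ, u ∈ Q → v ∈ Q → u ≠ v → lpi i u = lpi i s → lpi i v = lpi i s →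
      (Q.filter fun c => lpi i c = lpi i s).card = 2 := by
    intro u v huQ hvQ huv hu hv
    have hsub : ({u, v} : Finset (ℤ×ℤ)) ⊆ Q.filter fun c => lpi i c = lpi i s := by
      intro w hw
      rcases Finset.mem_insert.mp hw with rfl | hw
      · exact Finset.mem_filter.mpr ⟨huQ, hu⟩
      · rw [Finset.mem_singleton] at hw; subst hw
        exact Finset.mem_filter.mpr ⟨hvQ, hv⟩
    have h2le : 2 ≤ (Q.filter fun c => lpi i c = lpi i s).card := by
      have := Finset.card_le_card hsub
      rwa [Finset.card_pair huv] at this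
    exact le_antisymm (line_card_le_two hno3 i _) h2le
  rcases ha with rfl | haQ
  · have hbQ : b ∈ Q := by
      rcases hb with rfl | hbQ
      · exact absurd rfl hab
      · exact hbQ
    have hcQ : c ∈ Q := by
      rcases hc with rfl | hcQ
      · exact absurd rfl hac
      · exact hcQ
    exact ⟨i, key b c hbQ hcQ hbc h1.symm (h2.symm.trans h1.symm)⟩
  · rcases hb with rfl | hbQ
    · have hcQ : c ∈ Q := by
        rcases hc with rfl | hcQ
        · exact absurd rfl hbc
        · exact hcQ
      exact ⟨i, key a c haQ hcQ hac h1 h2.symm⟩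
    · rcases hc with rfl | hcQ
      · exact ⟨i, key a b haQ hbQ hab (h1.trans h2) h2⟩
      · exact absurd (three_of_line haQ hbQ hcQ hab hac hbc h1 h2) hno3

lemma boundary_card {Q : Finset (ℤ × ℤ)} {x₁ x₂ y₁ y₂ : ℤ}
    (hx₁ : ¬ (Q.filter fun c => lpi 0 c = x₁).card = 2)
    (hx₂ : ¬ (Q.filter fun c => lpi 0 c = x₂).card = 2)
    (hy₁ : ¬ (Q.filter fun c => lpi 1 c = y₁).card = 2)
    (hy₂ : ¬ (Q.filter fun c => lpi 1 c = y₂).card = 2)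
    (i : Fin 4) (v : ℤ) (hv : (Q.filter fun c => lpi i c = v).card = 2) :
    (((Finset.Icc x₁ x₂ ×ˢ Finset.Icc y₁ y₂).filter
        fun c => c.1 = x₁ ∨ c.1 = x₂ ∨ c.2 = y₁ ∨ c.2 = y₂).filter
      fun c => lpi i c = v).card ≤ 2 := by
  have hpair : ∀ a b : ℤ × ℤ, (({a, b} : Finset (ℤ×ℤ)).card) ≤ 2 := by
    intro a b
    exact (Finset.card_insert_le _ _).trans (by simp)
  fin_cases i
  · have hv1 : v ≠ x₁ := by rintro rfl; exact hx₁ hv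
    have hv2 : v ≠ x₂ := by rintro rfl; exact hx₂ hv
    refine le_trans (Finset.card_le_card ?_) (hpair (v, y₁) (v, y₂))
    intro c hc
    simp only [Finset.mem_filter, Finset.mem_product, Finset.mem_Icc, lpi] at hc
    simp only [Finset.mem_insert, Finset.mem_singleton, Prod.ext_iff]
    obtain ⟨⟨⟨h1, h2⟩, h3⟩, h4⟩ := hc
    simp at h4
    omega
  · have hv1 : v ≠ y₁ := by rintro rfl; exact hy₁ hv
    have hv2 : v ≠ y₂ := by rintro rfl; exact hy₂ hv
    refine le_trans (Finset.card_le_card ?_) (hpair (x₁, v) (x₂, v))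
    intro c hc
    simp only [Finset.mem_filter, Finset.mem_product, Finset.mem_Icc, lpi] at hc
    simp only [Finset.mem_insert, Finset.mem_singleton, Prod.ext_iff]
    obtain ⟨⟨⟨h1, h2⟩, h3⟩, h4⟩ := hc
    simp at h4
    omega
  · obtain ⟨lo, hlo1, hlo2, hlo3⟩ : ∃ lo, x₁ ≤ lo ∧ y₁ + v ≤ lo ∧ (lo = x₁ ∨ lo = y₁ + v) :=
      ⟨max x₁ (y₁ + v), le_max_left _ _, le_max_right _ _, (max_choice _ _).imp id id⟩
    obtain ⟨hi, hhi1, hhi2, hhi3⟩ : ∃ hi, hi ≤ x₂ ∧ hi ≤ y₂ + v ∧ (hi = x₂ ∨ hi = y₂ + v) :=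
      ⟨min x₂ (y₂ + v), min_le_left _ _, min_le_right _ _, (min_choice _ _).imp id id⟩
    refine le_trans (Finset.card_le_card ?_) (hpair (lo, lo - v) (hi, hi - v))
    intro c hc
    simp only [Finset.mem_filter, Finset.mem_product, Finset.mem_Icc, lpi] at hc
    simp only [Finset.mem_insert, Finset.mem_singleton, Prod.ext_iff]
    obtain ⟨⟨⟨h1, h2⟩, h3⟩, h4⟩ := hc
    simp at h4
    omega
  · obtain ⟨lo, hlo1, hlo2, hlo3⟩ : ∃ lo, x₁ ≤ lo ∧ v - y₂ ≤ lo ∧ (lo = x₁ ∨ lo = v - y₂) :=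
      ⟨max x₁ (v - y₂), le_max_left _ _, le_max_right _ _, (max_choice _ _).imp id id⟩
    obtain ⟨hi, hhi1, hhi2, hhi3⟩ : ∃ hi, hi ≤ x₂ ∧ hi ≤ v - y₁ ∧ (hi = x₂ ∨ hi = v - y₁) :=
      ⟨min x₂ (v - y₁), min_le_left _ _, min_le_right _ _, (min_choice _ _).imp id id⟩
    refine le_trans (Finset.card_le_card ?_) (hpair (lo, v - lo) (hi, v - hi))
    intro c hc
    simp only [Finset.mem_filter, Finset.mem_product, Finset.mem_Icc, lpi] at hc
    simp only [Finset.mem_insert, Finset.mem_singleton, Prod.ext_iff]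
    obtain ⟨⟨⟨h1, h2⟩, h3⟩, h4⟩ := hc
    simp at h4
    omega

set_option maxHeartbeats 1000000 in
theorem stmt_6 (n : ℕ) (hn : 2 ≤ n) (heven : Even n)
    (Q : Finset (ℤ × ℤ)) (hQ : IsGoodPlacement n Q) : n ≤ Q.card := by
  classical
  by_contra hlt
  push_neg at hlt
  obtain ⟨hQb, hno3, hsat⟩ := hQ
  have hqn : Q.card + 1 ≤ n := hlt
  have hmemQ : ∀ u ∈ Q, 1 ≤ u.1 ∧ u.1 ≤ (n:ℤ) ∧ 1 ≤ u.2 ∧ u.2 ≤ (n:ℤ) := by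
    intro u hu
    have := hQb hu
    simp only [board, Finset.mem_product, Finset.mem_Icc] at this
    tauto
  have hIccn : (Finset.Icc (1:ℤ) (n:ℤ)).card = n := by
    rw [Int.card_Icc]; omega
  have hfib0 : Q.card = ∑ x ∈ Finset.Icc (1:ℤ) (n:ℤ),
      (Q.filter fun c => lpi 0 c = x).card := by
    apply Finset.card_eq_sum_card_fiberwise
    intro u hu
    have h := hmemQ u hu
    simp only [lpi, Finset.mem_Icc]
    simp only [show ((0:Fin 4) = 0) = True by simp, if_true]
    norm_num
    omega
  have hfib1 : Q.card = ∑ x ∈ Finset.Icc (1:ℤ) (n:ℤ),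
      (Q.filter fun c => lpi 1 c = x).card := by
    apply Finset.card_eq_sum_card_fiberwise
    intro u hu
    have h := hmemQ u hu
    simp only [lpi, Finset.mem_Icc]
    norm_num
    omega
  -- the non-full columns and rows
  set NFC₀ := (Finset.Icc (1:ℤ) (n:ℤ)).filter
      (fun x => ¬ (Q.filter fun c => lpi 0 c = x).card = 2) with hNFC₀def
  set NFC₁ := (Finset.Icc (1:ℤ) (n:ℤ)).filter
      (fun x => ¬ (Q.filter fun c => lpi 1 c = x).card = 2) with hNFC₁def
  have hsplit₀ := Finset.card_filter_add_card_filter_not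
    (s := Finset.Icc (1:ℤ) (n:ℤ)) (p := fun x => (Q.filter fun c => lpi 0 c = x).card = 2)
  have hsplit₁ := Finset.card_filter_add_card_filter_not
    (s := Finset.Icc (1:ℤ) (n:ℤ)) (p := fun x => (Q.filter fun c => lpi 1 c = x).card = 2)
  rw [hIccn] at hsplit₀ hsplit₁
  rw [← hNFC₀def] at hsplit₀
  rw [← hNFC₁def] at hsplit₁
  have hfull₀ : 2 * ((Finset.Icc (1:ℤ) (n:ℤ)).filter
      (fun x => (Q.filter fun c => lpi 0 c = x).card = 2)).card ≤ Q.card := by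
    calc 2 * ((Finset.Icc (1:ℤ) (n:ℤ)).filter
        (fun x => (Q.filter fun c => lpi 0 c = x).card = 2)).card
        = ∑ _x ∈ (Finset.Icc (1:ℤ) (n:ℤ)).filter
            (fun x => (Q.filter fun c => lpi 0 c = x).card = 2), 2 := by
          rw [Finset.sum_const, smul_eq_mul, mul_comm]
      _ = ∑ x ∈ (Finset.Icc (1:ℤ) (n:ℤ)).filter
            (fun x => (Q.filter fun c => lpi 0 c = x).card = 2),
            (Q.filter fun c => lpi 0 c = x).card :=
          Finset.sum_congr rfl (fun x hx => ((Finset.mem_filter.mp hx).2).symm)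
      _ ≤ ∑ x ∈ Finset.Icc (1:ℤ) (n:ℤ), (Q.filter fun c => lpi 0 c = x).card :=
          Finset.sum_le_sum_of_subset (Finset.filter_subset _ _)
      _ = Q.card := hfib0.symm
  have hfull₁ : 2 * ((Finset.Icc (1:ℤ) (n:ℤ)).filter
      (fun x => (Q.filter fun c => lpi 1 c = x).card = 2)).card ≤ Q.card := by
    calc 2 * ((Finset.Icc (1:ℤ) (n:ℤ)).filter
        (fun x => (Q.filter fun c => lpi 1 c = x).card = 2)).card
        = ∑ _x ∈ (Finset.Icc (1:ℤ) (n:ℤ)).filter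
            (fun x => (Q.filter fun c => lpi 1 c = x).card = 2), 2 := by
          rw [Finset.sum_const, smul_eq_mul, mul_comm]
      _ = ∑ x ∈ (Finset.Icc (1:ℤ) (n:ℤ)).filter
            (fun x => (Q.filter fun c => lpi 1 c = x).card = 2),
            (Q.filter fun c => lpi 1 c = x).card :=
          Finset.sum_congr rfl (fun x hx => ((Finset.mem_filter.mp hx).2).symm)
      _ ≤ ∑ x ∈ Finset.Icc (1:ℤ) (n:ℤ), (Q.filter fun c => lpi 1 c = x).card :=
          Finset.sum_le_sum_of_subset (Finset.filter_subset _ _)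
      _ = Q.card := hfib1.symm
  have hNFC₀2 : 2 ≤ NFC₀.card := by omega
  have hNFC₁2 : 2 ≤ NFC₁.card := by omega
  have hne₀ : NFC₀.Nonempty := Finset.card_pos.mp (by omega)
  have hne₁ : NFC₁.Nonempty := Finset.card_pos.mp (by omega)
  set x₁ := NFC₀.min' hne₀ with hx₁def
  set x₂ := NFC₀.max' hne₀ with hx₂def
  set y₁ := NFC₁.min' hne₁ with hy₁def
  set y₂ := NFC₁.max' hne₁ with hy₂def
  have hx₁mem := Finset.mem_filter.mp (NFC₀.min'_mem hne₀)
  have hx₂mem := Finset.mem_filter.mp (NFC₀.max'_mem hne₀)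
  have hy₁mem := Finset.mem_filter.mp (NFC₁.min'_mem hne₁)
  have hy₂mem := Finset.mem_filter.mp (NFC₁.max'_mem hne₁)
  have hx₁I := Finset.mem_Icc.mp hx₁mem.1
  have hx₂I := Finset.mem_Icc.mp hx₂mem.1
  have hy₁I := Finset.mem_Icc.mp hy₁mem.1
  have hy₂I := Finset.mem_Icc.mp hy₂mem.1
  have hx₁nf : ¬ (Q.filter fun c => lpi 0 c = x₁).card = 2 := hx₁mem.2
  have hx₂nf : ¬ (Q.filter fun c => lpi 0 c = x₂).card = 2 := hx₂mem.2
  have hy₁nf : ¬ (Q.filter fun c => lpi 1 c = y₁).card = 2 := hy₁mem.2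
  have hy₂nf : ¬ (Q.filter fun c => lpi 1 c = y₂).card = 2 := hy₂mem.2
  have hx12 : x₁ < x₂ := Finset.min'_lt_max'_of_card _ (by omega)
  have hy12 : y₁ < y₂ := Finset.min'_lt_max'_of_card _ (by omega)
  have hpeel₀ : ∀ x : ℤ, 1 ≤ x → x ≤ (n:ℤ) → (x < x₁ ∨ x₂ < x) →
      (Q.filter fun c => lpi 0 c = x).card = 2 := by
    intro x h1 h2 h3
    by_contra hx
    have hxN : x ∈ NFC₀ := Finset.mem_filter.mpr ⟨Finset.mem_Icc.mpr ⟨h1, h2⟩, hx⟩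
    have hA := NFC₀.min'_le x hxN
    have hB := NFC₀.le_max' x hxN
    omega
  have hpeel₁ : ∀ y : ℤ, 1 ≤ y → y ≤ (n:ℤ) → (y < y₁ ∨ y₂ < y) →
      (Q.filter fun c => lpi 1 c = y).card = 2 := by
    intro y h1 h2 h3
    by_contra hy
    have hyN : y ∈ NFC₁ := Finset.mem_filter.mpr ⟨Finset.mem_Icc.mpr ⟨h1, h2⟩, hy⟩
    have hA := NFC₁.min'_le y hyN
    have hB := NFC₁.le_max' y hyN
    omega
  -- the boundary rectangle
  set Rb := ((Finset.Icc x₁ x₂ ×ˢ Finset.Icc y₁ y₂).filter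
      fun c => c.1 = x₁ ∨ c.1 = x₂ ∨ c.2 = y₁ ∨ c.2 = y₂) with hRbdef
  set W := (Finset.Icc x₁ x₂).card with hWdef
  set Hh := (Finset.Icc y₁ y₂).card with hHdef
  have hWI : W = (x₂ + 1 - x₁).toNat := Int.card_Icc _ _
  have hHI : Hh = (y₂ + 1 - y₁).toNat := Int.card_Icc _ _
  have hW2 : 2 ≤ W := by omega
  have hH2 : 2 ≤ Hh := by omega
  have hWn : W ≤ n := by
    have h := Finset.card_le_card (Finset.Icc_subset_Icc hx₁I.1 hx₂I.2)
    rw [hIccn] at h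
    exact h
  have hHn : Hh ≤ n := by
    have h := Finset.card_le_card (Finset.Icc_subset_Icc hy₁I.1 hy₂I.2)
    rw [hIccn] at h
    exact h
  have hRbcard : Rb.card = 2*W + 2*Hh - 4 := by
    have hsub : Finset.Icc (x₁+1) (x₂-1) ×ˢ Finset.Icc (y₁+1) (y₂-1) ⊆
        Finset.Icc x₁ x₂ ×ˢ Finset.Icc y₁ y₂ :=
      Finset.product_subset_product (Finset.Icc_subset_Icc (by omega) (by omega))
        (Finset.Icc_subset_Icc (by omega) (by omega))
    have heq : Rb = (Finset.Icc x₁ x₂ ×ˢ Finset.Icc y₁ y₂) \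
        (Finset.Icc (x₁+1) (x₂-1) ×ˢ Finset.Icc (y₁+1) (y₂-1)) := by
      ext c
      simp only [hRbdef, Finset.mem_filter, Finset.mem_sdiff, Finset.mem_product, Finset.mem_Icc]
      omega
    rw [heq, Finset.card_sdiff_of_subset hsub, Finset.card_product, Finset.card_product]
    have e1 : (Finset.Icc (x₁+1) (x₂-1)).card = W - 2 := by rw [Int.card_Icc]; omega
    have e2 : (Finset.Icc (y₁+1) (y₂-1)).card = Hh - 2 := by rw [Int.card_Icc]; omega
    rw [e1, e2, ← hWdef, ← hHdef]
    obtain ⟨a, ha⟩ := Nat.exists_eq_add_of_le hW2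
    obtain ⟨b2, hb2⟩ := Nat.exists_eq_add_of_le hH2
    rw [ha, hb2]
    have h2a : 2 + a - 2 = a := by omega
    have h2b : 2 + b2 - 2 = b2 := by omega
    rw [h2a, h2b]
    have hx : (2+a)*(2+b2) = a*b2 + 2*a+2*b2+4 := by ring
    omega
  have hRbboard : ∀ c ∈ Rb, c ∈ board n := by
    intro c hc
    have := Finset.mem_product.mp (Finset.mem_filter.mp hc).1
    simp only [Finset.mem_Icc] at this
    simp only [board, Finset.mem_product, Finset.mem_Icc]
    omega
  have hRbmem : ∀ c ∈ Rb, (x₁ ≤ c.1 ∧ c.1 ≤ x₂ ∧ y₁ ≤ c.2 ∧ c.2 ≤ y₂) := by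
    intro c hc
    have := Finset.mem_product.mp (Finset.mem_filter.mp hc).1
    simp only [Finset.mem_Icc] at this
    omega
  set D := Rb.filter (fun c => c ∉ Q) with hDdef
  have hcov' : ∀ c : ℤ×ℤ, ∃ i : Fin 4, c ∈ D →
      (Q.filter fun u => lpi i u = lpi i c).card = 2 := by
    intro c
    by_cases hc : c ∈ D
    · obtain ⟨hcRb, hcQ⟩ := Finset.mem_filter.mp hc
      obtain ⟨i, hi⟩ := cover_exists hno3 hsat (hRbboard c hcRb) hcQ
      exact ⟨i, fun _ => hi⟩
    · exact ⟨0, fun h => absurd h hc⟩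
  choose iSel hiSel using hcov'
  set P := D.biUnion (fun c =>
    (Q.filter fun u => lpi (iSel c) u = lpi (iSel c) c).image fun u => (c, u)) with hPdef
  have hPcard1 : P.card = 2 * D.card := by
    rw [hPdef, Finset.card_biUnion (by
      intro c hc c' hc' hne
      simp only [Finset.disjoint_left]
      intro p hp hp'
      simp only [Finset.mem_image] at hp hp'
      obtain ⟨u, _, rfl⟩ := hp
      obtain ⟨u', _, h⟩ := hp'
      exact hne ((congrArg Prod.fst h).symm))]
    calc ∑ c ∈ D, ((Q.filter fun u => lpi (iSel c) u = lpi (iSel c) c).image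
          fun u => (c, u)).card
        = ∑ c ∈ D, 2 := by
          refine Finset.sum_congr rfl (fun c hc => ?_)
          rw [Finset.card_image_of_injective _ (fun a b hab => by
            simpa using congrArg Prod.snd hab)]
          exact hiSel c hc
      _ = 2 * D.card := by rw [Finset.sum_const, smul_eq_mul, mul_comm]
  have hPmem : ∀ p ∈ P, p.1 ∈ D ∧ p.2 ∈ Q ∧ lpi (iSel p.1) p.2 = lpi (iSel p.1) p.1 := by
    intro p hp
    rw [hPdef, Finset.mem_biUnion] at hp
    obtain ⟨c, hcD, hp⟩ := hp
    rw [Finset.mem_image] at hp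
    obtain ⟨u, hu, rfl⟩ := hp
    obtain ⟨huQ, hupi⟩ := Finset.mem_filter.mp hu
    exact ⟨hcD, huQ, hupi⟩
  set U := (Finset.univ : Finset (Fin 4)) ×ˢ Q with hUdef
  have hPcard2 : P.card = ∑ z ∈ U, (P.filter fun p => (iSel p.1, p.2) = z).card :=
    Finset.card_eq_sum_card_fiberwise (fun p hp => by
      rw [hUdef, Finset.mem_coe, Finset.mem_product]; exact ⟨Finset.mem_univ _, (hPmem p hp).2.1⟩)
  set Fib := fun z : Fin 4 × (ℤ × ℤ) =>
    D.filter (fun c => iSel c = z.1 ∧ lpi z.1 z.2 = lpi z.1 c) with hFibdef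
  have hfibP : ∀ z ∈ U, (P.filter fun p => (iSel p.1, p.2) = z).card ≤ (Fib z).card := by
    intro z _
    apply Finset.card_le_card_of_injOn (fun p => p.1)
    · intro p hp
      obtain ⟨hpP, hpz⟩ := Finset.mem_filter.mp hp
      obtain ⟨h1, _, h3⟩ := hPmem p hpP
      have e1 : iSel p.1 = z.1 := congrArg Prod.fst hpz
      have e2 : p.2 = z.2 := congrArg Prod.snd hpz
      rw [e1, e2] at h3
      exact Finset.mem_filter.mpr ⟨h1, e1, h3⟩
    · intro p hp p' hp' hpp
      have e2 : p.2 = z.2 := congrArg Prod.snd (Finset.mem_filter.mp hp).2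
      have e2' : p'.2 = z.2 := congrArg Prod.snd (Finset.mem_filter.mp hp').2
      exact Prod.ext hpp (e2.trans e2'.symm)
  have hFibfull : ∀ z : Fin 4 × (ℤ×ℤ), (Fib z).Nonempty →
      (Q.filter fun c => lpi z.1 c = lpi z.1 z.2).card = 2 := by
    rintro z ⟨c, hc⟩
    obtain ⟨hcD, h1, h2⟩ := Finset.mem_filter.mp hc
    have hfull := hiSel c hcD
    rw [h1] at hfull
    rw [← h2] at hfull
    exact hfull
  have hBd : ∀ (i : Fin 4) (v : ℤ), (Q.filter fun c => lpi i c = v).card = 2 →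
      (Rb.filter fun c => lpi i c = v).card ≤ 2 := by
    intro i v hv
    rw [hRbdef]
    exact boundary_card hx₁nf hx₂nf hy₁nf hy₂nf i v hv
  have hFib2 : ∀ z : Fin 4 × (ℤ×ℤ), (Fib z).card ≤ 2 := by
    intro z
    rcases (Fib z).eq_empty_or_nonempty with he | hne
    · simp [he]
    · have hfull := hFibfull z hne
      have hsub : Fib z ⊆ Rb.filter fun c => lpi z.1 c = lpi z.1 z.2 := by
        intro c hc
        obtain ⟨hcD, _, h2⟩ := Finset.mem_filter.mp hc
        exact Finset.mem_filter.mpr ⟨(Finset.mem_filter.mp hcD).1, h2.symm⟩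
      exact (Finset.card_le_card hsub).trans (hBd _ _ hfull)
  have hFibRb : ∀ z : Fin 4 × (ℤ×ℤ), z.2 ∈ Q → z.2 ∈ Rb → (Fib z).card ≤ 1 := by
    intro z hzQ hzRb
    rcases (Fib z).eq_empty_or_nonempty with he | hne
    · simp [he]
    · have hfull := hFibfull z hne
      have hmem : z.2 ∈ Rb.filter fun c => lpi z.1 c = lpi z.1 z.2 :=
        Finset.mem_filter.mpr ⟨hzRb, rfl⟩
      have hsub : Fib z ⊆ (Rb.filter fun c => lpi z.1 c = lpi z.1 z.2).erase z.2 := by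
        intro c hc
        obtain ⟨hcD, _, h2⟩ := Finset.mem_filter.mp hc
        have hcQ' : c ∉ Q := (Finset.mem_filter.mp hcD).2
        refine Finset.mem_erase.mpr ⟨?_,
          Finset.mem_filter.mpr ⟨(Finset.mem_filter.mp hcD).1, h2.symm⟩⟩
        rintro rfl
        exact hcQ' hzQ
      have hle := Finset.card_le_card hsub
      rw [Finset.card_erase_of_mem hmem] at hle
      have h2 := hBd z.1 (lpi z.1 z.2) hfull
      omega
  -- queen partition
  set S := Q.filter (fun u => u ∉ Rb) with hSdef
  set bb := (Q.filter (fun u => u ∈ Rb)).card with hbbdef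
  have hSb : bb + S.card = Q.card :=
    Finset.card_filter_add_card_filter_not (p := fun u => u ∈ Rb)
  have hDb : bb + D.card = Rb.card := by
    have h1 : (Rb.filter (fun c => c ∈ Q)).card + D.card = Rb.card :=
      Finset.card_filter_add_card_filter_not (p := fun c => c ∈ Q)
    have h2 : Rb.filter (fun c => c ∈ Q) = Q.filter (fun u => u ∈ Rb) := by
      rw [Finset.filter_mem_eq_inter, Finset.filter_mem_eq_inter, Finset.inter_comm]
    rw [h2] at h1
    rw [hbbdef]
    exact h1
  set PQ := Q.filter (fun u => lpi 0 u < x₁ ∨ x₂ < lpi 0 u) with hPQdef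
  set QR := Q.filter (fun u => lpi 1 u < y₁ ∨ y₂ < lpi 1 u) with hQRdef
  have hlpi0 : ∀ u : ℤ × ℤ, lpi 0 u = u.1 := fun u => rfl
  have hlpi1 : ∀ u : ℤ × ℤ, lpi 1 u = u.2 := fun u => rfl
  have hPQcard : PQ.card = 2 * (n - W) := by
    have hmem : ∀ u ∈ PQ, lpi 0 u ∈ (Finset.Icc (1:ℤ) (n:ℤ)).filter
        (fun x => x < x₁ ∨ x₂ < x) := by
      intro u hu
      obtain ⟨huQ, hcond⟩ := Finset.mem_filter.mp hu
      have h := hmemQ u huQ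
      refine Finset.mem_filter.mpr ⟨Finset.mem_Icc.mpr ?_, hcond⟩
      rw [hlpi0]
      omega
    have hfibcard := Finset.card_eq_sum_card_fiberwise hmem
    have hfibeq : ∀ x ∈ (Finset.Icc (1:ℤ) (n:ℤ)).filter (fun x => x < x₁ ∨ x₂ < x),
        (PQ.filter fun u => lpi 0 u = x).card = 2 := by
      intro x hx
      obtain ⟨hxI, hxcond⟩ := Finset.mem_filter.mp hx
      rw [Finset.mem_Icc] at hxI
      have heq2 : PQ.filter (fun u => lpi 0 u = x) = Q.filter (fun u => lpi 0 u = x) := by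
        ext u
        simp only [hPQdef, Finset.mem_filter]
        constructor
        · rintro ⟨⟨h1, _⟩, h3⟩
          exact ⟨h1, h3⟩
        · rintro ⟨h1, h3⟩
          exact ⟨⟨h1, by rw [h3]; exact hxcond⟩, h3⟩
      rw [heq2]
      exact hpeel₀ x hxI.1 hxI.2 hxcond
    have htcard : ((Finset.Icc (1:ℤ) (n:ℤ)).filter (fun x => x < x₁ ∨ x₂ < x)).card
        = n - W := by
      have heq3 : (Finset.Icc (1:ℤ) (n:ℤ)).filter (fun x => x < x₁ ∨ x₂ < x)
          = (Finset.Icc (1:ℤ) (n:ℤ)) \ (Finset.Icc x₁ x₂) := by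
        ext x
        simp only [Finset.mem_filter, Finset.mem_sdiff, Finset.mem_Icc]
        omega
      rw [heq3, Finset.card_sdiff_of_subset (Finset.Icc_subset_Icc hx₁I.1 hx₂I.2), hIccn, hWdef]
    rw [hfibcard, Finset.sum_congr rfl hfibeq, Finset.sum_const, smul_eq_mul, htcard,
      mul_comm]
  have hQRcard : QR.card = 2 * (n - Hh) := by
    have hmem : ∀ u ∈ QR, lpi 1 u ∈ (Finset.Icc (1:ℤ) (n:ℤ)).filter
        (fun y => y < y₁ ∨ y₂ < y) := by
      intro u hu
      obtain ⟨huQ, hcond⟩ := Finset.mem_filter.mp hu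
      have h := hmemQ u huQ
      refine Finset.mem_filter.mpr ⟨Finset.mem_Icc.mpr ?_, hcond⟩
      rw [hlpi1]
      omega
    have hfibcard := Finset.card_eq_sum_card_fiberwise hmem
    have hfibeq : ∀ y ∈ (Finset.Icc (1:ℤ) (n:ℤ)).filter (fun y => y < y₁ ∨ y₂ < y),
        (QR.filter fun u => lpi 1 u = y).card = 2 := by
      intro y hy
      obtain ⟨hyI, hycond⟩ := Finset.mem_filter.mp hy
      rw [Finset.mem_Icc] at hyI
      have heq2 : QR.filter (fun u => lpi 1 u = y) = Q.filter (fun u => lpi 1 u = y) := by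
        ext u
        simp only [hQRdef, Finset.mem_filter]
        constructor
        · rintro ⟨⟨h1, _⟩, h3⟩
          exact ⟨h1, h3⟩
        · rintro ⟨h1, h3⟩
          exact ⟨⟨h1, by rw [h3]; exact hycond⟩, h3⟩
      rw [heq2]
      exact hpeel₁ y hyI.1 hyI.2 hycond
    have htcard : ((Finset.Icc (1:ℤ) (n:ℤ)).filter (fun y => y < y₁ ∨ y₂ < y)).card
        = n - Hh := by
      have heq3 : (Finset.Icc (1:ℤ) (n:ℤ)).filter (fun y => y < y₁ ∨ y₂ < y)
          = (Finset.Icc (1:ℤ) (n:ℤ)) \ (Finset.Icc y₁ y₂) := by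
        ext y
        simp only [Finset.mem_filter, Finset.mem_sdiff, Finset.mem_Icc]
        omega
      rw [heq3, Finset.card_sdiff_of_subset (Finset.Icc_subset_Icc hy₁I.1 hy₂I.2), hIccn, hHdef]
    rw [hfibcard, Finset.sum_congr rfl hfibeq, Finset.sum_const, smul_eq_mul, htcard,
      mul_comm]
  have hPQS : PQ ⊆ S := by
    intro u hu
    obtain ⟨huQ, hcond⟩ := Finset.mem_filter.mp hu
    refine Finset.mem_filter.mpr ⟨huQ, fun huRb => ?_⟩
    have := hRbmem u huRb
    rw [hlpi0] at hcond
    omega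
  have hQRS : QR ⊆ S := by
    intro u hu
    obtain ⟨huQ, hcond⟩ := Finset.mem_filter.mp hu
    refine Finset.mem_filter.mpr ⟨huQ, fun huRb => ?_⟩
    have := hRbmem u huRb
    rw [hlpi1] at hcond
    omega
  set T := ((Finset.univ : Finset (Fin 4)) ×ˢ S).filter
    (fun z => ¬(z.1 = 0 ∧ (lpi 0 z.2 < x₁ ∨ x₂ < lpi 0 z.2)) ∧
              ¬(z.1 = 1 ∧ (lpi 1 z.2 < y₁ ∨ y₂ < lpi 1 z.2))) with hTdef
  have hTcard : T.card + (PQ.card + QR.card) = 4 * S.card := by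
    set Bad := ((({(0:Fin 4)} : Finset (Fin 4)) ×ˢ PQ) ∪
      (({(1:Fin 4)} : Finset (Fin 4)) ×ˢ QR)) with hBaddef
    have hBadsub : Bad ⊆ (Finset.univ : Finset (Fin 4)) ×ˢ S := by
      intro z hz
      rw [hBaddef, Finset.mem_union] at hz
      rcases hz with hz | hz
      · obtain ⟨_, h2⟩ := Finset.mem_product.mp hz
        exact Finset.mem_product.mpr ⟨Finset.mem_univ _, hPQS h2⟩
      · obtain ⟨_, h2⟩ := Finset.mem_product.mp hz
        exact Finset.mem_product.mpr ⟨Finset.mem_univ _, hQRS h2⟩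
    have hTeq : T = ((Finset.univ : Finset (Fin 4)) ×ˢ S) \ Bad := by
      ext z
      constructor
      · intro hzT
        obtain ⟨hzU, hc1, hc2⟩ := Finset.mem_filter.mp hzT
        refine Finset.mem_sdiff.mpr ⟨hzU, fun hzB => ?_⟩
        rw [hBaddef, Finset.mem_union] at hzB
        rcases hzB with hzB | hzB
        · obtain ⟨h1, h2⟩ := Finset.mem_product.mp hzB
          rw [Finset.mem_singleton] at h1
          exact hc1 ⟨h1, (Finset.mem_filter.mp h2).2⟩
        · obtain ⟨h1, h2⟩ := Finset.mem_product.mp hzB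
          rw [Finset.mem_singleton] at h1
          exact hc2 ⟨h1, (Finset.mem_filter.mp h2).2⟩
      · intro hz
        obtain ⟨hzU, hzB⟩ := Finset.mem_sdiff.mp hz
        have hzQ : z.2 ∈ Q := (Finset.mem_filter.mp (Finset.mem_product.mp hzU).2).1
        refine Finset.mem_filter.mpr ⟨hzU, fun hbad => ?_, fun hbad => ?_⟩
        · refine hzB (by
            rw [hBaddef, Finset.mem_union]
            left
            refine Finset.mem_product.mpr ⟨Finset.mem_singleton.mpr hbad.1, ?_⟩
            exact Finset.mem_filter.mpr ⟨hzQ, hbad.2⟩)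
        · refine hzB (by
            rw [hBaddef, Finset.mem_union]
            right
            refine Finset.mem_product.mpr ⟨Finset.mem_singleton.mpr hbad.1, ?_⟩
            exact Finset.mem_filter.mpr ⟨hzQ, hbad.2⟩)
    have hcard := Finset.card_sdiff_add_card_eq_card hBadsub
    rw [← hTeq] at hcard
    have hdisj : Disjoint (({(0:Fin 4)} : Finset (Fin 4)) ×ˢ PQ)
        (({(1:Fin 4)} : Finset (Fin 4)) ×ˢ QR) := by
      simp only [Finset.disjoint_left]
      intro z hz hz'
      have h1 := (Finset.mem_product.mp hz).1
      have h2 := (Finset.mem_product.mp hz').1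
      rw [Finset.mem_singleton] at h1 h2
      rw [h1] at h2
      exact absurd h2 (by decide)
    have hBadcard : Bad.card = PQ.card + QR.card := by
      rw [hBaddef, Finset.card_union_of_disjoint hdisj, Finset.card_product,
        Finset.card_product]
      simp
    rw [hBadcard] at hcard
    rw [Finset.card_product] at hcard
    simp only [Finset.card_univ, Fintype.card_fin] at hcard
    omega
  -- the core chain
  set A := (Finset.univ : Finset (Fin 4)) ×ˢ (Q.filter (fun u => u ∈ Rb)) with hAdef
  have hAsub : A ⊆ U := by
    rw [hAdef, hUdef]
    exact Finset.product_subset_product (Finset.Subset.refl _) (Finset.filter_subset _ _)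
  have hAcard : A.card = 4 * bb := by
    rw [hAdef, Finset.card_product]
    simp only [Finset.card_univ, Fintype.card_fin]
    rfl
  have hUA : U \ A = (Finset.univ : Finset (Fin 4)) ×ˢ S := by
    ext z
    constructor
    · intro hz
      obtain ⟨hzU, hzA⟩ := Finset.mem_sdiff.mp hz
      have hzQ : z.2 ∈ Q := (Finset.mem_product.mp hzU).2
      refine Finset.mem_product.mpr ⟨Finset.mem_univ _, Finset.mem_filter.mpr ⟨hzQ, ?_⟩⟩
      intro hzRb
      exact hzA (Finset.mem_product.mpr ⟨Finset.mem_univ _,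
        Finset.mem_filter.mpr ⟨hzQ, hzRb⟩⟩)
    · intro hz
      obtain ⟨_, hzS⟩ := Finset.mem_product.mp hz
      obtain ⟨hzQ, hzRb⟩ := Finset.mem_filter.mp hzS
      refine Finset.mem_sdiff.mpr ⟨Finset.mem_product.mpr ⟨Finset.mem_univ _, hzQ⟩, ?_⟩
      intro hzA
      exact hzRb (Finset.mem_filter.mp (Finset.mem_product.mp hzA).2).2
  have hTsub : T ⊆ (Finset.univ : Finset (Fin 4)) ×ˢ S := by
    rw [hTdef]; exact Finset.filter_subset _ _
  have houter : ∀ z ∈ ((Finset.univ : Finset (Fin 4)) ×ˢ S) \ T, (Fib z).card = 0 := by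
    intro z hz
    obtain ⟨hzU, hzT⟩ := Finset.mem_sdiff.mp hz
    rw [Finset.card_eq_zero, hFibdef, Finset.filter_eq_empty_iff]
    have hcond : (z.1 = 0 ∧ (lpi 0 z.2 < x₁ ∨ x₂ < lpi 0 z.2)) ∨
        (z.1 = 1 ∧ (lpi 1 z.2 < y₁ ∨ y₂ < lpi 1 z.2)) := by
      by_contra hcc
      push_neg at hcc
      refine hzT (Finset.mem_filter.mpr ⟨hzU, ?_, ?_⟩)
      · intro h
        have h5 := hcc.1 h.1
        rcases h.2 with h6 | h6 <;> omega
      · intro h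
        have h5 := hcc.2 h.1
        rcases h.2 with h6 | h6 <;> omega
    rintro c hcD ⟨hisel, hpi⟩
    have hb := hRbmem c (Finset.mem_filter.mp hcD).1
    rcases hcond with ⟨h0, hout⟩ | ⟨h1, hout⟩
    · rw [h0] at hpi
      rw [hlpi0 z.2, hlpi0 c] at hpi
      rw [hlpi0 z.2] at hout
      omega
    · rw [h1] at hpi
      rw [hlpi1 z.2, hlpi1 c] at hpi
      rw [hlpi1 z.2] at hout
      omega
  have hcore : 2 * D.card ≤ 4 * bb + ∑ z ∈ T, (Fib z).card := by
    have hAle : ∑ z ∈ A, (Fib z).card ≤ 4 * bb := by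
      have h1 : ∑ z ∈ A, (Fib z).card ≤ A.card • 1 := by
        refine Finset.sum_le_card_nsmul _ _ 1 (fun z hz => ?_)
        rw [hAdef] at hz
        obtain ⟨_, hz2⟩ := Finset.mem_product.mp hz
        obtain ⟨hzQ, hzRb⟩ := Finset.mem_filter.mp hz2
        exact hFibRb z hzQ hzRb
      rw [smul_eq_mul, mul_one, hAcard] at h1
      exact h1
    calc 2 * D.card = P.card := hPcard1.symm
      _ = ∑ z ∈ U, (P.filter fun p => (iSel p.1, p.2) = z).card := hPcard2
      _ ≤ ∑ z ∈ U, (Fib z).card := Finset.sum_le_sum hfibP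
      _ = ∑ z ∈ U \ A, (Fib z).card + ∑ z ∈ A, (Fib z).card := (Finset.sum_sdiff hAsub).symm
      _ ≤ ∑ z ∈ U \ A, (Fib z).card + 4 * bb := by omega
      _ = ∑ z ∈ (Finset.univ : Finset (Fin 4)) ×ˢ S, (Fib z).card + 4 * bb := by rw [hUA]
      _ = (∑ z ∈ ((Finset.univ : Finset (Fin 4)) ×ˢ S) \ T, (Fib z).card
            + ∑ z ∈ T, (Fib z).card) + 4 * bb := by rw [Finset.sum_sdiff hTsub]
      _ = ∑ z ∈ T, (Fib z).card + 4 * bb := by rw [Finset.sum_eq_zero houter, zero_add]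
      _ = 4 * bb + ∑ z ∈ T, (Fib z).card := by omega
  have hTbound : ∑ z ∈ T, (Fib z).card ≤ 2 * T.card := by
    have h1 := Finset.sum_le_card_nsmul T _ 2 (fun z _ => hFib2 z)
    rw [smul_eq_mul] at h1
    omega
  rcases Nat.even_or_odd Q.card with hqe | hqo
  · have hnE : n % 2 = 0 := Nat.even_iff.mp heven
    have hqE : Q.card % 2 = 0 := Nat.even_iff.mp hqe
    omega
  · have hqO : Q.card % 2 = 1 := Nat.odd_iff.mp hqo
    have hex : ∃ u ∈ Q, ¬ (Q.filter fun c => lpi 0 c = lpi 0 u).card = 2 := by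
      by_contra hcc
      push_neg at hcc
      have h0 : Q.card % 2 = 0 := by
        rw [hfib0, Finset.sum_nat_mod]
        have hz : ∀ x ∈ Finset.Icc (1:ℤ) (n:ℤ),
            (Q.filter fun c => lpi 0 c = x).card % 2 = 0 := by
          intro x _
          by_cases hex2 : ∃ u ∈ Q, lpi 0 u = x
          · obtain ⟨u, huQ, hux⟩ := hex2
            have h2 := hcc u huQ
            rw [hux] at h2
            omega
          · push_neg at hex2
            have : Q.filter (fun c => lpi 0 c = x) = ∅ :=
              Finset.filter_eq_empty_iff.mpr hex2
            simp [this]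
        rw [Finset.sum_congr rfl hz]
        simp
      omega
    obtain ⟨u₀, hu₀Q, hu₀nf⟩ := hex
    by_cases hu₀Rb : u₀ ∈ Rb
    · have hb1 : 1 ≤ bb := by
        rw [hbbdef]
        exact Finset.card_pos.mpr ⟨u₀, Finset.mem_filter.mpr ⟨hu₀Q, hu₀Rb⟩⟩
      omega
    · have hu₀S : u₀ ∈ S := Finset.mem_filter.mpr ⟨hu₀Q, hu₀Rb⟩
      have hu₀b : 1 ≤ lpi 0 u₀ ∧ lpi 0 u₀ ≤ (n:ℤ) := by
        have := hmemQ u₀ hu₀Q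
        rw [hlpi0]
        omega
      have hz₀T : ((0 : Fin 4), u₀) ∈ T := by
        rw [hTdef]
        refine Finset.mem_filter.mpr ⟨Finset.mem_product.mpr ⟨Finset.mem_univ _, hu₀S⟩,
          ?_, ?_⟩
        · rintro ⟨_, hout⟩
          exact hu₀nf (hpeel₀ (lpi 0 u₀) hu₀b.1 hu₀b.2 hout)
        · rintro ⟨h01, _⟩
          exact (by decide : ¬ (0:Fin 4) = 1) h01
      have hFibz₀ : (Fib ((0:Fin 4), u₀)).card = 0 := by
        rw [Finset.card_eq_zero, hFibdef, Finset.filter_eq_empty_iff]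
        rintro c hcD ⟨hisel, hpi⟩
        have hfull := hiSel c hcD
        rw [hisel] at hfull
        simp only at hpi
        rw [← hpi] at hfull
        exact hu₀nf hfull
      have hTb' : ∑ z ∈ T, (Fib z).card ≤ 2 * (T.card - 1) := by
        rw [← Finset.add_sum_erase T _ hz₀T, hFibz₀, zero_add]
        have h1 := Finset.sum_le_card_nsmul (T.erase ((0:Fin 4), u₀)) _ 2
          (fun z _ => hFib2 z)
        rw [smul_eq_mul, Finset.card_erase_of_mem hz₀T] at h1
        omega
      have hT1 : 1 ≤ T.card := Finset.card_pos.mpr ⟨_, hz₀T⟩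
      omega
end
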